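/- arXiv:0812.0440 — 9 statements merged into one kernel-verified Lean document; each statement's English description precedes it below -/
import Mathlib

section
/- For every n ≥ 1, the number c_n of indecomposable permutations of S_n satisfies c_n = n! − Σ_{p=1}^{n−1} c_p · (n−p)!. -/
/-- A permutation of `{0,...,n-1}` is indecomposable if it fixes no proper
initial segment `{0,...,p-1}` (for `1 ≤ p < n`) setwise. -/
def Indecomposable {n : ℕ} (α : Equiv.Perm (Fin n)) : Prop :=
  ∀ p : ℕ, 1 ≤ p → p < n → ∃ i : Fin n, (i : ℕ) < p ∧ p ≤ ((α i : ℕ))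

/-- `numIndec n` is the number of indecomposable permutations of `S_n`. -/
noncomputable def numIndec (n : ℕ) : ℕ :=
  Nat.card {α : Equiv.Perm (Fin n) // Indecomposable α}

open Equiv Finset

namespace IndecAux

variable {n p : ℕ}

/-- the structural condition at cut `p`. -/
def Q (p : ℕ) (α : Equiv.Perm (Fin n)) : Prop :=
  (∀ x : Fin n, (x : ℕ) < p ↔ (α x : ℕ) < p) ∧
  (∀ q, 1 ≤ q → q < p → ∃ x : Fin n, (x : ℕ) < q ∧ q ≤ (α x : ℕ))

noncomputable def e (hpn : p ≤ n) : Fin p ⊕ Fin (n - p) ≃ Fin n :=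
  finSumFinEquiv.trans (finCongr (Nat.add_sub_cancel' hpn))

lemma e_inl (hpn : p ≤ n) (i : Fin p) : ((e hpn (Sum.inl i) : Fin n) : ℕ) = (i : ℕ) := by
  simp [e]

lemma e_inr (hpn : p ≤ n) (j : Fin (n - p)) : ((e hpn (Sum.inr j) : Fin n) : ℕ) = p + (j : ℕ) := by
  simp [e]

lemma e_symm_of_lt (hpn : p ≤ n) (x : Fin n) (hx : (x : ℕ) < p) :
    (e hpn).symm x = Sum.inl ⟨(x : ℕ), hx⟩ := by
  apply (e hpn).injective
  simp only [Equiv.apply_symm_apply]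
  exact Fin.ext (by rw [e_inl])

lemma e_symm_of_ge (hpn : p ≤ n) (x : Fin n) (hx : p ≤ (x : ℕ)) :
    (e hpn).symm x = Sum.inr ⟨(x : ℕ) - p, by omega⟩ := by
  apply (e hpn).injective
  simp only [Equiv.apply_symm_apply]
  refine Fin.ext ?_
  rw [e_inr]
  simp
  omega

noncomputable def F (hpn : p ≤ n) (β : Equiv.Perm (Fin p)) (γ : Equiv.Perm (Fin (n - p))) :
    Equiv.Perm (Fin n) :=
  (e hpn).permCongr (Equiv.sumCongr β γ)

lemma F_apply_inl (hpn : p ≤ n) (β : Equiv.Perm (Fin p)) (γ : Equiv.Perm (Fin (n - p)))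
    (i : Fin p) : F hpn β γ (e hpn (Sum.inl i)) = e hpn (Sum.inl (β i)) := by
  simp [F, Equiv.permCongr_apply]

lemma F_apply_inr (hpn : p ≤ n) (β : Equiv.Perm (Fin p)) (γ : Equiv.Perm (Fin (n - p)))
    (j : Fin (n - p)) : F hpn β γ (e hpn (Sum.inr j)) = e hpn (Sum.inr (γ j)) := by
  simp [F, Equiv.permCongr_apply]

lemma F_iff (hpn : p ≤ n) (β : Equiv.Perm (Fin p)) (γ : Equiv.Perm (Fin (n - p)))
    (x : Fin n) : (x : ℕ) < p ↔ ((F hpn β γ x : Fin n) : ℕ) < p := by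
  rcases lt_or_ge (x : ℕ) p with h | h
  · have hx : x = e hpn (Sum.inl ⟨(x : ℕ), h⟩) := by
      apply (e hpn).symm.injective; simp [e_symm_of_lt hpn x h]
    rw [hx, F_apply_inl]
    constructor
    · intro _; rw [e_inl]; exact (β _).isLt
    · intro _; rw [e_inl]; exact Fin.isLt _
  · have hx : x = e hpn (Sum.inr ⟨(x : ℕ) - p, by omega⟩) := by
      apply (e hpn).symm.injective; simp [e_symm_of_ge hpn x h]
    rw [hx, F_apply_inr]
    rw [e_inr, e_inr]
    omega

lemma F_injective (hpn : p ≤ n) :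
    Function.Injective fun bg : Equiv.Perm (Fin p) × Equiv.Perm (Fin (n - p)) =>
      F hpn bg.1 bg.2 := by
  rintro ⟨β, γ⟩ ⟨β', γ'⟩ h
  simp only [F] at h
  have h2 : Equiv.sumCongr β γ = Equiv.sumCongr β' γ' := (Equiv.permCongr (e hpn)).injective h
  have hb : β = β' := by
    ext i
    have := congrArg (fun σ : Equiv.Perm (Fin p ⊕ Fin (n-p)) => σ (Sum.inl i)) h2
    have h3 : β i = β' i := by simpa using this
    exact congrArg Fin.val h3
  have hg : γ = γ' := by
    ext j
    have := congrArg (fun σ : Equiv.Perm (Fin p ⊕ Fin (n-p)) => σ (Sum.inr j)) h2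
    have h3 : γ j = γ' j := by simpa using this
    exact congrArg Fin.val h3
  simp [hb, hg]

lemma F_surjective (hpn : p ≤ n) (α : Equiv.Perm (Fin n))
    (h : ∀ x : Fin n, (x : ℕ) < p ↔ (α x : ℕ) < p) :
    ∃ β γ, F hpn β γ = α := by
  -- transport α through e
  set σ : Equiv.Perm (Fin p ⊕ Fin (n - p)) := (e hpn).symm.permCongr α with hσ
  have hσl : ∀ i : Fin p, ∃ i' : Fin p, σ (Sum.inl i) = Sum.inl i' := by
    intro i
    have h1 : ((α (e hpn (Sum.inl i)) : Fin n) : ℕ) < p := by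
      rw [← h]; rw [e_inl]; exact i.isLt
    refine ⟨⟨_, h1⟩, ?_⟩
    rw [hσ, Equiv.permCongr_apply]
    simp only [Equiv.symm_symm]
    rw [e_symm_of_lt hpn _ h1]
  have hσr : ∀ j : Fin (n - p), ∃ j' : Fin (n - p), σ (Sum.inr j) = Sum.inr j' := by
    intro j
    have h1 : p ≤ ((α (e hpn (Sum.inr j)) : Fin n) : ℕ) := by
      by_contra hc
      push_neg at hc
      have := (h _).mpr hc
      rw [e_inr] at this
      omega
    refine ⟨⟨((α (e hpn (Sum.inr j)) : Fin n) : ℕ) - p,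
      by have := (α (e hpn (Sum.inr j))).isLt; omega⟩, ?_⟩
    rw [hσ, Equiv.permCongr_apply]
    simp only [Equiv.symm_symm]
    rw [e_symm_of_ge hpn _ h1]
  choose bl hbl using hσl
  choose gr hgr using hσr
  have hblinj : Function.Injective bl := by
    intro i i' hii
    have : σ (Sum.inl i) = σ (Sum.inl i') := by rw [hbl, hbl, hii]
    have := σ.injective this
    exact Sum.inl.inj this
  have hgrinj : Function.Injective gr := by
    intro j j' hjj
    have : σ (Sum.inr j) = σ (Sum.inr j') := by rw [hgr, hgr, hjj]
    have := σ.injective this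
    exact Sum.inr.inj this
  refine ⟨Equiv.ofBijective bl (Finite.injective_iff_bijective.mp hblinj),
          Equiv.ofBijective gr (Finite.injective_iff_bijective.mp hgrinj), ?_⟩
  have key : Equiv.sumCongr (Equiv.ofBijective bl (Finite.injective_iff_bijective.mp hblinj))
      (Equiv.ofBijective gr (Finite.injective_iff_bijective.mp hgrinj)) = σ := by
    ext x
    cases x with
    | inl i => simp [hbl i]
    | inr j => simp [hgr j]
  rw [F, key, hσ]
  ext x
  simp [Equiv.permCongr_apply]

lemma eq_e_inl (hpn : p ≤ n) (x : Fin n) (hx : (x : ℕ) < p) :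
    x = e hpn (Sum.inl ⟨(x : ℕ), hx⟩) := by
  apply (e hpn).symm.injective; simp [e_symm_of_lt hpn x hx]

lemma Q_of_indec (hpn : p ≤ n) (β : Equiv.Perm (Fin p)) (γ : Equiv.Perm (Fin (n - p)))
    (hβ : Indecomposable β) : Q p (F hpn β γ) := by
  constructor
  · exact F_iff hpn β γ
  · intro q h1 h2
    obtain ⟨i, hi, hqi⟩ := hβ q h1 h2
    refine ⟨e hpn (Sum.inl i), ?_, ?_⟩
    · rw [e_inl]; exact hi
    · rw [F_apply_inl, e_inl]; exact hqi

lemma indec_of_Q (hpn : p ≤ n) (β : Equiv.Perm (Fin p)) (γ : Equiv.Perm (Fin (n - p)))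
    (h : Q p (F hpn β γ)) : Indecomposable β := by
  intro q h1 h2
  obtain ⟨x, hx, hqx⟩ := h.2 q h1 h2
  have hxp : (x : ℕ) < p := lt_trans hx h2
  refine ⟨⟨(x : ℕ), hxp⟩, hx, ?_⟩
  have hFx : F hpn β γ x = e hpn (Sum.inl (β ⟨(x : ℕ), hxp⟩)) := by
    conv_lhs => rw [eq_e_inl hpn x hxp]
    exact F_apply_inl hpn β γ _
  rw [hFx, e_inl] at hqx
  exact hqx

lemma card_Q (hpn : p ≤ n) :
    Nat.card {α : Equiv.Perm (Fin n) // Q p α} = numIndec p * Nat.factorial (n - p) := by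
  classical
  have hb : Function.Bijective
      (fun x : {β : Equiv.Perm (Fin p) // Indecomposable β} × Equiv.Perm (Fin (n - p)) =>
        (⟨F hpn x.1.1 x.2, Q_of_indec hpn x.1.1 x.2 x.1.2⟩ :
          {α : Equiv.Perm (Fin n) // Q p α})) := by
    constructor
    · rintro ⟨⟨β, hβ⟩, γ⟩ ⟨⟨β', hβ'⟩, γ'⟩ hE
      have hv : F hpn β γ = F hpn β' γ' := congrArg Subtype.val hE
      have h2 : ((β, γ) : Equiv.Perm (Fin p) × Equiv.Perm (Fin (n - p))) = (β', γ') :=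
        F_injective hpn hv
      simp only [Prod.mk.injEq] at h2
      obtain ⟨h3, h4⟩ := h2
      subst h3; subst h4; rfl
    · rintro ⟨α, hQ⟩
      obtain ⟨β, γ, hF⟩ := F_surjective hpn α hQ.1
      subst hF
      exact ⟨⟨⟨β, indec_of_Q hpn β γ hQ⟩, γ⟩, rfl⟩
  rw [← Nat.card_eq_of_bijective _ hb, Nat.card_prod]
  congr 1
  rw [Nat.card_eq_fintype_card, Fintype.card_perm, Fintype.card_fin]

lemma mapsTo_iff (α : Equiv.Perm (Fin n))
    (h : ∀ x : Fin n, (x : ℕ) < p → ((α x : Fin n) : ℕ) < p) :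
    ∀ x : Fin n, (x : ℕ) < p ↔ ((α x : Fin n) : ℕ) < p := by
  classical
  set S : Finset (Fin n) := Finset.univ.filter (fun x => (x : ℕ) < p) with hS
  have himg : S.image α = S := by
    apply Finset.eq_of_subset_of_card_le
    · intro y hy
      simp only [Finset.mem_image] at hy
      obtain ⟨x, hx, rfl⟩ := hy
      simp only [hS, Finset.mem_filter, Finset.mem_univ, true_and] at hx ⊢
      exact h x hx
    · rw [Finset.card_image_of_injective _ α.injective]
  intro x
  refine ⟨h x, fun hx => ?_⟩
  have hmem : α x ∈ S.image α := by
    rw [himg]; simp only [hS, Finset.mem_filter, Finset.mem_univ, true_and]; exact hx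
  obtain ⟨y, hy, hyx⟩ := Finset.mem_image.mp hmem
  have hxy : y = x := α.injective hyx
  subst hxy
  simpa [hS] using hy

end IndecAux

theorem indec_count_recurrence (n : ℕ) (hn : 1 ≤ n) :
    (numIndec n : ℤ) =
      (Nat.factorial n : ℤ) -
        ∑ p ∈ Finset.Icc 1 (n - 1), (numIndec p : ℤ) * (Nat.factorial (n - p) : ℤ) := by
  classical
  have hex : ∀ α : Equiv.Perm (Fin n),
      ∃ q, 1 ≤ q ∧ ∀ i : Fin n, (i : ℕ) < q → ((α i : Fin n) : ℕ) < q :=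
    fun α => ⟨n, hn, fun i _ => (α i).isLt⟩
  set f : Equiv.Perm (Fin n) → ℕ := fun α => Nat.find (hex α) with hf
  have hf_mem : ∀ α, f α ∈ Finset.Icc 1 n := by
    intro α
    simp only [Finset.mem_Icc]
    exact ⟨(Nat.find_spec (hex α)).1, Nat.find_le ⟨hn, fun i _ => (α i).isLt⟩⟩
  have hfQ : ∀ (α : Equiv.Perm (Fin n)) (p : ℕ), 1 ≤ p → (f α = p ↔ IndecAux.Q p α) := by
    intro α p hp1
    constructor
    · intro hfp
      constructor
      · exact IndecAux.mapsTo_iff α (by rw [← hfp]; exact (Nat.find_spec (hex α)).2)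
      · intro q h1 h2
        have hmin := Nat.find_min (hex α) (by omega : q < f α)
        push_neg at hmin
        obtain ⟨i, hi, hqi⟩ := hmin h1
        exact ⟨i, hi, hqi⟩
    · intro hQ
      have hle : f α ≤ p := Nat.find_le ⟨hp1, fun i hi => (hQ.1 i).mp hi⟩
      rcases Nat.lt_or_ge (f α) p with hlt | hge
      · exfalso
        have h1 : 1 ≤ f α := (Nat.find_spec (hex α)).1
        obtain ⟨x, hx, hqx⟩ := hQ.2 (f α) h1 hlt
        have h2 : ((α x : Fin n) : ℕ) < f α := (Nat.find_spec (hex α)).2 x hx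
        omega
      · omega
  have key : Nat.factorial n = ∑ p ∈ Finset.Icc 1 n, numIndec p * Nat.factorial (n - p) := by
    have h0 : Fintype.card (Equiv.Perm (Fin n)) =
        ∑ p ∈ Finset.Icc 1 n, (Finset.univ.filter (fun α => f α = p)).card := by
      rw [← Finset.card_univ]
      exact Finset.card_eq_sum_card_fiberwise (fun α _ => hf_mem α)
    rw [Fintype.card_perm, Fintype.card_fin] at h0
    rw [h0]
    apply Finset.sum_congr rfl
    intro p hp
    simp only [Finset.mem_Icc] at hp
    have hcq := IndecAux.card_Q (p := p) (n := n) hp.2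
    rw [← hcq, Nat.card_eq_fintype_card, Fintype.card_subtype]
    congr 1
    apply Finset.filter_congr
    intro α _
    simp only [hfQ α p hp.1]
  have key2 : (Nat.factorial n : ℤ) =
      (∑ p ∈ Finset.Icc 1 (n - 1), (numIndec p : ℤ) * (Nat.factorial (n - p) : ℤ)) +
        (numIndec n : ℤ) := by
    have hsplit : Finset.Icc 1 n = Finset.Icc 1 ((n - 1) + 1) := by congr 1; omega
    have := congrArg (fun m : ℕ => (m : ℤ)) key
    push_cast at this
    rw [this, hsplit, Finset.sum_Icc_succ_top (by omega : 1 ≤ (n - 1) + 1)]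
    have hn1 : (n - 1) + 1 = n := by omega
    rw [hn1]
    simp [Nat.sub_self, Nat.factorial_zero]
  omega
end

section
/- For every n ≥ 1, the number of indecomposable permutations satisfies c_{n+1} = Σ_{p=1}^{n} p · c_p · (n−p)!. -/
/-- `α` maps the initial segment `{0,...,p-1}` into itself. -/
def FixSeg {n : ℕ} (p : ℕ) (α : Equiv.Perm (Fin n)) : Prop :=
  ∀ i : Fin n, (i : ℕ) < p → ((α i : ℕ)) < p

/-- `α` fixes no initial segment strictly below `p`. -/
def IndecBelow {n : ℕ} (p : ℕ) (α : Equiv.Perm (Fin n)) : Prop :=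
  ∀ q : ℕ, 1 ≤ q → q < p → ∃ i : Fin n, (i : ℕ) < q ∧ q ≤ ((α i : ℕ))

open Equiv Finset

/-- The glued permutation, on the lower part, is given by `β`. -/
lemma phi_apply_lt {p m : ℕ} (β : Equiv.Perm (Fin p)) (γ : Equiv.Perm (Fin m))
    (i : Fin (p + m)) (h : (i : ℕ) < p) :
    (((finSumFinEquiv.permCongr (Equiv.sumCongr β γ)) i : Fin (p + m)) : ℕ)
      = (β ⟨i, h⟩ : ℕ) := by
  have hs : finSumFinEquiv.symm i = Sum.inl (⟨i, h⟩ : Fin p) := by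
    rw [Equiv.symm_apply_eq]
    apply Fin.ext
    simp
  rw [Equiv.permCongr_apply, hs]
  simp

lemma indecBelow_phi_iff {p m : ℕ} (β : Equiv.Perm (Fin p)) (γ : Equiv.Perm (Fin m)) :
    IndecBelow p (finSumFinEquiv.permCongr (Equiv.sumCongr β γ)) ↔ Indecomposable β := by
  constructor
  · intro H q hq1 hqp
    obtain ⟨i, hiq, hqi⟩ := H q hq1 hqp
    have hip : (i : ℕ) < p := lt_trans hiq hqp
    refine ⟨⟨i, hip⟩, hiq, ?_⟩
    rwa [phi_apply_lt β γ i hip] at hqi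
  · intro H q hq1 hqp
    obtain ⟨j, hjq, hqj⟩ := H q hq1 hqp
    have hjpm : (j : ℕ) < p + m := lt_of_lt_of_le j.isLt (Nat.le_add_right p m)
    refine ⟨⟨j, hjpm⟩, hjq, ?_⟩
    have hlt : ((⟨(j : ℕ), hjpm⟩ : Fin (p + m)) : ℕ) < p := j.isLt
    rw [phi_apply_lt β γ _ hlt]
    convert hqj

lemma card_fix (p m : ℕ) :
    Nat.card {α : Equiv.Perm (Fin (p + m)) // FixSeg p α ∧ IndecBelow p α}
      = numIndec p * Nat.factorial m := by
  classical
  let Φ : Equiv.Perm (Fin p) × Equiv.Perm (Fin m) → Equiv.Perm (Fin (p + m)) :=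
    fun bg => finSumFinEquiv.permCongr (Equiv.sumCongr bg.1 bg.2)
  have hΦinj : Function.Injective Φ := by
    intro x y hxy
    have h1 : Equiv.sumCongr x.1 x.2 = Equiv.sumCongr y.1 y.2 :=
      (Equiv.permCongr finSumFinEquiv).injective hxy
    have h2 : Equiv.Perm.sumCongrHom (Fin p) (Fin m) x
        = Equiv.Perm.sumCongrHom (Fin p) (Fin m) y := h1
    exact Equiv.Perm.sumCongrHom_injective h2
  have hfix : ∀ bg, FixSeg p (Φ bg) := by
    rintro ⟨β, γ⟩ i hi
    rw [phi_apply_lt β γ i hi]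
    exact (β ⟨i, hi⟩).isLt
  let F : {β : Equiv.Perm (Fin p) // Indecomposable β} × Equiv.Perm (Fin m) →
      {α : Equiv.Perm (Fin (p + m)) // FixSeg p α ∧ IndecBelow p α} :=
    fun x => ⟨Φ (x.1.1, x.2), hfix _,
      (indecBelow_phi_iff x.1.1 x.2).2 x.1.2⟩
  have hFbij : Function.Bijective F := by
    constructor
    · intro x y hxy
      have := hΦinj (congrArg Subtype.val hxy)
      simp only [Prod.mk.injEq] at this
      exact Prod.ext (Subtype.ext this.1) this.2
    · rintro ⟨α, hαfix, hαind⟩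
      -- conjugate α to a permutation of the sum type
      set σ : Equiv.Perm (Fin p ⊕ Fin m) := finSumFinEquiv.symm.permCongr α with hσ
      have hback : finSumFinEquiv.permCongr σ = α := by
        ext x
        simp [hσ, Equiv.permCongr_apply]
      have hmaps : Set.MapsTo σ (Set.range Sum.inl) (Set.range Sum.inl) := by
        rintro x ⟨i, rfl⟩
        have hval : ((finSumFinEquiv (Sum.inl i) : Fin (p + m)) : ℕ) = (i : ℕ) := by
          simp
        have hlt : ((α (finSumFinEquiv (Sum.inl i)) : Fin (p + m)) : ℕ) < p := by
          apply hαfix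
          rw [hval]; exact i.isLt
        have : α (finSumFinEquiv (Sum.inl i))
            = Fin.castAdd m ⟨(α (finSumFinEquiv (Sum.inl i)) : Fin (p + m)), hlt⟩ := by
          ext; rfl
        refine ⟨⟨_, hlt⟩, ?_⟩
        rw [hσ]
        simp only [Equiv.permCongr_apply, Equiv.symm_symm, Equiv.symm_apply_apply]
        rw [Equiv.eq_symm_apply]
        apply Fin.ext
        simp
      obtain ⟨bg, hbg⟩ := Equiv.Perm.mem_sumCongrHom_range_of_perm_mapsTo_inl hmaps
      have hΦeq : Φ bg = α := by
        have : Equiv.sumCongr bg.1 bg.2 = σ := hbg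
        show finSumFinEquiv.permCongr (Equiv.sumCongr bg.1 bg.2) = α
        rw [this, hback]
      have hβind : Indecomposable bg.1 := by
        apply (indecBelow_phi_iff bg.1 bg.2).1
        show IndecBelow p (Φ (bg.1, bg.2))
        rw [show (bg.1, bg.2) = bg from rfl, hΦeq]
        exact hαind
      exact ⟨⟨⟨bg.1, hβind⟩, bg.2⟩, Subtype.ext hΦeq⟩
  rw [← Nat.card_congr (Equiv.ofBijective F hFbij)]
  rw [Nat.card_prod]
  congr 1
  rw [Nat.card_eq_fintype_card]
  simp [Fintype.card_perm]

lemma fiber_card (n p : ℕ) (hp : p ∈ Finset.Icc 1 n) :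
    Nat.card {α : Equiv.Perm (Fin n) // FixSeg p α ∧ IndecBelow p α}
      = numIndec p * Nat.factorial (n - p) := by
  rw [Finset.mem_Icc] at hp
  obtain ⟨m, rfl⟩ : ∃ m, n = p + m := ⟨n - p, (Nat.add_sub_cancel' hp.2).symm⟩
  simpa [Nat.add_sub_cancel_left] using card_fix p m

/-- The fundamental identity: `n! = ∑_{p=1}^n c_p (n-p)!`. -/
lemma sum_numIndec (n : ℕ) (hn : 1 ≤ n) :
    ∑ p ∈ Finset.Icc 1 n, numIndec p * Nat.factorial (n - p) = Nat.factorial n := by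
  classical
  let f : Equiv.Perm (Fin n) → ℕ := fun α => sInf {p | 1 ≤ p ∧ FixSeg p α}
  have hmemn : ∀ α : Equiv.Perm (Fin n), n ∈ {p | 1 ≤ p ∧ FixSeg p α} := by
    intro α
    exact ⟨hn, fun i _ => (α i).isLt⟩
  have hfmem : ∀ α : Equiv.Perm (Fin n), f α ∈ {p | 1 ≤ p ∧ FixSeg p α} := by
    intro α
    exact Nat.sInf_mem ⟨n, hmemn α⟩
  have hfle : ∀ α : Equiv.Perm (Fin n), f α ≤ n := fun α => Nat.sInf_le (hmemn α)
  have hficc : ∀ α : Equiv.Perm (Fin n), f α ∈ Finset.Icc 1 n := by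
    intro α
    exact Finset.mem_Icc.2 ⟨(hfmem α).1, hfle α⟩
  have hfiber : ∀ p ∈ Finset.Icc 1 n, ∀ α : Equiv.Perm (Fin n),
      f α = p ↔ (FixSeg p α ∧ IndecBelow p α) := by
    intro p hp α
    constructor
    · rintro rfl
      refine ⟨(hfmem α).2, ?_⟩
      intro q hq1 hqf
      have hq : q ∉ {p | 1 ≤ p ∧ FixSeg p α} := Nat.notMem_of_lt_sInf hqf
      simp only [Set.mem_setOf_eq, not_and] at hq
      have := hq hq1
      unfold FixSeg at this
      push_neg at this
      obtain ⟨i, hiq, hqi⟩ := this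
      exact ⟨i, hiq, hqi⟩
    · rintro ⟨hfix, hind⟩
      have hle : f α ≤ p := Nat.sInf_le ⟨(Finset.mem_Icc.1 hp).1, hfix⟩
      rcases lt_or_eq_of_le hle with hlt | heq
      · exfalso
        obtain ⟨i, hif, hfi⟩ := hind (f α) (hfmem α).1 hlt
        exact absurd ((hfmem α).2 i hif) (not_lt.2 hfi)
      · exact heq
  have htotal : (Finset.univ : Finset (Equiv.Perm (Fin n))).card
      = ∑ p ∈ Finset.Icc 1 n, (Finset.univ.filter fun α => f α = p).card :=
    Finset.card_eq_sum_card_fiberwise (fun α _ => hficc α)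
  have hcard : ∀ p ∈ Finset.Icc 1 n,
      (Finset.univ.filter fun α : Equiv.Perm (Fin n) => f α = p).card
        = numIndec p * Nat.factorial (n - p) := by
    intro p hp
    rw [← Fintype.card_subtype, ← Nat.card_eq_fintype_card]
    rw [Nat.card_congr (Equiv.subtypeEquivRight (hfiber p hp))]
    exact fiber_card n p hp
  rw [Finset.sum_congr rfl hcard] at htotal
  rw [← htotal]
  simp [Fintype.card_perm]

theorem indec_count_recurrence' (n : ℕ) (hn : 1 ≤ n) :
    numIndec (n + 1) =
      ∑ p ∈ Finset.Icc 1 n, p * numIndec p * Nat.factorial (n - p) := by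
  have A := sum_numIndec n hn
  have B := sum_numIndec (n + 1) (by omega)
  rw [Finset.sum_Icc_succ_top (by omega : 1 ≤ n + 1)] at B
  simp only [Nat.add_sub_cancel_left, Nat.sub_self, Nat.factorial_zero, Nat.mul_one] at B
  -- B : (∑ p ∈ Icc 1 n, numIndec p * (n + 1 - p)!) + numIndec (n+1) = (n+1)!
  have key : (∑ p ∈ Finset.Icc 1 n, p * numIndec p * Nat.factorial (n - p))
      + (∑ p ∈ Finset.Icc 1 n, numIndec p * Nat.factorial (n + 1 - p))
      = Nat.factorial (n + 1) := by
    rw [← Finset.sum_add_distrib]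
    have hstep : ∀ p ∈ Finset.Icc 1 n,
        p * numIndec p * Nat.factorial (n - p) + numIndec p * Nat.factorial (n + 1 - p)
          = (n + 1) * (numIndec p * Nat.factorial (n - p)) := by
      intro p hp
      rw [Finset.mem_Icc] at hp
      have h1 : n + 1 - p = (n - p) + 1 := by omega
      rw [h1, Nat.factorial_succ]
      have h3 : n + 1 = p + (n - p + 1) := by omega
      rw [h3]
      ring
    rw [Finset.sum_congr rfl hstep, ← Finset.mul_sum, A, Nat.factorial_succ]
  omega
end

section
/- For every n > 1 and every k with 1 ≤ k ≤ n, the number c_{n,k} of indecomposable permutations of S_n with k cycles satisfies c_{n,k} = s_{n,k} − Σ_{p=1}^{n−1} Σ_{i=1}^{min(k,p)} c_{p,i} · s_{n−p,k−i}. -/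
/-- The number of cycles (orbits) of a permutation: nontrivial cycles together
with fixed points, the latter counting as cycles of length 1. -/
noncomputable def cycleCount {n : ℕ} (α : Equiv.Perm (Fin n)) : ℕ :=
  α.cycleType.card + Nat.card {x : Fin n // α x = x}

/-- `c n k`: the number of indecomposable permutations of `S_n` with `k` cycles. -/
noncomputable def c (n k : ℕ) : ℕ :=
  Nat.card {α : Equiv.Perm (Fin n) // Indecomposable α ∧ cycleCount α = k}

/-- `s m j`: the number of permutations of `S_m` with `j` cycles
(unsigned Stirling number of the first kind); `s 0 0 = 1` and `s 0 j = 0` for `j > 0`. -/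
noncomputable def s (m j : ℕ) : ℕ :=
  Nat.card {α : Equiv.Perm (Fin m) // cycleCount α = j}

open Equiv Equiv.Perm Finset

lemma cycleType_permCongr {α β : Type*} [DecidableEq α] [Fintype α] [DecidableEq β] [Fintype β]
    (e : α ≃ β) (g : Perm α) : (e.permCongr g).cycleType = g.cycleType := by
  classical
  have h : e.permCongr g
      = g.extendDomain (e.trans (Equiv.subtypeUnivEquiv (fun _ : β => trivial)).symm) := by
    ext b
    rw [Perm.extendDomain_apply_subtype _ _ trivial]
    simp [Equiv.subtypeUnivEquiv]
  rw [h, cycleType_extendDomain]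

lemma cycleType_sumCongr_left {α β : Type*} [DecidableEq α] [Fintype α] [DecidableEq β] [Fintype β]
    (σ : Perm α) : Perm.cycleType (Equiv.sumCongr σ (1 : Perm β)) = σ.cycleType := by
  classical
  have h : Equiv.sumCongr σ (1 : Perm β)
      = σ.extendDomain (Equiv.ofInjective (Sum.inl) Sum.inl_injective) := by
    ext x
    cases x with
    | inl a =>
      rw [Perm.extendDomain_apply_subtype _ _ ⟨a, rfl⟩]
      simp
    | inr b =>
      rw [Perm.extendDomain_apply_not_subtype]
      · simp
      · rintro ⟨a, h⟩; simp at h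
  rw [h, cycleType_extendDomain]

lemma cycleType_sumCongr_right {α β : Type*} [DecidableEq α] [Fintype α] [DecidableEq β] [Fintype β]
    (τ : Perm β) : Perm.cycleType (Equiv.sumCongr (1 : Perm α) τ) = τ.cycleType := by
  classical
  have h : Equiv.sumCongr (1 : Perm α) τ
      = τ.extendDomain (Equiv.ofInjective (Sum.inr) Sum.inr_injective) := by
    ext x
    cases x with
    | inr a =>
      rw [Perm.extendDomain_apply_subtype _ _ ⟨a, rfl⟩]
      simp
    | inl b =>
      rw [Perm.extendDomain_apply_not_subtype]
      · simp
      · rintro ⟨a, h⟩; simp at h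
  rw [h, cycleType_extendDomain]

lemma cycleType_sumCongr {α β : Type*} [DecidableEq α] [Fintype α] [DecidableEq β] [Fintype β]
    (σ : Perm α) (τ : Perm β) :
    Perm.cycleType (Equiv.sumCongr σ τ) = σ.cycleType + τ.cycleType := by
  classical
  have hd : Perm.Disjoint (Equiv.sumCongr σ (1 : Perm β)) (Equiv.sumCongr (1 : Perm α) τ) := by
    intro x
    cases x with
    | inl a => right; simp
    | inr b => left; simp
  have hm : Equiv.sumCongr σ τ = Equiv.sumCongr σ (1 : Perm β) * Equiv.sumCongr (1 : Perm α) τ := by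
    rw [Perm.sumCongr_mul]; simp
  rw [hm, hd.cycleType_mul, cycleType_sumCongr_left, cycleType_sumCongr_right]

lemma natCard_fixed_permCongr {α β : Type*} (e : α ≃ β) (g : Perm α) :
    Nat.card {x : β // e.permCongr g x = x} = Nat.card {y : α // g y = y} := by
  refine (Nat.card_congr (Equiv.subtypeEquiv e ?_)).symm
  intro a
  constructor
  · intro h; simp [Equiv.permCongr_apply, h]
  · intro h
    simp only [Equiv.permCongr_apply, Equiv.symm_apply_apply] at h
    exact e.injective h

lemma natCard_fixed_sumCongr {α β : Type*} [Finite α] [Finite β] (σ : Perm α) (τ : Perm β) :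
    Nat.card {x : α ⊕ β // Equiv.sumCongr σ τ x = x}
      = Nat.card {a : α // σ a = a} + Nat.card {b : β // τ b = b} := by
  rw [← Nat.card_sum]
  refine Nat.card_congr (Equiv.subtypeSum.trans (Equiv.sumCongr ?_ ?_)) <;>
    exact Equiv.subtypeEquivRight (fun a => by simp)

lemma cycleCount_permCongr {n m : ℕ} (e : Fin m ≃ Fin n) (g : Perm (Fin m)) :
    cycleCount (e.permCongr g) = cycleCount g := by
  unfold cycleCount
  rw [cycleType_permCongr, natCard_fixed_permCongr]

lemma cycleCount_pos {n : ℕ} (hn : 0 < n) (α : Perm (Fin n)) : 1 ≤ cycleCount α := by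
  unfold cycleCount
  by_cases h : ∃ x, α x = x
  · have : Nonempty {x : Fin n // α x = x} := ⟨⟨h.choose, h.choose_spec⟩⟩
    have := Nat.card_pos (α := {x : Fin n // α x = x})
    omega
  · have hα : α ≠ 1 := by
      intro h1; exact h ⟨⟨0, hn⟩, by rw [h1]; rfl⟩
    have : α.cycleType ≠ 0 := fun hc => hα (cycleType_eq_zero.mp hc)
    have := Multiset.card_pos.mpr this
    omega

lemma natCard_fixed_eq {n : ℕ} (α : Perm (Fin n)) :
    Nat.card {x : Fin n // α x = x} = n - α.support.card := by
  classical
  rw [Nat.card_eq_fintype_card, Fintype.card_subtype]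
  have : (univ.filter fun x => α x = x) = α.supportᶜ := by
    ext x; simp [Perm.mem_support]
  rw [this, Finset.card_compl, Fintype.card_fin]

lemma cycleCount_le {n : ℕ} (α : Perm (Fin n)) : cycleCount α ≤ n := by
  unfold cycleCount
  have h1 : α.cycleType.card ≤ α.support.card := by
    rw [← sum_cycleType]
    calc α.cycleType.card = α.cycleType.card • 1 := (smul_eq_mul _ _).trans (mul_one _) |>.symm
    _ ≤ α.cycleType.sum := Multiset.card_nsmul_le_sum fun x hx => (two_le_of_mem_cycleType hx).trans' one_le_two
  have h2 : α.support.card ≤ n := by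
    simpa using Finset.card_le_card (Finset.subset_univ α.support)
  rw [natCard_fixed_eq]
  omega

def Blk {n : ℕ} (α : Equiv.Perm (Fin n)) (q : ℕ) : Prop :=
  ∀ i : Fin n, (i : ℕ) < q → (α i : ℕ) < q

lemma indec_iff {n : ℕ} (α : Equiv.Perm (Fin n)) :
    Indecomposable α ↔ ∀ q : ℕ, 1 ≤ q → q < n → ¬ Blk α q := by
  unfold Indecomposable Blk
  push_neg
  simp [not_lt]

lemma blk_top {n : ℕ} (α : Equiv.Perm (Fin n)) : Blk α n := fun i _ => (α i).isLt

/-- first block size -/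
noncomputable def fb {n : ℕ} (α : Equiv.Perm (Fin n)) : ℕ :=
  sInf {q | 1 ≤ q ∧ q ≤ n ∧ Blk α q}

lemma fb_mem {n : ℕ} (hn : 0 < n) (α : Equiv.Perm (Fin n)) :
    1 ≤ fb α ∧ fb α ≤ n ∧ Blk α (fb α) :=
  Nat.sInf_mem (⟨n, hn, le_refl n, blk_top α⟩ : {q | 1 ≤ q ∧ q ≤ n ∧ Blk α q}.Nonempty)

lemma fb_min {n : ℕ} (α : Equiv.Perm (Fin n)) {q : ℕ} (h1 : 1 ≤ q) (h2 : q ≤ n)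
    (hq : q < fb α) : ¬ Blk α q := by
  intro hB
  exact Nat.notMem_of_lt_sInf hq ⟨h1, h2, hB⟩

lemma fb_eq {n : ℕ} (α : Equiv.Perm (Fin n)) {p : ℕ} (h1 : 1 ≤ p) (h2 : p ≤ n)
    (hB : Blk α p) (hmin : ∀ q, 1 ≤ q → q < p → ¬ Blk α q) : fb α = p := by
  have hle : fb α ≤ p := Nat.sInf_le ⟨h1, h2, hB⟩
  rcases lt_or_eq_of_le hle with hlt | heq
  · have hm := fb_mem (lt_of_lt_of_le h1 h2) α
    exact absurd hm.2.2 (hmin _ hm.1 hlt)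
  · exact heq

lemma fb_eq_top_iff {n : ℕ} (hn : 0 < n) (α : Equiv.Perm (Fin n)) :
    fb α = n ↔ Indecomposable α := by
  rw [indec_iff]
  constructor
  · intro h q h1 h2
    exact fb_min α h1 (le_of_lt h2) (by rw [h]; exact h2)
  · intro h
    exact fb_eq α hn (le_refl n) (blk_top α) (fun q hq1 hq2 => h q hq1 hq2)

section Join
variable {p n : ℕ}

/-- the canonical equivalence `Fin p ⊕ Fin (n-p) ≃ Fin n` -/
def eqv (h : p ≤ n) : Fin p ⊕ Fin (n - p) ≃ Fin n :=
  finSumFinEquiv.trans (finCongr (Nat.add_sub_cancel' h))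

lemma eqv_inl (h : p ≤ n) (i : Fin p) : (eqv h (Sum.inl i) : ℕ) = i := by
  simp [eqv]

lemma eqv_inr (h : p ≤ n) (j : Fin (n - p)) : (eqv h (Sum.inr j) : ℕ) = p + j := by
  simp [eqv]

lemma eqv_symm_lt (h : p ≤ n) (x : Fin n) (hx : (x : ℕ) < p) :
    (eqv h).symm x = Sum.inl ⟨x, hx⟩ := by
  rw [Equiv.symm_apply_eq]
  exact Fin.ext (by rw [eqv_inl])

lemma eqv_symm_ge (h : p ≤ n) (x : Fin n) (hx : p ≤ (x : ℕ)) :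
    (eqv h).symm x = Sum.inr ⟨(x : ℕ) - p, by have := x.isLt; omega⟩ := by
  rw [Equiv.symm_apply_eq]
  refine Fin.ext ?_
  rw [eqv_inr]
  simp only [Fin.val_mk]
  have := x.isLt
  omega

/-- join of two permutations -/
def join (h : p ≤ n) (σ : Equiv.Perm (Fin p)) (τ : Equiv.Perm (Fin (n - p))) :
    Equiv.Perm (Fin n) :=
  (eqv h).permCongr (Equiv.sumCongr σ τ)

lemma join_apply_lt (h : p ≤ n) (σ : Equiv.Perm (Fin p)) (τ : Equiv.Perm (Fin (n - p)))
    (x : Fin n) (hx : (x : ℕ) < p) : ((join h σ τ) x : ℕ) = σ ⟨x, hx⟩ := by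
  rw [join, Equiv.permCongr_apply, eqv_symm_lt h x hx]
  simp only [Equiv.sumCongr_apply, Sum.map_inl]
  rw [eqv_inl]

lemma join_apply_ge (h : p ≤ n) (σ : Equiv.Perm (Fin p)) (τ : Equiv.Perm (Fin (n - p)))
    (x : Fin n) (hx : p ≤ (x : ℕ)) :
    ((join h σ τ) x : ℕ) = p + τ ⟨(x : ℕ) - p, by have := x.isLt; omega⟩ := by
  rw [join, Equiv.permCongr_apply, eqv_symm_ge h x hx]
  simp only [Equiv.sumCongr_apply, Sum.map_inr]
  rw [eqv_inr]

lemma cycleCount_join (h : p ≤ n) (σ : Equiv.Perm (Fin p)) (τ : Equiv.Perm (Fin (n - p))) :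
    cycleCount (join h σ τ) = cycleCount σ + cycleCount τ := by
  unfold cycleCount join
  rw [cycleType_permCongr, natCard_fixed_permCongr, cycleType_sumCongr,
    natCard_fixed_sumCongr, Multiset.card_add]
  omega

lemma blk_join_iff (h : p ≤ n) (σ : Equiv.Perm (Fin p)) (τ : Equiv.Perm (Fin (n - p)))
    {q : ℕ} (hq : q ≤ p) : Blk (join h σ τ) q ↔ Blk σ q := by
  constructor
  · intro hB i hi
    have hx := hB (Fin.castLE h i) (by simp; exact hi)
    rw [join_apply_lt h σ τ _ (by simpa using i.isLt)] at hx
    simpa using hx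
  · intro hB x hx
    have hxp : (x : ℕ) < p := lt_of_lt_of_le hx hq
    rw [join_apply_lt h σ τ x hxp]
    exact hB ⟨x, hxp⟩ hx

lemma blk_join (h : p ≤ n) (σ : Equiv.Perm (Fin p)) (τ : Equiv.Perm (Fin (n - p))) :
    Blk (join h σ τ) p := (blk_join_iff h σ τ (le_refl p)).mpr (fun i _ => (σ i).isLt)

lemma fb_join_eq_iff (h1 : 1 ≤ p) (h : p ≤ n) (σ : Equiv.Perm (Fin p))
    (τ : Equiv.Perm (Fin (n - p))) : fb (join h σ τ) = p ↔ Indecomposable σ := by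
  rw [indec_iff]
  constructor
  · intro hfb q hq1 hq2
    rw [← blk_join_iff h σ τ (le_of_lt hq2)]
    exact fb_min _ hq1 (le_trans (le_of_lt hq2) h) (by rw [hfb]; exact hq2)
  · intro hind
    refine fb_eq _ h1 h (blk_join h σ τ) (fun q hq1 hq2 hB => ?_)
    exact hind q hq1 hq2 ((blk_join_iff h σ τ (le_of_lt hq2)).mp hB)

end Join

section Restrict
variable {p n : ℕ}

lemma join_injective (h : p ≤ n) :
    Function.Injective (fun x : Equiv.Perm (Fin p) × Equiv.Perm (Fin (n - p)) =>
      join h x.1 x.2) := by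
  intro x y hxy
  have h2 : Equiv.sumCongr x.1 x.2 = Equiv.sumCongr y.1 y.2 :=
    (eqv h).permCongr.injective hxy
  have h3 : Equiv.Perm.sumCongrHom (Fin p) (Fin (n - p)) x
      = Equiv.Perm.sumCongrHom (Fin p) (Fin (n - p)) y := h2
  exact Equiv.Perm.sumCongrHom_injective h3

lemma join_surjective (h : p ≤ n) (α : Equiv.Perm (Fin n)) (hB : Blk α p) :
    ∃ σ τ, join h σ τ = α := by
  classical
  have hσval : ∀ i : Fin p, ((α (Fin.castLE h i)) : ℕ) < p := fun i =>
    hB (Fin.castLE h i) (by simp)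
  have hfinj : Function.Injective
      (fun i : Fin p => (⟨(α (Fin.castLE h i) : ℕ), hσval i⟩ : Fin p)) := by
    intro i j hij
    simp only [Fin.mk.injEq] at hij
    have h2 := α.injective (Fin.ext hij)
    have h3 : (i : ℕ) = (j : ℕ) := by
      have := congrArg Fin.val h2
      simpa using this
    exact Fin.ext h3
  have hfsurj := Finite.surjective_of_injective hfinj
  have hge : ∀ x : Fin n, p ≤ (x : ℕ) → p ≤ (α x : ℕ) := by
    intro x hx
    by_contra hlt
    push_neg at hlt
    obtain ⟨i, hi⟩ := hfsurj ⟨(α x : ℕ), hlt⟩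
    simp only [Fin.mk.injEq] at hi
    have h2 := α.injective (Fin.ext hi)
    have h3 : ((Fin.castLE h i : Fin n) : ℕ) = (x : ℕ) := congrArg Fin.val h2
    have h4 := i.isLt
    simp at h3
    omega
  have hgval : ∀ j : Fin (n - p),
      (α ⟨p + j, by have := j.isLt; omega⟩ : ℕ) - p < n - p := by
    intro j
    have h1 := hge ⟨p + j, by have := j.isLt; omega⟩ (by simp)
    have h2 := (α ⟨p + j, by have := j.isLt; omega⟩).isLt
    omega
  have hginj : Function.Injective (fun j : Fin (n - p) =>
      (⟨(α ⟨p + j, by have := j.isLt; omega⟩ : ℕ) - p, hgval j⟩ : Fin (n - p))) := by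
    intro i j hij
    have hvi := hge ⟨p + i, by have := i.isLt; omega⟩ (by simp)
    have hvj := hge ⟨p + j, by have := j.isLt; omega⟩ (by simp)
    have h0 : (α ⟨p + i, by have := i.isLt; omega⟩ : ℕ) - p
        = (α ⟨p + j, by have := j.isLt; omega⟩ : ℕ) - p := by
      simp only [Fin.mk.injEq] at hij
      exact hij
    have h1 : (α ⟨p + i, by have := i.isLt; omega⟩ : ℕ)
        = (α ⟨p + j, by have := j.isLt; omega⟩ : ℕ) := by omega
    have h2 := α.injective (Fin.ext h1)
    have h3 : p + (i : ℕ) = p + (j : ℕ) := congrArg Fin.val h2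
    exact Fin.ext (by omega)
  refine ⟨Equiv.ofBijective _ (show Function.Bijective _ from ⟨hfinj, hfsurj⟩),
    Equiv.ofBijective _ (show Function.Bijective _ from ⟨hginj, Finite.surjective_of_injective hginj⟩), ?_⟩
  ext x
  by_cases hx : (x : ℕ) < p
  · rw [join_apply_lt _ _ _ x hx]
    simp only [Equiv.ofBijective_apply, Fin.val_mk]
    congr 2
  · push_neg at hx
    rw [join_apply_ge _ _ _ x hx]
    simp only [Equiv.ofBijective_apply, Fin.val_mk]
    have h1 : (⟨p + ((x : ℕ) - p), by have := x.isLt; omega⟩ : Fin n) = x :=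
      Fin.ext (by simp only [Fin.val_mk]; omega)
    rw [h1]
    have := hge x hx
    omega

end Restrict

lemma count_fiber {n p k : ℕ} (hp1 : 1 ≤ p) (hpn : p ≤ n) :
    Nat.card {α : Equiv.Perm (Fin n) // cycleCount α = k ∧ fb α = p}
      = Nat.card {x : Equiv.Perm (Fin p) × Equiv.Perm (Fin (n - p)) //
          Indecomposable x.1 ∧ cycleCount x.1 + cycleCount x.2 = k} := by
  have hn : 0 < n := lt_of_lt_of_le hp1 hpn
  refine (Nat.card_congr (Equiv.ofBijective (fun x => ⟨join hpn x.1.1 x.1.2, by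
    rw [cycleCount_join]; exact x.2.2, (fb_join_eq_iff hp1 hpn _ _).2 x.2.1⟩) ⟨?_, ?_⟩)).symm
  · intro x y hxy
    have := join_injective hpn (congrArg Subtype.val hxy)
    exact Subtype.ext this
  · rintro ⟨α, hcc, hfb⟩
    have hB : Blk α p := hfb ▸ (fb_mem hn α).2.2
    obtain ⟨σ, τ, hj⟩ := join_surjective hpn α hB
    refine ⟨⟨(σ, τ), ?_, ?_⟩, ?_⟩
    · exact (fb_join_eq_iff hp1 hpn σ τ).1 (by rw [hj]; exact hfb)
    · rw [← cycleCount_join hpn σ τ, hj]; exact hcc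
    · exact Subtype.ext hj

lemma count_pairs {p m k : ℕ} (hp1 : 1 ≤ p) :
    Nat.card {x : Equiv.Perm (Fin p) × Equiv.Perm (Fin m) //
        Indecomposable x.1 ∧ cycleCount x.1 + cycleCount x.2 = k}
      = ∑ i ∈ Finset.Icc 1 (min k p), (c p i) * (s m (k - i)) := by
  classical
  rw [Nat.card_eq_fintype_card, Fintype.card_subtype]
  rw [Finset.card_eq_sum_card_fiberwise (f := fun x => cycleCount x.1)
    (t := Finset.Icc 1 (min k p)) (fun x hx => by
      simp only [Finset.coe_filter, Finset.mem_coe, Finset.mem_filter, Finset.mem_univ, true_and, Set.mem_setOf_eq] at hx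
      obtain ⟨-, hx2⟩ := hx
      have h1 := cycleCount_pos hp1 x.1
      have h2 := cycleCount_le x.1
      rw [Finset.mem_coe, Finset.mem_Icc, le_min_iff]
      refine ⟨h1, ?_, h2⟩
      show cycleCount x.1 ≤ k
      omega)]
  refine Finset.sum_congr rfl (fun i hi => ?_)
  rw [Finset.mem_Icc] at hi
  have hik : i ≤ k := le_trans hi.2 (min_le_left _ _)
  rw [Finset.filter_filter]
  rw [Finset.filter_congr (fun x _ => show
      ((Indecomposable x.1 ∧ cycleCount x.1 + cycleCount x.2 = k) ∧ cycleCount x.1 = i)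
        ↔ ((Indecomposable x.1 ∧ cycleCount x.1 = i) ∧ cycleCount x.2 = k - i) by
    constructor
    · rintro ⟨⟨h1, h2⟩, h3⟩; exact ⟨⟨h1, h3⟩, by omega⟩
    · rintro ⟨⟨h1, h3⟩, h2⟩; exact ⟨⟨h1, by omega⟩, h3⟩)]
  rw [← Finset.univ_product_univ,
    Finset.filter_product (fun σ : Equiv.Perm (Fin p) => Indecomposable σ ∧ cycleCount σ = i)
      (fun τ : Equiv.Perm (Fin m) => cycleCount τ = k - i),
    Finset.card_product]
  rw [c, s, Nat.card_eq_fintype_card, Nat.card_eq_fintype_card,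
    Fintype.card_subtype, Fintype.card_subtype]

lemma count_top {n k : ℕ} (hn : 0 < n) :
    Nat.card {α : Equiv.Perm (Fin n) // cycleCount α = k ∧ fb α = n} = c n k := by
  refine Nat.card_congr (Equiv.subtypeEquivRight (fun α => ?_))
  rw [fb_eq_top_iff hn]
  tauto

lemma count_total {n k : ℕ} (hn : 0 < n) :
    s n k = ∑ p ∈ Finset.Icc 1 n,
      Nat.card {α : Equiv.Perm (Fin n) // cycleCount α = k ∧ fb α = p} := by
  classical
  rw [s, Nat.card_eq_fintype_card, Fintype.card_subtype]
  rw [Finset.card_eq_sum_card_fiberwise (f := fb) (t := Finset.Icc 1 n) (fun α hα => by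
    have := fb_mem hn α
    rw [Finset.mem_coe, Finset.mem_Icc]
    omega)]
  refine Finset.sum_congr rfl (fun p _ => ?_)
  rw [Finset.filter_filter, Nat.card_eq_fintype_card, Fintype.card_subtype]

theorem indec_stirling_recurrence (n k : ℕ) (hn : 1 < n) (hk1 : 1 ≤ k) (hk2 : k ≤ n) :
    (c n k : ℤ) =
      (s n k : ℤ) -
        ∑ p ∈ Finset.Icc 1 (n - 1), ∑ i ∈ Finset.Icc 1 (min k p),
          (c p i : ℤ) * (s (n - p) (k - i) : ℤ) := by
  have hn0 : 0 < n := by omega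
  have key : s n k = (∑ p ∈ Finset.Icc 1 (n - 1), ∑ i ∈ Finset.Icc 1 (min k p),
      c p i * s (n - p) (k - i)) + c n k := by
    rw [count_total hn0]
    obtain ⟨m, rfl⟩ : ∃ m, n = m + 1 := ⟨n - 1, by omega⟩
    rw [Finset.sum_Icc_succ_top (by omega)]
    simp only [Nat.add_sub_cancel]
    congr 1
    · refine Finset.sum_congr rfl (fun p hp => ?_)
      rw [Finset.mem_Icc] at hp
      rw [count_fiber hp.1 (by omega), count_pairs hp.1]
    · exact count_top hn0
  have h2 := congrArg (fun x : ℕ => (x : ℤ)) key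
  push_cast at h2
  linarith
end

section
/- For every n > 1 and every k with 1 ≤ k ≤ n, the number c_{n,k} of indecomposable permutations of S_n with k cycles satisfies c_{n,k} = Σ_{p=1}^{n−1} Σ_{i=1}^{min(k,p)} p · c_{p,i} · s_{n−p−1,k−i}. -/
open Equiv Equiv.Perm

noncomputable section AuxCC

variable {ι κ : Type*}

/-- Number of orbits of a permutation. -/
noncomputable def ccAux (σ : Perm ι) : ℕ := Nat.card (Quotient (SameCycle.setoid σ))

/-- `permCongr` as a `MulEquiv`. -/
def permCongrHom (e : ι ≃ κ) : Perm ι ≃* Perm κ :=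
  { e.permCongr with
    map_mul' := fun p q => by
      ext x
      simp [Equiv.permCongr_apply, Equiv.Perm.mul_apply] }

lemma permCongr_zpow (e : ι ≃ κ) (σ : Perm ι) (j : ℤ) :
    (e.permCongr σ) ^ j = e.permCongr (σ ^ j) := by
  have := map_zpow (_root_.permCongrHom e) σ j
  exact this.symm

lemma sameCycle_permCongr_iff (e : ι ≃ κ) (σ : Perm ι) (x y : ι) :
    (e.permCongr σ).SameCycle (e x) (e y) ↔ σ.SameCycle x y := by
  constructor
  · rintro ⟨j, hj⟩
    refine ⟨j, ?_⟩
    rw [permCongr_zpow] at hj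
    simpa using hj
  · rintro ⟨j, hj⟩
    refine ⟨j, ?_⟩
    rw [permCongr_zpow]
    simp [hj]

lemma ccAux_permCongr (e : ι ≃ κ) (σ : Perm ι) : ccAux (e.permCongr σ) = ccAux σ := by
  show Nat.card (Quotient (SameCycle.setoid _)) = Nat.card (Quotient (SameCycle.setoid _))
  refine Nat.card_congr (Quotient.congr e.symm ?_)
  intro a b
  show (e.permCongr σ).SameCycle a b ↔ σ.SameCycle (e.symm a) (e.symm b)
  conv_lhs => rw [← e.apply_symm_apply a, ← e.apply_symm_apply b]
  exact sameCycle_permCongr_iff e σ _ _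

end AuxCC

section S2
variable {ι κ : Type*}

lemma sumCongr_zpow (γ : Perm ι) (δ : Perm κ) (j : ℤ) :
    (Equiv.sumCongr γ δ) ^ j = Equiv.sumCongr (γ ^ j) (δ ^ j) := by
  have := map_zpow (Equiv.Perm.sumCongrHom ι κ) (γ, δ) j
  simpa [Equiv.Perm.sumCongrHom, Prod.pow_def] using this.symm

lemma sameCycle_sum_inl {γ : Perm ι} {δ : Perm κ} {a b : ι} :
    Equiv.Perm.SameCycle (Equiv.sumCongr γ δ) (.inl a) (.inl b) ↔ γ.SameCycle a b := by
  constructor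
  · rintro ⟨j, hj⟩
    rw [sumCongr_zpow] at hj
    exact ⟨j, by simpa using hj⟩
  · rintro ⟨j, hj⟩
    exact ⟨j, by rw [sumCongr_zpow]; simp [hj]⟩

lemma sameCycle_sum_inr {γ : Perm ι} {δ : Perm κ} {a b : κ} :
    Equiv.Perm.SameCycle (Equiv.sumCongr γ δ) (.inr a) (.inr b) ↔ δ.SameCycle a b := by
  constructor
  · rintro ⟨j, hj⟩
    rw [sumCongr_zpow] at hj
    exact ⟨j, by simpa using hj⟩
  · rintro ⟨j, hj⟩
    exact ⟨j, by rw [sumCongr_zpow]; simp [hj]⟩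

lemma not_sameCycle_sum_inl_inr {γ : Perm ι} {δ : Perm κ} {a : ι} {b : κ} :
    ¬ Equiv.Perm.SameCycle (Equiv.sumCongr γ δ) (.inl a) (.inr b) := by
  rintro ⟨j, hj⟩
  rw [sumCongr_zpow] at hj
  simp at hj

end S2


section S3
variable {ι κ : Type*}

lemma ccAux_sumCongr [Finite ι] [Finite κ] (γ : Perm ι) (δ : Perm κ) :
    ccAux (Equiv.sumCongr γ δ) = ccAux γ + ccAux δ := by
  have e : Quotient (SameCycle.setoid (Equiv.sumCongr γ δ)) ≃
      Quotient (SameCycle.setoid γ) ⊕ Quotient (SameCycle.setoid δ) := by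
    refine ⟨Quotient.lift (Sum.elim (fun a => Sum.inl (Quotient.mk (SameCycle.setoid γ) a))
        (fun b => Sum.inr (Quotient.mk (SameCycle.setoid δ) b))) ?_,
      Sum.elim (Quotient.lift (fun a => Quotient.mk (SameCycle.setoid (Equiv.sumCongr γ δ)) (Sum.inl a)) ?_)
        (Quotient.lift (fun b => Quotient.mk (SameCycle.setoid (Equiv.sumCongr γ δ)) (Sum.inr b)) ?_),
      ?_, ?_⟩
    · rintro (a | a) (b | b) h
      · exact congrArg Sum.inl (Quotient.sound (sameCycle_sum_inl.mp h))
      · exact absurd h not_sameCycle_sum_inl_inr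
      · exact absurd (Equiv.Perm.SameCycle.symm h) not_sameCycle_sum_inl_inr
      · exact congrArg Sum.inr (Quotient.sound (sameCycle_sum_inr.mp h))
    · intro a b h
      exact Quotient.sound (sameCycle_sum_inl.mpr h)
    · intro a b h
      exact Quotient.sound (sameCycle_sum_inr.mpr h)
    · intro q
      induction q using Quotient.ind with
      | _ z => rcases z with a | b <;> rfl
    · rintro (q | q) <;> induction q using Quotient.ind <;> rfl
  rw [ccAux, Nat.card_congr e, Nat.card_sum]
  rfl

lemma ccAux_insert [Finite ι] [DecidableEq ι] (β : Perm ι) (x : ι) :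
    ccAux (Equiv.swap none (some (β x)) * β.optionCongr : Perm (Option ι)) = ccAux β := by
  haveI : Finite (Option ι) := Finite.of_equiv (ι ⊕ (PUnit : Type)) (Equiv.optionEquivSumPUnit ι).symm
  set α : Perm (Option ι) := Equiv.swap none (some (β x)) * β.optionCongr with hα
  have hA1 : ∀ y : ι, y ≠ x → α (some y) = some (β y) := by
    intro y h
    have h1 : (some (β y) : Option ι) ≠ none := by simp
    have h2 : (some (β y) : Option ι) ≠ some (β x) := by
      simp only [ne_eq, Option.some.injEq]
      exact fun hc => h (β.injective hc)
    simp [hα, Equiv.Perm.mul_apply, Equiv.swap_apply_of_ne_of_ne h1 h2]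
  have hA2 : α (some x) = none := by
    simp [hα, Equiv.Perm.mul_apply]
  have hA3 : α none = some (β x) := by
    simp [hα, Equiv.Perm.mul_apply]
  have step : ∀ z, Quotient.mk (SameCycle.setoid β) ((α z).getD x)
      = Quotient.mk (SameCycle.setoid β) (z.getD x) := by
    rintro (_ | y)
    · rw [hA3]
      exact Quotient.sound (Equiv.Perm.SameCycle.symm ⟨1, rfl⟩)
    · by_cases h : y = x
      · subst h; rw [hA2]; rfl
      · rw [hA1 y h]
        exact Quotient.sound (Equiv.Perm.SameCycle.symm ⟨1, rfl⟩)
  have pow_step : ∀ (i : ℕ) z, Quotient.mk (SameCycle.setoid β) (((α ^ i) z).getD x)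
      = Quotient.mk (SameCycle.setoid β) (z.getD x) := by
    intro i
    induction i with
    | zero => intro z; rfl
    | succ i ih =>
      intro z
      have h1 : (α ^ (i+1)) z = (α ^ i) (α z) := by
        rw [pow_succ, Equiv.Perm.mul_apply]
      rw [h1, ih (α z), step z]
  have wdG : ∀ z w, Equiv.Perm.SameCycle α z w →
      Quotient.mk (SameCycle.setoid β) (z.getD x) = Quotient.mk (SameCycle.setoid β) (w.getD x) := by
    intro z w h
    obtain ⟨i, _, hi⟩ := h.exists_pow_eq'
    rw [← hi, pow_step i z]
  have hfor : ∀ y : ι, Equiv.Perm.SameCycle α (some y) (some (β y)) := by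
    intro y
    by_cases h : y = x
    · subst h
      refine ⟨2, ?_⟩
      show (α ^ (2:ℤ)) (some y) = some (β y)
      rw [zpow_two, Equiv.Perm.mul_apply, hA2, hA3]
    · exact ⟨1, by simpa using hA1 y h⟩
  have hfor2 : ∀ (i : ℕ) (y : ι), Quotient.mk (SameCycle.setoid α) (some y)
      = Quotient.mk (SameCycle.setoid α) (some ((β ^ i) y)) := by
    intro i
    induction i with
    | zero => intro y; rfl
    | succ i ih =>
      intro y
      have h1 : (β ^ (i+1)) y = β ((β ^ i) y) := by
        rw [pow_succ', Equiv.Perm.mul_apply]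
      rw [h1]
      exact (ih y).trans (Quotient.sound (hfor ((β ^ i) y)))
  have wdH : ∀ y w, Equiv.Perm.SameCycle β y w →
      Quotient.mk (SameCycle.setoid α) (some y) = Quotient.mk (SameCycle.setoid α) (some w) := by
    intro y w h
    obtain ⟨i, _, hi⟩ := h.exists_pow_eq'
    rw [← hi]
    exact hfor2 i y
  have e : Quotient (SameCycle.setoid α) ≃ Quotient (SameCycle.setoid β) := by
    refine ⟨Quotient.lift (fun z => Quotient.mk (SameCycle.setoid β) (z.getD x))
        (fun z w h => wdG z w h),
      Quotient.lift (fun y => Quotient.mk (SameCycle.setoid α) (some y))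
        (fun y w h => wdH y w h), ?_, ?_⟩
    · intro q
      induction q using Quotient.ind with
      | _ z =>
        rcases z with _ | y
        · refine Quotient.sound ?_
          show Equiv.Perm.SameCycle α (some x) none
          exact ⟨1, by simpa using hA2⟩
        · rfl
    · intro q
      induction q using Quotient.ind with
      | _ y => rfl
  rw [ccAux, ccAux, Nat.card_congr e]

noncomputable def fixOrCycle [Fintype ι] [DecidableEq ι] (σ : Perm ι) (a : ι) :
    (↥σ.cycleFactorsFinset ⊕ {x : ι // σ x = x}) :=
  if h : σ a = a then Sum.inr ⟨a, h⟩
  else Sum.inl ⟨σ.cycleOf a, Equiv.Perm.cycleOf_mem_cycleFactorsFinset_iff.mpr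
    (Equiv.Perm.mem_support.mpr h)⟩

lemma cycleType_card_add_fixed [Fintype ι] [DecidableEq ι] (σ : Perm ι) :
    σ.cycleType.card + Nat.card {x : ι // σ x = x} = ccAux σ := by
  classical
  have hct : σ.cycleType.card = σ.cycleFactorsFinset.card := by
    rw [Equiv.Perm.cycleType_def, Multiset.card_map]
    rfl
  have wd : ∀ a b, Equiv.Perm.SameCycle σ a b → fixOrCycle σ a = fixOrCycle σ b := by
    intro a b h
    have hiff := h.apply_eq_self_iff
    by_cases ha : σ a = a
    · have : a = b := h.eq_of_left ha
      subst this; rfl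
    · have hb : ¬ σ b = b := fun hb => ha (hiff.mpr hb)
      rw [fixOrCycle, fixOrCycle, dif_neg ha, dif_neg hb]
      exact congrArg Sum.inl (Subtype.ext h.cycleOf_eq)
  have e : Quotient (SameCycle.setoid σ) ≃ (↥σ.cycleFactorsFinset ⊕ {x : ι // σ x = x}) := by
    refine Equiv.ofBijective (Quotient.lift (fixOrCycle σ) wd) ⟨?_, ?_⟩
    · intro q r
      induction q using Quotient.ind with
      | _ a =>
        induction r using Quotient.ind with
        | _ b =>
          intro hab
          simp only [Quotient.lift_mk] at hab
          refine Quotient.sound ?_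
          by_cases ha : σ a = a <;> by_cases hb : σ b = b
          · rw [fixOrCycle, fixOrCycle, dif_pos ha, dif_pos hb] at hab
            have : a = b := by
              have := Sum.inr.inj hab
              exact congrArg Subtype.val this
            exact this ▸ Equiv.Perm.SameCycle.refl σ a
          · rw [fixOrCycle, fixOrCycle, dif_pos ha, dif_neg hb] at hab
            exact absurd hab (by simp)
          · rw [fixOrCycle, fixOrCycle, dif_neg ha, dif_pos hb] at hab
            exact absurd hab (by simp)
          · rw [fixOrCycle, fixOrCycle, dif_neg ha, dif_neg hb] at hab
            have hc : σ.cycleOf a = σ.cycleOf b := congrArg Subtype.val (Sum.inl.inj hab)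
            have hbmem : b ∈ (σ.cycleOf b).support :=
              Equiv.Perm.mem_support_cycleOf_iff.mpr
                ⟨Equiv.Perm.SameCycle.refl σ b, Equiv.Perm.mem_support.mpr hb⟩
            rw [← hc] at hbmem
            exact (Equiv.Perm.mem_support_cycleOf_iff.mp hbmem).1
    · rintro (⟨cf, hcf⟩ | ⟨a, ha⟩)
      · obtain ⟨hc1, hc2⟩ := Equiv.Perm.mem_cycleFactorsFinset_iff.mp hcf
        obtain ⟨a, ha⟩ := hc1.nonempty_support
        have hsa : σ a ≠ a := by
          rw [← hc2 a ha]
          exact Equiv.Perm.mem_support.mp ha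
        refine ⟨Quotient.mk _ a, ?_⟩
        simp only [Quotient.lift_mk]
        rw [fixOrCycle, dif_neg hsa]
        exact congrArg Sum.inl (Subtype.ext (Equiv.Perm.cycle_is_cycleOf ha hcf).symm)
      · refine ⟨Quotient.mk _ a, ?_⟩
        simp only [Quotient.lift_mk]
        rw [fixOrCycle, dif_pos ha]
  rw [ccAux, Nat.card_congr e, Nat.card_sum, hct]
  congr 1
  rw [Nat.card_eq_fintype_card, Fintype.card_coe]

end S3

section Stage3

lemma cycleCount_eq_ccAux {n : ℕ} (σ : Perm (Fin n)) : cycleCount σ = ccAux σ :=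
  cycleType_card_add_fixed σ

/-- Insert a new largest element into the cycle of `x`, right after `x`. -/
noncomputable def ins (m : ℕ) (x : Fin m) (β : Perm (Fin m)) : Perm (Fin (m+1)) :=
  (finSuccEquivLast.symm).permCongr (Equiv.Perm.decomposeOption.symm (some (β x), β))

lemma ins_eq (m : ℕ) (x : Fin m) (β : Perm (Fin m)) :
    ins m x β = (finSuccEquivLast.symm).permCongr
      (Equiv.swap none (some (β x)) * β.optionCongr) := rfl

lemma ccAux_ins (m : ℕ) (x : Fin m) (β : Perm (Fin m)) : ccAux (ins m x β) = ccAux β := by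
  rw [ins_eq, ccAux_permCongr, ccAux_insert]

lemma ins_apply_castSucc_ne (m : ℕ) (x y : Fin m) (β : Perm (Fin m)) (h : y ≠ x) :
    ins m x β y.castSucc = (β y).castSucc := by
  rw [ins_eq]
  simp only [Equiv.permCongr_apply, Equiv.symm_symm, finSuccEquivLast_castSucc,
    Equiv.Perm.mul_apply]
  have h2 : (some (β y) : Option (Fin m)) ≠ some (β x) := by
    simp only [ne_eq, Option.some.injEq]
    exact fun hc => h (β.injective hc)
  rw [show (β.optionCongr) (some y) = some (β y) by simp,
    Equiv.swap_apply_of_ne_of_ne (by simp) h2, finSuccEquivLast_symm_some]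

lemma ins_apply_castSucc_eq (m : ℕ) (x : Fin m) (β : Perm (Fin m)) :
    ins m x β x.castSucc = Fin.last m := by
  rw [ins_eq]
  simp only [Equiv.permCongr_apply, Equiv.symm_symm, finSuccEquivLast_castSucc,
    Equiv.Perm.mul_apply]
  rw [show (β.optionCongr) (some x) = some (β x) by simp, Equiv.swap_apply_right,
    finSuccEquivLast_symm_none]

lemma ins_apply_last (m : ℕ) (x : Fin m) (β : Perm (Fin m)) :
    ins m x β (Fin.last m) = (β x).castSucc := by
  rw [ins_eq]
  simp only [Equiv.permCongr_apply, Equiv.symm_symm, finSuccEquivLast_last,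
    Equiv.Perm.mul_apply]
  rw [show (β.optionCongr) none = none by simp, Equiv.swap_apply_left,
    finSuccEquivLast_symm_some]

/-- `β` maps the initial segment of length `q` into itself. -/
def InvP {m : ℕ} (β : Perm (Fin m)) (q : ℕ) : Prop :=
  ∀ i : Fin m, (i : ℕ) < q → ((β i : ℕ) < q)

lemma indec_ins_iff (m : ℕ) (x : Fin m) (β : Perm (Fin m)) (hm : 1 ≤ m) :
    Indecomposable (ins m x β) ↔ ∀ q, 1 ≤ q → q < m → InvP β q → (x : ℕ) < q := by
  constructor
  · intro h q h1 h2 hInv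
    obtain ⟨i, hi1, hi2⟩ := h q h1 (by omega)
    have hiq : (i : ℕ) < m := lt_trans hi1 h2
    set j : Fin m := ⟨i.1, hiq⟩ with hj
    have hij : i = j.castSucc := by
      apply Fin.ext
      rfl
    by_cases hx : j = x
    · rw [← hx]
      simpa [hj] using hi1
    · exfalso
      rw [hij, ins_apply_castSucc_ne m x j β hx] at hi2
      have := hInv j (by simpa [hj] using hi1)
      simp only [Fin.coe_castSucc] at hi2
      omega
  · intro hC p h1 h2
    have hpm : p ≤ m := by omega
    by_cases hxp : (x : ℕ) < p
    · refine ⟨x.castSucc, by simpa using hxp, ?_⟩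
      rw [ins_apply_castSucc_eq]
      simpa using hpm
    · have hpm' : p < m := by
        have := x.isLt
        omega
      have hnInv : ¬ InvP β p := fun hInv => hxp (hC p h1 hpm' hInv)
      simp only [InvP, not_forall, not_lt] at hnInv
      obtain ⟨j, hj1, hj2⟩ := hnInv
      have hjx : j ≠ x := by
        intro hc
        subst hc
        omega
      refine ⟨j.castSucc, by simpa using hj1, ?_⟩
      rw [ins_apply_castSucc_ne m x j β hjx]
      simpa using hj2

lemma card_stage1 (m k : ℕ) (hm : 1 ≤ m) :
    Nat.card {α : Perm (Fin (m+1)) // Indecomposable α ∧ cycleCount α = k} =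
    Nat.card {xβ : Fin m × Perm (Fin m) //
      (∀ q, 1 ≤ q → q < m → InvP xβ.2 q → (xβ.1 : ℕ) < q) ∧ ccAux xβ.2 = k} := by
  refine (Nat.card_congr (Equiv.ofBijective
    (fun z : {xβ : Fin m × Perm (Fin m) //
      (∀ q, 1 ≤ q → q < m → InvP xβ.2 q → (xβ.1 : ℕ) < q) ∧ ccAux xβ.2 = k} =>
      (⟨ins m z.1.1 z.1.2, (indec_ins_iff m z.1.1 z.1.2 hm).mpr z.2.1, by
        rw [cycleCount_eq_ccAux, ccAux_ins]; exact z.2.2⟩ :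
        {α : Perm (Fin (m+1)) // Indecomposable α ∧ cycleCount α = k}))
    ⟨?_, ?_⟩)).symm
  · rintro ⟨⟨x, β⟩, h⟩ ⟨⟨x', β'⟩, h'⟩ hins
    have h0 : ins m x β = ins m x' β' := congrArg Subtype.val hins
    rw [ins, ins] at h0
    have h1 := finSuccEquivLast.symm.permCongr.injective h0
    have h2 := Equiv.Perm.decomposeOption.symm.injective h1
    have hβ : β = β' := congrArg Prod.snd h2
    subst hβ
    have hx : β x = β x' := by
      have := congrArg Prod.fst h2
      simpa using this
    have hxx : x = x' := β.injective hx
    subst hxx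
    rfl
  · rintro ⟨α, hα1, hα2⟩
    have hlast : α (Fin.last m) ≠ Fin.last m := by
      obtain ⟨i, hi1, hi2⟩ := hα1 m hm (by omega)
      have hAi : α i = Fin.last m := by
        apply Fin.ext
        have := (α i).isLt
        simp only [Fin.val_last]
        omega
      intro hc
      have h3 : α i = α (Fin.last m) := by rw [hAi, hc]
      have h4 := α.injective h3
      rw [h4] at hi1
      simp at hi1
    set α' : Perm (Option (Fin m)) := finSuccEquivLast.permCongr α with hα'
    have hnone : α' none ≠ none := by
      rw [hα']
      simp only [Equiv.permCongr_apply, finSuccEquivLast_symm_none]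
      intro hc
      apply hlast
      have : α (Fin.last m) = finSuccEquivLast.symm none := by
        rw [← hc]
        simp
      simpa using this
    obtain ⟨w, hw⟩ : ∃ w, α' none = some w := by
      cases h : α' none with
      | none => exact absurd h hnone
      | some w => exact ⟨w, rfl⟩
    set β : Perm (Fin m) := Equiv.removeNone α' with hβ
    set x : Fin m := β⁻¹ w with hx
    have hdec : Equiv.Perm.decomposeOption α' = (some w, β) := by
      rw [Equiv.Perm.decomposeOption_apply, hw]
    have hins : ins m x β = α := by
      rw [ins]
      have hβx : β x = w := by rw [hx]; simp
      rw [hβx, ← hdec, Equiv.symm_apply_apply, hα']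
      ext i
      simp
    refine ⟨⟨⟨x, β⟩, ?_, ?_⟩, ?_⟩
    · exact (indec_ins_iff m x β hm).mp (by rw [hins]; exact hα1)
    · rw [← ccAux_ins m x β, hins, ← cycleCount_eq_ccAux]
      exact hα2
    · exact Subtype.ext hins

end Stage3

section Stage4

variable {m : ℕ}

/-- The minimal invariant prefix length (the size of the first block). -/
noncomputable def mp (β : Perm (Fin m)) : ℕ := sInf {q | 1 ≤ q ∧ InvP β q}

lemma invP_all (β : Perm (Fin m)) : InvP β m := fun i _ => (β i).isLt

lemma mp_mem (hm : 1 ≤ m) (β : Perm (Fin m)) : 1 ≤ mp β ∧ InvP β (mp β) :=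
  Nat.sInf_mem (⟨m, hm, invP_all β⟩ : Set.Nonempty {q | 1 ≤ q ∧ InvP β q})

lemma mp_min (β : Perm (Fin m)) {q : ℕ} (h1 : 1 ≤ q) (h2 : InvP β q) : mp β ≤ q :=
  Nat.sInf_le ⟨h1, h2⟩

lemma mp_le (hm : 1 ≤ m) (β : Perm (Fin m)) : mp β ≤ m := mp_min β hm (invP_all β)

lemma C_iff (hm : 1 ≤ m) (x : Fin m) (β : Perm (Fin m)) :
    (∀ q, 1 ≤ q → q < m → InvP β q → (x : ℕ) < q) ↔ (x : ℕ) < mp β := by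
  constructor
  · intro hC
    by_cases h : mp β < m
    · exact hC (mp β) (mp_mem hm β).1 h (mp_mem hm β).2
    · have := mp_le hm β
      have := x.isLt
      omega
  · intro hx q h1 _ hq
    exact lt_of_lt_of_le hx (mp_min β h1 hq)

/-- Glue an equivalence between `Fin p ⊕ Fin (m-p)` and `Fin m`. -/
def blkE (p : ℕ) (h : p ≤ m) : Fin p ⊕ Fin (m - p) ≃ Fin m :=
  finSumFinEquiv.trans (finCongr (by omega))

lemma blkE_inl_val (p : ℕ) (h : p ≤ m) (i : Fin p) :
    ((blkE p h).toFun (Sum.inl i) : ℕ) = (i : ℕ) := by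
  simp [blkE]

lemma blkE_inr_val (p : ℕ) (h : p ≤ m) (j : Fin (m - p)) :
    ((blkE p h).toFun (Sum.inr j) : ℕ) = p + (j : ℕ) := by
  simp [blkE]

lemma blkE_symm_lt (p : ℕ) (h : p ≤ m) (i : Fin m) (hi : (i : ℕ) < p) :
    (blkE p h).symm i = Sum.inl ⟨(i : ℕ), hi⟩ := by
  apply (blkE p h).injective
  rw [Equiv.apply_symm_apply]
  apply Fin.ext
  exact (blkE_inl_val p h ⟨(i : ℕ), hi⟩).symm

lemma blkE_symm_ge (p : ℕ) (h : p ≤ m) (i : Fin m) (hi : p ≤ (i : ℕ)) :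
    (blkE p h).symm i = Sum.inr ⟨(i : ℕ) - p, by have := i.isLt; omega⟩ := by
  apply (blkE p h).injective
  rw [Equiv.apply_symm_apply]
  apply Fin.ext
  rw [show ((blkE p h) (Sum.inr ⟨(i : ℕ) - p, by have := i.isLt; omega⟩) : ℕ)
    = p + ((i : ℕ) - p) from blkE_inr_val p h _]
  omega

/-- Build a permutation of `Fin m` from a block permutation on the first `p`
elements and one on the rest. -/
noncomputable def blk (p : ℕ) (h : p ≤ m) (γ : Perm (Fin p)) (δ : Perm (Fin (m - p))) :
    Perm (Fin m) :=
  (blkE p h).permCongr (Equiv.sumCongr γ δ)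

lemma ccAux_blk (p : ℕ) (h : p ≤ m) (γ : Perm (Fin p)) (δ : Perm (Fin (m - p))) :
    ccAux (blk p h γ δ) = ccAux γ + ccAux δ := by
  rw [blk, ccAux_permCongr, ccAux_sumCongr]

lemma blk_apply_lt (p : ℕ) (h : p ≤ m) (γ : Perm (Fin p)) (δ : Perm (Fin (m - p)))
    (i : Fin m) (hi : (i : ℕ) < p) :
    ((blk p h γ δ) i : ℕ) = (γ ⟨(i : ℕ), hi⟩ : ℕ) := by
  rw [blk, Equiv.permCongr_apply, blkE_symm_lt p h i hi]
  exact blkE_inl_val p h _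

lemma blk_apply_ge (p : ℕ) (h : p ≤ m) (γ : Perm (Fin p)) (δ : Perm (Fin (m - p)))
    (i : Fin m) (hi : p ≤ (i : ℕ)) :
    ((blk p h γ δ) i : ℕ) = p + (δ ⟨(i : ℕ) - p, by have := i.isLt; omega⟩ : ℕ) := by
  rw [blk, Equiv.permCongr_apply, blkE_symm_ge p h i hi]
  exact blkE_inr_val p h _

lemma invP_blk (p : ℕ) (h : p ≤ m) (γ : Perm (Fin p)) (δ : Perm (Fin (m - p))) :
    InvP (blk p h γ δ) p := by
  intro i hi
  rw [blk_apply_lt p h γ δ i hi]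
  exact (γ ⟨(i : ℕ), hi⟩).isLt

lemma invP_blk_iff (p : ℕ) (h : p ≤ m) (γ : Perm (Fin p)) (δ : Perm (Fin (m - p)))
    (q : ℕ) (hq : q ≤ p) :
    InvP (blk p h γ δ) q ↔ ∀ i : Fin p, (i : ℕ) < q → ((γ i : ℕ) < q) := by
  constructor
  · intro hI i hi
    have hiq : (i : ℕ) < p := lt_of_lt_of_le hi hq
    set j : Fin m := (blkE p h).toFun (Sum.inl i) with hj
    have hjv : (j : ℕ) = (i : ℕ) := blkE_inl_val p h i
    have := hI j (by omega)
    rw [blk_apply_lt p h γ δ j (by omega)] at this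
    have hcast : (⟨(j : ℕ), by omega⟩ : Fin p) = i := by
      apply Fin.ext
      simpa using hjv
    rwa [hcast] at this
  · intro hG i hi
    have hip : (i : ℕ) < p := lt_of_lt_of_le hi hq
    rw [blk_apply_lt p h γ δ i hip]
    exact hG _ (by simpa using hi)

lemma mp_blk_iff (p : ℕ) (hp : 1 ≤ p) (h : p ≤ m) (γ : Perm (Fin p)) (δ : Perm (Fin (m - p))) :
    mp (blk p h γ δ) = p ↔ Indecomposable γ := by
  have hle : mp (blk p h γ δ) ≤ p := mp_min _ hp (invP_blk p h γ δ)
  have hm1 : 1 ≤ m := le_trans hp h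
  constructor
  · intro hmp q h1 h2
    by_contra hc
    push_neg at hc
    have hG : ∀ i : Fin p, (i : ℕ) < q → ((γ i : ℕ) < q) := by
      intro i hi
      have := hc i hi
      omega
    have : mp (blk p h γ δ) ≤ q := mp_min _ h1 ((invP_blk_iff p h γ δ q (le_of_lt h2)).mpr hG)
    omega
  · intro hInd
    rcases Nat.lt_or_ge (mp (blk p h γ δ)) p with hlt | hge
    · exfalso
      have h1 := (mp_mem hm1 (blk p h γ δ)).1
      have h2 := (mp_mem hm1 (blk p h γ δ)).2
      have hG := (invP_blk_iff p h γ δ _ (le_of_lt hlt)).mp h2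
      obtain ⟨i, hi1, hi2⟩ := hInd _ h1 hlt
      have := hG i hi1
      omega
    · omega

lemma blk_injective (p : ℕ) (h : p ≤ m) (γ γ' : Perm (Fin p)) (δ δ' : Perm (Fin (m - p)))
    (heq : blk p h γ δ = blk p h γ' δ') : γ = γ' ∧ δ = δ' := by
  rw [blk, blk] at heq
  have h2 := (blkE p h).permCongr.injective heq
  constructor
  · ext i
    have := congrArg (fun (σ : Perm (Fin p ⊕ Fin (m-p))) => σ (Sum.inl i)) h2
    simpa using congrArg (fun z => (Sum.elim Fin.val (fun (t : Fin (m-p)) => (0:ℕ)) z)) this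
  · ext j
    have := congrArg (fun (σ : Perm (Fin p ⊕ Fin (m-p))) => σ (Sum.inr j)) h2
    simpa using congrArg (fun z => (Sum.elim (fun (t : Fin p) => (0:ℕ)) Fin.val z)) this

lemma exists_blk (p : ℕ) (h : p ≤ m) (β : Perm (Fin m)) (hβ : InvP β p) :
    ∃ γ δ, β = blk p h γ δ := by
  classical
  set e := blkE p h with he
  have hf : Function.Injective (fun i : Fin p =>
      (⟨(β (e.toFun (Sum.inl i)) : ℕ), hβ _ (by rw [he, blkE_inl_val]; exact i.isLt)⟩ : Fin p)) := by
    intro i i' hii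
    have h1 := congrArg Fin.val hii
    dsimp only at h1
    have h2 : β (e.toFun (Sum.inl i)) = β (e.toFun (Sum.inl i')) := Fin.ext h1
    have h3 := β.injective h2
    have h4 : ((e.toFun (Sum.inl i)) : ℕ) = ((e.toFun (Sum.inl i')) : ℕ) := congrArg Fin.val h3
    rw [he, blkE_inl_val, blkE_inl_val] at h4
    exact Fin.ext h4
  have hfb := (Finite.injective_iff_bijective).mp hf
  have hcomp : ∀ i : Fin m, p ≤ (i : ℕ) → p ≤ ((β i) : ℕ) := by
    intro i hi
    by_contra hc
    push_neg at hc
    obtain ⟨i', hi'⟩ := hfb.2 ⟨(β i : ℕ), hc⟩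
    have h1 := congrArg Fin.val hi'
    dsimp only at h1
    have h2 : β (e.toFun (Sum.inl i')) = β i := Fin.ext h1
    have h3 := β.injective h2
    have h4 := congrArg Fin.val h3
    rw [he, blkE_inl_val] at h4
    have := i'.isLt
    omega
  have hg : Function.Injective (fun j : Fin (m-p) =>
      (⟨(β (e.toFun (Sum.inr j)) : ℕ) - p, by
        have h5 := (β (e.toFun (Sum.inr j))).isLt
        have h6 := hcomp (e.toFun (Sum.inr j)) (by rw [he, blkE_inr_val]; omega)
        omega⟩ : Fin (m - p))) := by
    intro j j' hjj
    have h1 := congrArg Fin.val hjj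
    dsimp only at h1
    have h5 := hcomp (e.toFun (Sum.inr j)) (by rw [he, blkE_inr_val]; omega)
    have h6 := hcomp (e.toFun (Sum.inr j')) (by rw [he, blkE_inr_val]; omega)
    have h2 : β (e.toFun (Sum.inr j)) = β (e.toFun (Sum.inr j')) := Fin.ext (by omega)
    have h3 := β.injective h2
    have h4 := congrArg Fin.val h3
    rw [he, blkE_inr_val, blkE_inr_val] at h4
    exact Fin.ext (by omega)
  have hgb := (Finite.injective_iff_bijective).mp hg
  refine ⟨Equiv.ofBijective _ hfb, Equiv.ofBijective _ hgb, ?_⟩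
  ext i
  rcases Nat.lt_or_ge (i : ℕ) p with hi | hi
  · rw [blk_apply_lt p h _ _ i hi]
    simp only [Equiv.ofBijective_apply]
    have h0 : e.toFun (Sum.inl (⟨(i : ℕ), hi⟩ : Fin p)) = i := Fin.ext (by rw [he, blkE_inl_val])
    rw [h0]
  · rw [blk_apply_ge p h _ _ i hi]
    simp only [Equiv.ofBijective_apply]
    have h0 : e.toFun (Sum.inr (⟨(i : ℕ) - p, by have := i.isLt; omega⟩ : Fin (m - p))) = i := by
      apply Fin.ext
      rw [he, blkE_inr_val]
      show p + ((i : ℕ) - p) = (i : ℕ)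
      omega
    rw [h0]
    have := hcomp i hi
    show (β i : ℕ) = p + ((β i : ℕ) - p)
    omega

end Stage4

section Stage5

lemma card_fiber_sum {A : Type*} [Fintype A] (P : A → Prop) (g : A → ℕ) (t : Finset ℕ)
    (h : ∀ a, P a → g a ∈ t) :
    Nat.card {a : A // P a} = ∑ p ∈ t, Nat.card {a : A // P a ∧ g a = p} := by
  classical
  simp_rw [Nat.card_eq_fintype_card, Fintype.card_subtype]
  rw [Finset.card_eq_sum_card_fiberwise (f := g) (t := t)
    (fun a ha => h a (by simpa using ha))]
  refine Finset.sum_congr rfl fun p hp => ?_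
  rw [Finset.filter_filter]

lemma ccAux_pos {p : ℕ} (hp : 1 ≤ p) (γ : Perm (Fin p)) : 1 ≤ ccAux γ := by
  have h1 : Nonempty (Fin p) := ⟨⟨0, hp⟩⟩
  have h2 : Nonempty (Quotient (SameCycle.setoid γ)) :=
    Nonempty.map (Quotient.mk (SameCycle.setoid γ)) h1
  exact Nat.one_le_iff_ne_zero.mpr (Nat.card_ne_zero.mpr ⟨h2, inferInstance⟩)

lemma ccAux_le_card {p : ℕ} (γ : Perm (Fin p)) : ccAux γ ≤ p := by
  have h1 : Nat.card (Quotient (SameCycle.setoid γ)) ≤ Nat.card (Fin p) :=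
    Nat.card_le_card_of_surjective (Quotient.mk (SameCycle.setoid γ))
      (fun q => Quotient.exists_rep q)
  have h2 : Nat.card (Fin p) = p := by rw [Nat.card_eq_fintype_card, Fintype.card_fin]
  rw [h2] at h1
  exact h1

lemma c_eq_ccAux (p i : ℕ) :
    c p i = Nat.card {γ : Perm (Fin p) // Indecomposable γ ∧ ccAux γ = i} :=
  Nat.card_congr (Equiv.subtypeEquivRight fun γ => by rw [cycleCount_eq_ccAux])

lemma s_eq_ccAux (p i : ℕ) :
    s p i = Nat.card {γ : Perm (Fin p) // ccAux γ = i} :=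
  Nat.card_congr (Equiv.subtypeEquivRight fun γ => by rw [cycleCount_eq_ccAux])

lemma card_stage2 (p m k : ℕ) (hp : 1 ≤ p) (h : p ≤ m) :
    Nat.card {β : Perm (Fin m) // mp β = p ∧ ccAux β = k} =
    Nat.card {γδ : Perm (Fin p) × Perm (Fin (m - p)) //
      Indecomposable γδ.1 ∧ ccAux γδ.1 + ccAux γδ.2 = k} := by
  have hm : 1 ≤ m := le_trans hp h
  refine (Nat.card_congr (Equiv.ofBijective
    (fun z : {γδ : Perm (Fin p) × Perm (Fin (m - p)) //
        Indecomposable γδ.1 ∧ ccAux γδ.1 + ccAux γδ.2 = k} =>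
      (⟨blk p h z.1.1 z.1.2, (mp_blk_iff p hp h _ _).mpr z.2.1, by
        rw [ccAux_blk]; exact z.2.2⟩ :
        {β : Perm (Fin m) // mp β = p ∧ ccAux β = k}))
    ⟨?_, ?_⟩)).symm
  · rintro ⟨⟨γ, δ⟩, hz⟩ ⟨⟨γ', δ'⟩, hz'⟩ heq
    have h0 : blk p h γ δ = blk p h γ' δ' := congrArg Subtype.val heq
    obtain ⟨h1, h2⟩ := blk_injective p h γ γ' δ δ' h0
    subst h1; subst h2; rfl
  · rintro ⟨β, h1, h2⟩
    have hInv : InvP β p := by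
      have := (mp_mem hm β).2
      rwa [h1] at this
    obtain ⟨γ, δ, hblk⟩ := exists_blk p h β hInv
    refine ⟨⟨⟨γ, δ⟩, ?_, ?_⟩, Subtype.ext hblk.symm⟩
    · exact (mp_blk_iff p hp h γ δ).mp (by rw [← hblk]; exact h1)
    · rw [← ccAux_blk p h γ δ, ← hblk]; exact h2

theorem indec_stirling_recurrence2 (n k : ℕ) (hn : 1 < n) (hk1 : 1 ≤ k) (hk2 : k ≤ n) :
    c n k =
      ∑ p ∈ Finset.Icc 1 (n - 1), ∑ i ∈ Finset.Icc 1 (min k p),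
        p * c p i * s (n - p - 1) (k - i) := by
  classical
  obtain ⟨m, rfl⟩ : ∃ m, n = m + 1 := ⟨n - 1, by omega⟩
  have hm : 1 ≤ m := by omega
  have hL : c (m + 1) k
      = Nat.card {xβ : Fin m × Perm (Fin m) //
          ((xβ.1 : ℕ) < mp xβ.2 ∧ ccAux xβ.2 = k)} := by
    rw [c, card_stage1 m k hm]
    exact Nat.card_congr (Equiv.subtypeEquivRight fun xβ => by
      rw [C_iff hm xβ.1 xβ.2])
  rw [hL]
  rw [card_fiber_sum (fun xβ : Fin m × Perm (Fin m) => (xβ.1 : ℕ) < mp xβ.2 ∧ ccAux xβ.2 = k)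
    (fun xβ => mp xβ.2) (Finset.Icc 1 m)
    (fun xβ hxβ => Finset.mem_Icc.mpr ⟨(mp_mem hm xβ.2).1, mp_le hm xβ.2⟩)]
  rw [show m + 1 - 1 = m from rfl]
  refine Finset.sum_congr rfl fun p hp => ?_
  obtain ⟨hp1, hpm⟩ := Finset.mem_Icc.mp hp
  -- step 2 : split off the position x
  have e2 : {xβ : Fin m × Perm (Fin m) //
      ((xβ.1 : ℕ) < mp xβ.2 ∧ ccAux xβ.2 = k) ∧ mp xβ.2 = p} ≃
      Fin p × {β : Perm (Fin m) // mp β = p ∧ ccAux β = k} := by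
    refine ⟨fun z => (⟨(z.1.1 : ℕ), by
        obtain ⟨⟨h1, h2⟩, h3⟩ := z.2; omega⟩, ⟨z.1.2, z.2.2, z.2.1.2⟩),
      fun w => ⟨(⟨(w.1 : ℕ), by have := w.1.isLt; omega⟩, w.2.1), ?_⟩, ?_, ?_⟩
    · refine ⟨⟨?_, w.2.2.2⟩, w.2.2.1⟩
      have := w.1.isLt
      have := w.2.2.1
      simp only []
      omega
    · rintro ⟨⟨x, β⟩, hz⟩
      apply Subtype.ext
      apply Prod.ext
      · exact Fin.ext rfl
      · rfl
    · rintro ⟨y, ⟨β, hβ⟩⟩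
      apply Prod.ext
      · exact Fin.ext rfl
      · rfl
  rw [Nat.card_congr e2, Nat.card_prod, Nat.card_eq_fintype_card, Fintype.card_fin]
  rw [card_stage2 p m k hp1 hpm]
  -- step 4 : fiber over the number of cycles of the first block
  rw [card_fiber_sum (fun γδ : Perm (Fin p) × Perm (Fin (m - p)) =>
      Indecomposable γδ.1 ∧ ccAux γδ.1 + ccAux γδ.2 = k)
    (fun γδ => ccAux γδ.1) (Finset.Icc 1 (min k p))
    (fun γδ hγδ => Finset.mem_Icc.mpr ⟨ccAux_pos hp1 γδ.1,
      le_min (by have := hγδ.2; show ccAux γδ.1 ≤ k; omega) (ccAux_le_card γδ.1)⟩)]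
  rw [Finset.mul_sum]
  refine Finset.sum_congr rfl fun i hi => ?_
  obtain ⟨hi1, hi2⟩ := Finset.mem_Icc.mp hi
  have hik : i ≤ k := le_trans hi2 (min_le_left k p)
  -- step 5 : split the pair
  have e5 : {γδ : Perm (Fin p) × Perm (Fin (m - p)) //
      (Indecomposable γδ.1 ∧ ccAux γδ.1 + ccAux γδ.2 = k) ∧ ccAux γδ.1 = i} ≃
      {γ : Perm (Fin p) // Indecomposable γ ∧ ccAux γ = i} ×
      {δ : Perm (Fin (m - p)) // ccAux δ = k - i} := by
    refine ⟨fun z => (⟨z.1.1, z.2.1.1, z.2.2⟩, ⟨z.1.2, by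
        have h1 := z.2.1.2
        have h2 := z.2.2
        omega⟩),
      fun w => ⟨(w.1.1, w.2.1), ⟨⟨w.1.2.1, by
        have h1 := w.1.2.2
        have h2 := w.2.2
        show ccAux w.1.1 + ccAux w.2.1 = k
        omega⟩, w.1.2.2⟩⟩, ?_, ?_⟩
    · rintro ⟨⟨γ, δ⟩, hz⟩
      rfl
    · rintro ⟨⟨γ, hγ⟩, ⟨δ, hδ⟩⟩
      rfl
  rw [Nat.card_congr e5, Nat.card_prod, ← c_eq_ccAux, ← s_eq_ccAux]
  have harith : m + 1 - p - 1 = m - p := by omega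
  rw [harith, mul_assoc]

end Stage5
end

section
/- For every n ≥ 1, the number of pairs (σ,α) of permutations of {1,...,n} generating a transitive subgroup of S_n equals (n−1)! times the number of orbits of the action of the stabilizer subgroup {φ ∈ S_n : φ(n) = n} on the set of such transitive pairs, where φ acts by simultaneous conjugation (σ,α) ↦ (φ⁻¹σφ, φ⁻¹αφ). -/
/-- A pair of permutations of `{0,...,n-1}` is transitive (a labeled hypermap)
if the subgroup it generates acts transitively. -/
def IsTransitivePair {n : ℕ} (σ α : Equiv.Perm (Fin n)) : Prop :=
  ∀ x y : Fin n, ∃ g ∈ Subgroup.closure ({σ, α} : Set (Equiv.Perm (Fin n))), g x = y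

/-- Two pairs of permutations are related by a rooted isomorphism if some
permutation fixing the last element `n-1` conjugates the first pair to the second. -/
def RootedIso {n : ℕ} (P Q : Equiv.Perm (Fin n) × Equiv.Perm (Fin n)) : Prop :=
  ∃ φ : Equiv.Perm (Fin n), (∀ x : Fin n, (x : ℕ) + 1 = n → φ x = x) ∧
    φ⁻¹ * P.1 * φ = Q.1 ∧ φ⁻¹ * P.2 * φ = Q.2

namespace HypermapAux

open Equiv MulAction

variable {n : ℕ}

lemma isTransitivePair_conj (g : Perm (Fin n)) {σ α : Perm (Fin n)}
    (h : IsTransitivePair σ α) : IsTransitivePair (g * σ * g⁻¹) (g * α * g⁻¹) := by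
  intro x y
  obtain ⟨c, hc, hcx⟩ := h (g⁻¹ x) (g⁻¹ y)
  refine ⟨g * c * g⁻¹, ?_, ?_⟩
  · have himg : ({g * σ * g⁻¹, g * α * g⁻¹} : Set (Perm (Fin n)))
        = (MulAut.conj g).toMonoidHom '' {σ, α} := by
      rw [Set.image_pair]; simp
    rw [himg, ← MonoidHom.map_closure]
    exact ⟨c, hc, rfl⟩
  · rw [Equiv.Perm.mul_apply, Equiv.Perm.mul_apply, hcx]; simp

/-- The root: the last element of `Fin n`. -/
def root (n : ℕ) [NeZero n] : Fin n := ⟨n - 1, by have := NeZero.pos n; omega⟩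

lemma root_val_add_one (n : ℕ) [NeZero n] : ((root n : Fin n) : ℕ) + 1 = n := by
  have := NeZero.pos n
  simp only [root]
  omega

lemma eq_root {x : Fin n} [NeZero n] (hx : (x : ℕ) + 1 = n) : x = root n := by
  apply Fin.ext
  simp only [root]
  omega

/-- The stabilizer of the root inside the permutation group. -/
abbrev Stab (n : ℕ) [NeZero n] : Subgroup (Perm (Fin n)) :=
  MulAction.stabilizer (Perm (Fin n)) (root n)

/-- Transitive pairs. -/
abbrev TP (n : ℕ) := {P : Equiv.Perm (Fin n) × Equiv.Perm (Fin n) // IsTransitivePair P.1 P.2}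

variable [NeZero n]

instance : SMul (Stab n) (TP n) where
  smul g P := ⟨(g.1 * P.1.1 * g.1⁻¹, g.1 * P.1.2 * g.1⁻¹), isTransitivePair_conj _ P.2⟩

lemma smul_def (g : Stab n) (P : TP n) :
    g • P = ⟨(g.1 * P.1.1 * g.1⁻¹, g.1 * P.1.2 * g.1⁻¹), isTransitivePair_conj _ P.2⟩ := rfl

instance : MulAction (Stab n) (TP n) where
  one_smul P := by
    apply Subtype.ext
    simp [smul_def]
  mul_smul g h P := by
    apply Subtype.ext
    simp [smul_def, Prod.ext_iff, mul_assoc]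

lemma stab_root (g : Stab n) : g.1 (root n) = root n := g.2

/-- The action of the stabilizer on transitive pairs is free. -/
lemma smul_eq_self_imp (g : Stab n) (P : TP n) (h : g • P = P) : g = 1 := by
  have h1 : g.1 * P.1.1 * g.1⁻¹ = P.1.1 := congrArg (fun Q => Q.1.1) h
  have h2 : g.1 * P.1.2 * g.1⁻¹ = P.1.2 := congrArg (fun Q => Q.1.2) h
  have hcen : Subgroup.closure ({P.1.1, P.1.2} : Set (Perm (Fin n)))
      ≤ Subgroup.centralizer {g.1} := by
    rw [Subgroup.closure_le]
    rintro x (rfl | rfl) <;>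
    · rw [SetLike.mem_coe, Subgroup.mem_centralizer_iff]
      rintro h' rfl
      first
        | conv_rhs => rw [← h1]
        | conv_rhs => rw [← h2]
      group
  apply Subtype.ext
  apply Equiv.ext
  intro x
  obtain ⟨c, hc, hcr⟩ := P.2 (root n) x
  have hcomm : c * g.1 = g.1 * c := by
    have := hcen hc
    rw [Subgroup.mem_centralizer_iff] at this
    exact (this g.1 rfl).symm
  calc g.1 x = g.1 (c (root n)) := by rw [hcr]
    _ = (g.1 * c) (root n) := rfl
    _ = (c * g.1) (root n) := by rw [hcomm]
    _ = c (g.1 (root n)) := rfl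
    _ = c (root n) := by rw [stab_root]
    _ = x := hcr
  |>.trans (Equiv.Perm.one_apply x).symm

lemma rootedIso_iff (P Q : TP n) :
    RootedIso P.1 Q.1 ↔ MulAction.orbitRel (Stab n) (TP n) P Q := by
  rw [MulAction.orbitRel_apply, MulAction.mem_orbit_iff]
  constructor
  · rintro ⟨φ, hfix, hP1, hP2⟩
    have hφ : φ ∈ Stab n := by
      rw [MulAction.mem_stabilizer_iff]
      exact hfix _ (root_val_add_one n)
    refine ⟨⟨φ, hφ⟩, ?_⟩
    apply Subtype.ext
    rw [smul_def]
    have e1 : φ * Q.1.1 * φ⁻¹ = P.1.1 := by rw [← hP1]; group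
    have e2 : φ * Q.1.2 * φ⁻¹ = P.1.2 := by rw [← hP2]; group
    exact Prod.ext e1 e2
  · rintro ⟨g, hg⟩
    refine ⟨g.1, ?_, ?_, ?_⟩
    · intro x hx
      rw [eq_root hx]
      exact stab_root g
    · have := congrArg (fun R => R.1.1) hg
      simp only [smul_def] at this
      rw [← this]; group
    · have := congrArg (fun R => R.1.2) hg
      simp only [smul_def] at this
      rw [← this]; group

lemma card_stab : Nat.card (Stab n) = Nat.factorial (n - 1) := by
  classical
  have horb : MulAction.orbit (Perm (Fin n)) (root n) = Set.univ := by
    ext x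
    simp only [Set.mem_univ, iff_true, MulAction.mem_orbit_iff]
    exact ⟨Equiv.swap (root n) x, by simp [Equiv.Perm.smul_def]⟩
  have := MulAction.card_orbit_mul_card_stabilizer_eq_card_group (Perm (Fin n)) (root n)
  rw [Fintype.card_perm, Fintype.card_fin] at this
  have hcardorb : Fintype.card (MulAction.orbit (Perm (Fin n)) (root n)) = n := by
    rw [horb]
    rw [Fintype.card_eq_nat_card, Nat.card_congr (Equiv.Set.univ (Fin n)),
      Nat.card_eq_fintype_card, Fintype.card_fin]
  rw [hcardorb] at this
  have hpos := NeZero.pos n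
  rw [← Nat.mul_factorial_pred hpos.ne'] at this
  have h3 := Nat.eq_of_mul_eq_mul_left hpos this
  rw [Nat.card_eq_fintype_card]
  exact h3

end HypermapAux

theorem labeled_hypermaps_eq_factorial_mul_rooted (n : ℕ) (hn : 1 ≤ n) :
    Nat.card {P : Equiv.Perm (Fin n) × Equiv.Perm (Fin n) // IsTransitivePair P.1 P.2} =
      Nat.factorial (n - 1) *
        Nat.card (Quot (fun (P Q : {P : Equiv.Perm (Fin n) × Equiv.Perm (Fin n) //
          IsTransitivePair P.1 P.2}) => RootedIso P.1 Q.1)) := by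
  classical
  haveI : NeZero n := ⟨by omega⟩
  open HypermapAux MulAction in
  -- identify the Quot with the orbit quotient
  have equot : Quot (fun (P Q : TP n) => RootedIso P.1 Q.1)
      ≃ orbitRel.Quotient (Stab n) (TP n) :=
    Quot.congrRight (fun P Q => rootedIso_iff P Q)
  have key : Nat.card (TP n) =
      Nat.card (orbitRel.Quotient (Stab n) (TP n)) * Nat.card (Stab n) := by
    haveI : Fintype (orbitRel.Quotient (Stab n) (TP n)) := Fintype.ofFinite _
    have e := MulAction.selfEquivSigmaOrbits (Stab n) (TP n)
    rw [Nat.card_congr e, Nat.card_eq_fintype_card]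
    have horb : ∀ ω : orbitRel.Quotient (Stab n) (TP n),
        Fintype.card (orbit (Stab n) ω.out) = Nat.card (Stab n) := by
      intro ω
      have hstab : stabilizer (Stab n) ω.out = ⊥ := by
        rw [eq_bot_iff]
        intro g hg
        exact smul_eq_self_imp g ω.out hg
      have e2 : orbit (Stab n) ω.out ≃ Stab n :=
        (orbitEquivQuotientStabilizer (Stab n) ω.out).trans
          ((Subgroup.quotientEquivOfEq hstab).trans
            (QuotientGroup.quotientBot (G := Stab n)).toEquiv)
      rw [← Nat.card_eq_fintype_card, Nat.card_congr e2]
    rw [Fintype.card_sigma]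
    simp only [horb]
    rw [Finset.sum_const, Finset.card_univ, smul_eq_mul]
    simp [Nat.card_eq_fintype_card]
  rw [show Nat.card {P : Equiv.Perm (Fin n) × Equiv.Perm (Fin n) // IsTransitivePair P.1 P.2}
      = Nat.card (TP n) from rfl, key, Nat.card_congr equot, card_stab, Nat.mul_comm]
end

section
/- For every n ≥ 1 and all p, q ≥ 1, the number of permutations of S_n with p left-to-right maxima and q cycles is equal to the number of permutations of S_n with p left-to-right maxima and q right-to-left minima. -/
/-- The number of left-to-right maxima of a permutation. -/
noncomputable def lrMaxCount {n : ℕ} (α : Equiv.Perm (Fin n)) : ℕ :=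
  Nat.card {i : Fin n // ∀ j : Fin n, j < i → α j < α i}

/-- The number of right-to-left minima of a permutation. -/
noncomputable def rlMinCount {n : ℕ} (α : Equiv.Perm (Fin n)) : ℕ :=
  Nat.card {i : Fin n // ∀ j : Fin n, i < j → α i < α j}

open Equiv Equiv.Perm Finset

theorem Equiv.Perm.apply_inv_self {α : Type*} (f : Perm α) (x : α) : f (f⁻¹ x) = x :=
  f.apply_symm_apply x

theorem Equiv.Perm.inv_apply_self {α : Type*} (f : Perm α) (x : α) : f⁻¹ (f x) = x :=
  f.symm_apply_apply x

namespace LrAux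

variable {n : ℕ}

/-- Insert the value `last n` at position `i`: the resulting permutation sends `i ↦ last`
and `i.succAbove k ↦ castSucc (e k)`. -/
def ins (e : Perm (Fin n)) (i : Fin (n + 1)) : Perm (Fin (n + 1)) :=
  (finSuccEquiv' i).trans (e.optionCongr.trans (finSuccEquiv' (Fin.last n)).symm)

@[simp] lemma ins_apply_self (e : Perm (Fin n)) (i : Fin (n + 1)) : ins e i i = Fin.last n := by
  simp [ins]

@[simp] lemma ins_apply_succAbove (e : Perm (Fin n)) (i : Fin (n + 1)) (k : Fin n) :
    ins e i (i.succAbove k) = (e k).castSucc := by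
  simp [ins, finSuccEquiv'_succAbove, finSuccEquiv'_symm_some, Fin.succAbove_last_apply]

/-- Extension of a permutation of `Fin n` to `Fin (n+1)` fixing `last`. -/
def ext (e : Perm (Fin n)) : Perm (Fin (n + 1)) := ins e (Fin.last n)

@[simp] lemma ext_apply_last (e : Perm (Fin n)) : ext e (Fin.last n) = Fin.last n :=
  ins_apply_self e _

@[simp] lemma ext_apply_castSucc (e : Perm (Fin n)) (k : Fin n) :
    ext e k.castSucc = (e k).castSucc := by
  have := ins_apply_succAbove e (Fin.last n) k
  rwa [Fin.succAbove_last_apply] at this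

@[simp] lemma ext_inv_last (e : Perm (Fin n)) : (ext e)⁻¹ (Fin.last n) = Fin.last n :=
  (ext e).injective (by simp [Perm.apply_inv_self])

lemma ext_inv_eq_last_iff (e : Perm (Fin n)) (p : Fin (n + 1)) :
    (ext e)⁻¹ p = Fin.last n ↔ p = Fin.last n := by
  constructor
  · intro h
    have := congrArg (ext e) h
    simpa [Perm.apply_inv_self] using this
  · rintro rfl; exact ext_inv_last e

/-- Restriction of a permutation of `Fin (n+1)` fixing `last` to `Fin n`. -/
def chop (β : Perm (Fin (n + 1))) (hβ : β (Fin.last n) = Fin.last n) : Perm (Fin n) where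
  toFun k := (β k.castSucc).castPred (fun h =>
    (Fin.castSucc_lt_last k).ne (β.injective (h.trans hβ.symm)))
  invFun k := (β⁻¹ k.castSucc).castPred (fun h => by
    have h2 : (k.castSucc : Fin (n + 1)) = Fin.last n := by
      have h3 := congrArg β h
      rwa [Perm.apply_inv_self, hβ] at h3
    exact (Fin.castSucc_lt_last k).ne h2)
  left_inv k := by simp [Fin.castSucc_castPred, Perm.inv_apply_self]
  right_inv k := by simp [Fin.castSucc_castPred, Perm.apply_inv_self]

lemma chop_spec (β : Perm (Fin (n + 1))) (hβ : β (Fin.last n) = Fin.last n) (k : Fin n) :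
    (chop β hβ k).castSucc = β k.castSucc := by
  simp [chop, Fin.castSucc_castPred]

lemma swap_last_apply_last (α : Perm (Fin (n + 1))) :
    (Equiv.swap (Fin.last n) (α (Fin.last n)) * α) (Fin.last n) = Fin.last n := by
  simp [Perm.mul_apply]

/-- Remove `last` from the cycle structure of `α`. -/
def shrink (α : Perm (Fin (n + 1))) : Perm (Fin n) :=
  chop (Equiv.swap (Fin.last n) (α (Fin.last n)) * α) (swap_last_apply_last α)

lemma ext_shrink (α : Perm (Fin (n + 1))) :
    ext (shrink α) = Equiv.swap (Fin.last n) (α (Fin.last n)) * α := by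
  ext x
  induction x using Fin.lastCases with
  | last => simp [swap_last_apply_last α]
  | cast k => rw [ext_apply_castSucc, shrink, chop_spec]

lemma recon (α : Perm (Fin (n + 1))) :
    α = Equiv.swap (Fin.last n) (α (Fin.last n)) * ext (shrink α) := by
  rw [ext_shrink, ← mul_assoc, Equiv.swap_mul_self, one_mul]

/-- The recursive Foata-style bijection. -/
def phi : {n : ℕ} → Perm (Fin n) → Perm (Fin n)
  | 0, α => α
  | _ + 1, α => ins (phi (shrink α)) ((ext (shrink α))⁻¹ (α (Fin.last _)))

def lrSet (α : Perm (Fin n)) : Finset (Fin n) :=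
  univ.filter fun i => ∀ j, j < i → α j < α i

def rlSet (α : Perm (Fin n)) : Finset (Fin n) :=
  univ.filter fun i => ∀ j, i < j → α i < α j

lemma mem_lrSet {α : Perm (Fin n)} {i : Fin n} :
    i ∈ lrSet α ↔ ∀ j, j < i → α j < α i := by simp [lrSet]

lemma mem_rlSet {α : Perm (Fin n)} {i : Fin n} :
    i ∈ rlSet α ↔ ∀ j, i < j → α i < α j := by simp [rlSet]

/-- Characterization of left-to-right maxima after inserting the maximal value. -/
lemma lr_char {γ : Perm (Fin (n + 1))} {e : Perm (Fin n)} {i : Fin (n + 1)}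
    (h1 : γ i = Fin.last n)
    (h2 : ∀ k : Fin n, k.castSucc < i → γ k.castSucc = (e k).castSucc) (m : Fin (n + 1)) :
    m ∈ lrSet γ ↔ m = i ∨ ∃ k ∈ lrSet e, k.castSucc = m ∧ k.castSucc < i := by
  rcases lt_trichotomy m i with hm | hm | hm
  · -- m < i
    have hmlast : m ≠ Fin.last n := (hm.trans_le (Fin.le_last i)).ne
    set k₀ := m.castPred hmlast with hk₀
    have hcs : k₀.castSucc = m := Fin.castSucc_castPred m hmlast
    constructor
    · intro hmem
      refine Or.inr ⟨k₀, ?_, hcs, hcs ▸ hm⟩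
      rw [mem_lrSet]
      intro j hj
      have hj' : j.castSucc < m := by rw [← hcs]; exact Fin.castSucc_lt_castSucc_iff.2 hj
      have := (mem_lrSet.1 hmem) j.castSucc hj'
      rw [h2 j (hj'.trans hm), ← hcs, h2 k₀ (hcs ▸ hm)] at this
      exact Fin.castSucc_lt_castSucc_iff.1 this
    · rintro (rfl | ⟨k, hk, hkm, hki⟩)
      · exact absurd hm (lt_irrefl _)
      rw [mem_lrSet]
      intro j hj
      have hjlast : j ≠ Fin.last n := ((hj.trans hm).trans_le (Fin.le_last i)).ne
      set j₀ := j.castPred hjlast with hj₀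
      have hjcs : j₀.castSucc = j := Fin.castSucc_castPred j hjlast
      have hj0m : j₀ < k := by
        rw [← Fin.castSucc_lt_castSucc_iff, hjcs, hkm]; exact hj
      have := (mem_lrSet.1 hk) j₀ hj0m
      rw [← hjcs, h2 j₀ (by rw [hjcs]; exact hj.trans hm), ← hkm, h2 k hki]
      exact Fin.castSucc_lt_castSucc_iff.2 this
  · -- m = i
    subst hm
    constructor
    · intro _; exact Or.inl rfl
    · intro _
      rw [mem_lrSet]
      intro j hj
      rw [h1]
      exact Fin.lt_last_iff_ne_last.mpr fun h => hj.ne (γ.injective (h.trans h1.symm))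
  · -- i < m
    constructor
    · intro hmem
      have := (mem_lrSet.1 hmem) i hm
      rw [h1] at this
      exact absurd this (Fin.not_lt.2 (Fin.le_last _))
    · rintro (rfl | ⟨k, _, hkm, hki⟩)
      · exact absurd hm (lt_irrefl _)
      · rw [hkm] at hki
        exact absurd (hm.trans hki) (lt_irrefl _)

section Hyps

variable (e : Perm (Fin n)) (i : Fin (n + 1))

lemma ins_h2 (k : Fin n) (hk : k.castSucc < i) : ins e i k.castSucc = (e k).castSucc := by
  rw [← Fin.succAbove_of_castSucc_lt i k hk, ins_apply_succAbove]

lemma cyc_h1 (p : Fin (n + 1)) :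
    (Equiv.swap (Fin.last n) p * ext e) ((ext e)⁻¹ p) = Fin.last n := by
  simp [Perm.mul_apply, Perm.apply_inv_self]

lemma cyc_h2 (p : Fin (n + 1)) (k : Fin n) (hk : k.castSucc < (ext e)⁻¹ p) :
    (Equiv.swap (Fin.last n) p * ext e) k.castSucc = (e k).castSucc := by
  rw [Perm.mul_apply, ext_apply_castSucc]
  apply Equiv.swap_apply_of_ne_of_ne (Fin.castSucc_lt_last _).ne
  intro h
  have : k.castSucc = (ext e)⁻¹ p := by
    rw [← h, ← ext_apply_castSucc, Perm.inv_apply_self]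
  rw [this] at hk
  exact absurd hk (lt_irrefl _)

end Hyps

lemma lrSet_phi : ∀ {n : ℕ} (α : Perm (Fin n)), lrSet (phi α) = lrSet α := by
  intro n
  induction n with
  | zero => intro α; rfl
  | succ n ih =>
    intro α
    set e := shrink α with he
    set p := α (Fin.last n) with hp
    set i := (ext e)⁻¹ p with hi
    have hrec : α = Equiv.swap (Fin.last n) p * ext e := recon α
    have hα1 : α i = Fin.last n := by rw [hrec]; exact cyc_h1 e p
    have hα2 : ∀ k : Fin n, k.castSucc < i → α k.castSucc = (e k).castSucc := by
      intro k hk; rw [hrec]; exact cyc_h2 e p k hk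
    have hphi : phi α = ins (phi e) i := rfl
    apply Finset.ext
    intro m
    rw [hphi, lr_char (ins_apply_self (phi e) i) (ins_h2 (phi e) i),
      lr_char hα1 hα2, ih e]

lemma rl_char (e : Perm (Fin n)) (i : Fin (n + 1)) (m : Fin (n + 1)) :
    m ∈ rlSet (ins e i) ↔ (m = i ∧ i = Fin.last n) ∨ ∃ k ∈ rlSet e, i.succAbove k = m := by
  by_cases hmi : m = i
  · subst hmi
    constructor
    · intro hmem
      left
      refine ⟨rfl, ?_⟩
      by_contra hlast
      have hlt : m < Fin.last n := lt_of_le_of_ne (Fin.le_last m) hlast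
      have := (mem_rlSet.1 hmem) (Fin.last n) hlt
      rw [ins_apply_self] at this
      exact absurd this (Fin.not_lt.2 (Fin.le_last _))
    · rintro (⟨-, rfl⟩ | ⟨k, -, hk⟩)
      · rw [mem_rlSet]
        intro j hj
        exact absurd hj (Fin.not_lt.2 (Fin.le_last _))
      · exact absurd hk (Fin.succAbove_ne _ _)
  · obtain ⟨k, rfl⟩ := Fin.exists_succAbove_eq hmi
    have key : i.succAbove k ∈ rlSet (ins e i) ↔ k ∈ rlSet e := by
      rw [mem_rlSet, mem_rlSet]
      constructor
      · intro h j hj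
        have := h (i.succAbove j) (Fin.succAbove_lt_succAbove_iff.2 hj)
        rwa [ins_apply_succAbove, ins_apply_succAbove,
          Fin.castSucc_lt_castSucc_iff] at this
      · intro h j hj
        by_cases hji : j = i
        · subst hji
          rw [ins_apply_self, ins_apply_succAbove]
          exact Fin.castSucc_lt_last _
        · obtain ⟨j', rfl⟩ := Fin.exists_succAbove_eq hji
          rw [ins_apply_succAbove, ins_apply_succAbove, Fin.castSucc_lt_castSucc_iff]
          exact h j' (Fin.succAbove_lt_succAbove_iff.1 hj)
    rw [key]
    constructor
    · intro hk
      exact Or.inr ⟨k, hk, rfl⟩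
    · rintro (⟨habs, -⟩ | ⟨k', hk', hkk⟩)
      · exact absurd habs (Fin.succAbove_ne _ _)
      · rwa [← (Fin.succAbove_right_injective (p := i)) hkk]

lemma rl_card (e : Perm (Fin n)) (i : Fin (n + 1)) :
    (rlSet (ins e i)).card = (rlSet e).card + if i = Fin.last n then 1 else 0 := by
  classical
  by_cases hi : i = Fin.last n
  · have hset : rlSet (ins e i) = insert i ((rlSet e).map i.succAboveEmb) := by
      apply Finset.ext
      intro m
      rw [rl_char, Finset.mem_insert, Finset.mem_map]
      simp [hi, Fin.coe_succAboveEmb, Fin.succAbove_last]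
    rw [hset, hi, if_pos rfl, Finset.card_insert_of_notMem, Finset.card_map]
    rw [Finset.mem_map]
    rintro ⟨k, -, hk⟩
    exact Fin.succAbove_ne _ k hk
  · have hset : rlSet (ins e i) = (rlSet e).map i.succAboveEmb := by
      apply Finset.ext
      intro m
      rw [rl_char, Finset.mem_map]
      simp [hi, Fin.coe_succAboveEmb]
    rw [hset, if_neg hi, Finset.card_map, Nat.add_zero]

section Cyc

variable {N : ℕ}

def fixSet (σ : Perm (Fin N)) : Finset (Fin N) := univ.filter fun x => σ x = x

lemma pow_fix {c : Perm (Fin N)} {a : Fin N} (hca : c a = a) : ∀ k : ℕ, (c ^ k) a = a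
  | 0 => rfl
  | k + 1 => by rw [pow_succ, Perm.mul_apply, hca, pow_fix hca k]

/-- Splicing a fixed point `a` into a cycle yields a cycle. -/
lemma isCycle_swap_mul {c : Perm (Fin N)} {a b : Fin N} (hc : c.IsCycle)
    (hca : c a = a) (hcb : c b ≠ b) (hab : b ≠ a) :
    (Equiv.swap a b * c).IsCycle := by
  refine ⟨a, ?_, ?_⟩
  · rw [Perm.mul_apply, hca, Equiv.swap_apply_left]
    exact hab
  · have hbase : (Equiv.swap a b * c).SameCycle a b :=
      ⟨1, by rw [zpow_one, Perm.mul_apply, hca, Equiv.swap_apply_left]⟩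
    have claim : ∀ k : ℕ, (Equiv.swap a b * c).SameCycle a ((c ^ k) b) := by
      intro k
      induction k with
      | zero => simpa using hbase
      | succ k ihk =>
        have hz_ne_a : (c ^ k) b ≠ a := by
          intro h
          rw [← pow_fix hca k] at h
          exact hab ((c ^ k).injective h)
        have hstep : (c ^ (k + 1)) b = c ((c ^ k) b) := by rw [pow_succ', Perm.mul_apply]
        by_cases hcz : c ((c ^ k) b) = b
        · rw [hstep, hcz]; exact hbase
        · have hcz_ne_a : c ((c ^ k) b) ≠ a := fun h => hz_ne_a (c.injective (h.trans hca.symm))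
          have hh : (Equiv.swap a b * c) ((c ^ k) b) = c ((c ^ k) b) := by
            rw [Perm.mul_apply, Equiv.swap_apply_of_ne_of_ne hcz_ne_a hcz]
          rw [hstep]
          exact ihk.trans ⟨1, by rw [zpow_one, hh]⟩
    intro y hy
    by_cases hya : y = a
    · subst hya; exact Perm.SameCycle.refl _ _
    · have hcy : c y ≠ y := by
        intro h
        have hyb : y ≠ b := fun hh => hcb (hh ▸ h)
        apply hy
        rw [Perm.mul_apply, h, Equiv.swap_apply_of_ne_of_ne hya hyb]
      obtain ⟨k, hk⟩ := hc.exists_pow_eq hcb hcy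
      exact hk ▸ claim k

/-- Merging a fixed point into a cycle decreases the cycle count by one. -/
lemma merge (σ : Perm (Fin N)) (a b : Fin N) (ha : σ a = a) (hab : b ≠ a) :
    (Equiv.swap a b * σ).cycleType.card + (fixSet (Equiv.swap a b * σ)).card + 1
      = σ.cycleType.card + (fixSet σ).card := by
  classical
  have hba : a ≠ b := hab.symm
  have hσb_ne_a : σ b ≠ a := fun h => hab (σ.injective (h.trans ha.symm))
  have hfix : fixSet (Equiv.swap a b * σ) = ((fixSet σ).erase b).erase a := by
    apply Finset.ext
    intro x
    simp only [fixSet, Finset.mem_erase, Finset.mem_filter, Finset.mem_univ, true_and,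
      and_assoc]
    simp only [Perm.mul_apply]
    by_cases hxa : x = a
    · subst hxa
      rw [ha, Equiv.swap_apply_left]
      exact iff_of_false (fun h => hab h) (fun h => h.1 rfl)
    · by_cases hxb : x = b
      · subst hxb
        refine iff_of_false ?_ (fun h => h.2.1 rfl)
        intro h
        by_cases hs : σ x = x
        · rw [hs, Equiv.swap_apply_right] at h; exact hxa h.symm
        · rw [Equiv.swap_apply_of_ne_of_ne hσb_ne_a hs] at h
          exact hs h
      · constructor
        · intro h
          refine ⟨hxa, hxb, ?_⟩
          by_cases hs : σ x = b
          · rw [hs, Equiv.swap_apply_right] at h; exact absurd h.symm hxa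
          · have hs' : σ x ≠ a := fun hh => hxa (σ.injective (hh.trans ha.symm))
            rwa [Equiv.swap_apply_of_ne_of_ne hs' hs] at h
        · rintro ⟨-, -, hfx⟩
          rw [hfx, Equiv.swap_apply_of_ne_of_ne hxa hxb]
  have hafix : a ∈ fixSet σ := by simp [fixSet, ha]
  by_cases hb : σ b = b
  · -- b is also a fixed point: the swap is a new 2-cycle
    have hdisj : Perm.Disjoint (Equiv.swap a b) σ := by
      intro x
      by_cases hxa : x = a
      · exact Or.inr (hxa ▸ ha)
      · by_cases hxb : x = b
        · exact Or.inr (hxb ▸ hb)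
        · exact Or.inl (Equiv.swap_apply_of_ne_of_ne hxa hxb)
    have hγct : (Equiv.swap a b * σ).cycleType.card = σ.cycleType.card + 1 := by
      rw [hdisj.cycleType_mul, Multiset.card_add, (isCycle_swap hba).cycleType]
      simp [add_comm]
    have hbfix : b ∈ fixSet σ := by simp [fixSet, hb]
    have hcard1 : ((fixSet σ).erase b).card + 1 = (fixSet σ).card :=
      Finset.card_erase_add_one hbfix
    have hamem : a ∈ (fixSet σ).erase b := Finset.mem_erase.mpr ⟨hba, hafix⟩
    have hcard2 : (((fixSet σ).erase b).erase a).card + 1 = ((fixSet σ).erase b).card :=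
      Finset.card_erase_add_one hamem
    rw [hfix, hγct]
    omega
  · -- b is in a nontrivial cycle of σ: splice a into it
    set c := σ.cycleOf b with hc_def
    have hc_mem : c ∈ σ.cycleFactorsFinset :=
      cycleOf_mem_cycleFactorsFinset_iff.mpr (Perm.mem_support.mpr hb)
    have hcyc : c.IsCycle := isCycle_cycleOf σ hb
    have hca : c a = a := by
      rw [hc_def, cycleOf_apply]
      split <;> simp [ha]
    have hcb : c b ≠ b := by rwa [hc_def, cycleOf_apply_self]
    set d := σ * c⁻¹ with hd_def
    have hdc : Perm.Disjoint d c := disjoint_mul_inv_of_mem_cycleFactorsFinset hc_mem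
    have hσ_eq : σ = d * c := by rw [hd_def, inv_mul_cancel_right]
    have hda : d a = a := by
      have h1 : c⁻¹ a = a := by rw [Equiv.Perm.inv_eq_iff_eq]; exact hca.symm
      rw [hd_def, Perm.mul_apply, h1, ha]
    have hdb : d b = b := by
      have h1 : c (σ⁻¹ b) = b := by
        rw [hc_def, cycleOf_apply, if_pos ⟨-1, by simp⟩, Perm.apply_inv_self]
      have h2 : c⁻¹ b = σ⁻¹ b := by rw [Equiv.Perm.inv_eq_iff_eq]; exact h1.symm
      rw [hd_def, Perm.mul_apply, h2, Perm.apply_inv_self]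
    have hsd : Perm.Disjoint (Equiv.swap a b) d := by
      intro x
      by_cases hxa : x = a
      · exact Or.inr (hxa ▸ hda)
      · by_cases hxb : x = b
        · exact Or.inr (hxb ▸ hdb)
        · exact Or.inl (Equiv.swap_apply_of_ne_of_ne hxa hxb)
    have hγ : Equiv.swap a b * σ = d * (Equiv.swap a b * c) := by
      rw [hσ_eq, ← mul_assoc, hsd.commute.eq, mul_assoc]
    have hc' : (Equiv.swap a b * c).IsCycle := isCycle_swap_mul hcyc hca hcb hab
    have hdc' : Perm.Disjoint d (Equiv.swap a b * c) := by
      intro x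
      by_cases hdx : d x = x
      · exact Or.inl hdx
      · right
        have hcx : c x = x := (hdc x).resolve_left hdx
        have hxa : x ≠ a := fun h => hdx (h ▸ hda)
        have hxb : x ≠ b := fun h => hdx (h ▸ hdb)
        rw [Perm.mul_apply, hcx, Equiv.swap_apply_of_ne_of_ne hxa hxb]
    have hγct : (Equiv.swap a b * σ).cycleType.card = σ.cycleType.card := by
      rw [hγ, hdc'.cycleType_mul, hσ_eq, hdc.cycleType_mul, Multiset.card_add, Multiset.card_add,
        hc'.cycleType, hcyc.cycleType]
      simp
    have hbnotfix : b ∉ fixSet σ := by simp [fixSet, hb]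
    have herase : (fixSet σ).erase b = fixSet σ := Finset.erase_eq_of_notMem hbnotfix
    have hcard : (((fixSet σ).erase b).erase a).card + 1 = (fixSet σ).card := by
      rw [herase]; exact Finset.card_erase_add_one hafix
    rw [hfix, hγct]
    omega

end Cyc

/-- `Fin n` is equivalent to the non-`last` elements of `Fin (n+1)`. -/
def csEquiv : Fin n ≃ {x : Fin (n + 1) // x ≠ Fin.last n} where
  toFun k := ⟨k.castSucc, (Fin.castSucc_lt_last k).ne⟩
  invFun x := x.1.castPred x.2
  left_inv k := by simp
  right_inv x := by
    ext
    simp [Fin.castSucc_castPred]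

lemma ext_eq_extendDomain (e : Perm (Fin n)) :
    ext e = e.extendDomain csEquiv := by
  ext x
  induction x using Fin.lastCases with
  | last =>
    rw [ext_apply_last, Perm.extendDomain_apply_not_subtype]
    simp
  | cast k =>
    have h1 : (k.castSucc : Fin (n + 1)) = ((csEquiv k : {x : Fin (n + 1) // x ≠ Fin.last n}) : Fin (n + 1)) := rfl
    rw [ext_apply_castSucc, h1, Perm.extendDomain_apply_image]
    rfl

lemma cycleType_ext (e : Perm (Fin n)) : (ext e).cycleType = e.cycleType := by
  rw [ext_eq_extendDomain]
  exact cycleType_extendDomain csEquiv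

lemma fixSet_ext_card (e : Perm (Fin n)) :
    (fixSet (ext e)).card = (fixSet e).card + 1 := by
  have hset : fixSet (ext e) = insert (Fin.last n) ((fixSet e).map Fin.castSuccEmb) := by
    apply Finset.ext
    intro x
    simp only [fixSet, Finset.mem_filter, Finset.mem_univ, true_and, Finset.mem_insert,
      Finset.mem_map, Fin.coe_castSuccEmb]
    induction x using Fin.lastCases with
    | last =>
      constructor
      · intro _; exact Or.inl rfl
      · intro _; exact ext_apply_last e
    | cast k =>
      rw [ext_apply_castSucc]
      constructor
      · intro h
        exact Or.inr ⟨k, Fin.castSucc_injective n h, rfl⟩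
      · rintro (h | ⟨k', hk', hkk⟩)
        · exact absurd h (Fin.castSucc_lt_last k).ne
        · have : k' = k := Fin.castSucc_injective n hkk
          subst this
          rw [hk']
  rw [hset, Finset.card_insert_of_notMem, Finset.card_map]
  rw [Finset.mem_map]
  rintro ⟨k, -, hk⟩
  exact (Fin.castSucc_lt_last k).ne hk

lemma cyc_step (α : Perm (Fin (n + 1))) :
    α.cycleType.card + (fixSet α).card
      = (shrink α).cycleType.card + (fixSet (shrink α)).card
        + if α (Fin.last n) = Fin.last n then 1 else 0 := by
  by_cases hp : α (Fin.last n) = Fin.last n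
  · have hα : α = ext (shrink α) := by
      conv_lhs => rw [recon α]
      rw [hp, Equiv.swap_self]
      ext x
      simp
    rw [if_pos hp]
    conv_lhs => rw [hα]
    rw [cycleType_ext, fixSet_ext_card]
    omega
  · have hm := merge (ext (shrink α)) (Fin.last n) (α (Fin.last n)) (ext_apply_last _) hp
    rw [if_neg hp]
    rw [← recon α, cycleType_ext, fixSet_ext_card] at hm
    omega

lemma rlSet_phi : ∀ {n : ℕ} (α : Perm (Fin n)),
    (rlSet (phi α)).card = α.cycleType.card + (fixSet α).card := by
  intro n
  induction n with
  | zero =>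
    intro α
    have hα : α = 1 := Subsingleton.elim α 1
    subst hα
    simp [rlSet, fixSet, cycleType_one]
  | succ n ih =>
    intro α
    have hphi : phi α = ins (phi (shrink α)) ((ext (shrink α))⁻¹ (α (Fin.last n))) := rfl
    rw [hphi, rl_card, ih (shrink α), cyc_step α]
    simp only [ext_inv_eq_last_iff]

lemma ins_last_iff (e : Perm (Fin n)) (i : Fin (n + 1)) (m : Fin (n + 1)) :
    ins e i m = Fin.last n ↔ m = i := by
  constructor
  · intro h
    exact (ins e i).injective (h.trans (ins_apply_self e i).symm)
  · rintro rfl; exact ins_apply_self _ _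

lemma phi_inj : ∀ {n : ℕ}, Function.Injective (phi : Perm (Fin n) → Perm (Fin n)) := by
  intro n
  induction n with
  | zero => exact fun a b _ => Subsingleton.elim a b
  | succ n ih =>
    intro α β h
    set iα := (ext (shrink α))⁻¹ (α (Fin.last n)) with hiα
    set iβ := (ext (shrink β))⁻¹ (β (Fin.last n)) with hiβ
    have hphiα : phi α = ins (phi (shrink α)) iα := rfl
    have hphiβ : phi β = ins (phi (shrink β)) iβ := rfl
    have hii : iα = iβ := by
      have h1 : phi β iα = Fin.last n := by
        rw [← h, hphiα, ins_apply_self]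
      rw [hphiβ, ins_last_iff] at h1
      exact h1
    have hE : phi (shrink α) = phi (shrink β) := by
      apply Equiv.ext
      intro k
      have h2 : phi α (iα.succAbove k) = phi β (iα.succAbove k) := by rw [h]
      rw [hphiα, hphiβ, ← hii] at h2
      rw [ins_apply_succAbove, ins_apply_succAbove] at h2
      exact Fin.castSucc_injective n h2
    have hshrink : shrink α = shrink β := ih hE
    have hplast : α (Fin.last n) = β (Fin.last n) := by
      have h3 := hii
      rw [hiα, hiβ, hshrink] at h3
      have := congrArg (ext (shrink β)) h3
      rwa [Perm.apply_inv_self, Perm.apply_inv_self] at this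
    calc α = Equiv.swap (Fin.last n) (α (Fin.last n)) * ext (shrink α) := recon α
    _ = Equiv.swap (Fin.last n) (β (Fin.last n)) * ext (shrink β) := by
        rw [hshrink, hplast]
    _ = β := (recon β).symm

end LrAux


namespace LrAux

lemma lrMaxCount_eq {n : ℕ} (α : Equiv.Perm (Fin n)) : lrMaxCount α = (lrSet α).card := by
  rw [lrMaxCount, Nat.card_eq_fintype_card, Fintype.card_subtype]
  rfl

lemma rlMinCount_eq {n : ℕ} (α : Equiv.Perm (Fin n)) : rlMinCount α = (rlSet α).card := by
  rw [rlMinCount, Nat.card_eq_fintype_card, Fintype.card_subtype]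
  rfl

lemma cycleCount_eq {n : ℕ} (α : Equiv.Perm (Fin n)) :
    cycleCount α = α.cycleType.card + (fixSet α).card := by
  rw [cycleCount, Nat.card_eq_fintype_card, Fintype.card_subtype]
  rfl

end LrAux

theorem lrmax_cycles_eq_lrmax_rlmin (n p q : ℕ) (hn : 1 ≤ n) (hp : 1 ≤ p) (hq : 1 ≤ q) :
    Nat.card {α : Equiv.Perm (Fin n) // lrMaxCount α = p ∧ cycleCount α = q} =
      Nat.card {α : Equiv.Perm (Fin n) // lrMaxCount α = p ∧ rlMinCount α = q} := by
  have hbij : Function.Bijective (LrAux.phi : Equiv.Perm (Fin n) → Equiv.Perm (Fin n)) :=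
    Finite.injective_iff_bijective.mp LrAux.phi_inj
  have hlr : ∀ α : Equiv.Perm (Fin n), lrMaxCount (LrAux.phi α) = lrMaxCount α := fun α => by
    rw [LrAux.lrMaxCount_eq, LrAux.lrMaxCount_eq, LrAux.lrSet_phi]
  have hrl : ∀ α : Equiv.Perm (Fin n), rlMinCount (LrAux.phi α) = cycleCount α := fun α => by
    rw [LrAux.rlMinCount_eq, LrAux.rlSet_phi, LrAux.cycleCount_eq]
  refine Nat.card_eq_of_bijective
    (fun x => ⟨LrAux.phi x.1, by rw [hlr, hrl]; exact ⟨x.2.1, x.2.2⟩⟩) ⟨?_, ?_⟩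
  · intro x y hxy
    exact Subtype.ext (LrAux.phi_inj (congrArg Subtype.val hxy))
  · rintro ⟨β, hβ1, hβ2⟩
    obtain ⟨α, rfl⟩ := hbij.2 β
    exact ⟨⟨α, by rw [← hlr]; exact hβ1, by rw [← hrl]; exact hβ2⟩, rfl⟩
end

section
/- For every n > 1, the polynomials L_n and L'_n satisfy L'_n(x,y) = y · L_{n−1}(x, y+1) and L_n(x,y) = L'_n(x,y) + Σ_{p=1}^{n−1} L'_p(x,y) · L_{n−p}(x,y). -/
/-- A Dyck path, encoded as a list of booleans (`true` = letter `a` (up step),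
`false` = letter `b` (down step)): equally many `a`'s and `b`'s, and every
prefix has at least as many `a`'s as `b`'s. -/
def IsDyck (w : List Bool) : Prop :=
  w.count true = w.count false ∧
    ∀ k ≤ w.length, (w.take k).count false ≤ (w.take k).count true

/-- A primitive Dyck path: one which is not the concatenation of two nonempty
Dyck paths. -/
def IsPrimitiveDyck (w : List Bool) : Prop :=
  IsDyck w ∧ ¬ ∃ u v : List Bool, u ≠ [] ∧ v ≠ [] ∧ IsDyck u ∧ IsDyck v ∧ w = u ++ v

/-- The polynomial `L(w)` in the variables `x = X true` and `y = X false`: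
the product over all occurrences of `b` in `w` of `x` if the occurrence is
immediately preceded by an `a`, and of `y + h` otherwise, where `h` is the
number of `a`'s minus the number of `b`'s in the prefix ending at that
occurrence. -/
noncomputable def Lpoly (w : List Bool) : MvPolynomial Bool ℤ :=
  ∏ i ∈ Finset.range w.length,
    if w.getD i true = false then
      (if 1 ≤ i ∧ w.getD (i - 1) false = true then MvPolynomial.X true
       else MvPolynomial.X false +
         MvPolynomial.C (((w.take (i + 1)).count true : ℤ) -
           ((w.take (i + 1)).count false : ℤ)))
    else 1

open scoped Classical in
/-- `LSum n` is the sum of `L(w)` over all Dyck paths `w` of length `2n`. -/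
noncomputable def LSum (n : ℕ) : MvPolynomial Bool ℤ :=
  ∑ f : Fin (2 * n) → Bool,
    if IsDyck (List.ofFn f) then Lpoly (List.ofFn f) else 0

open scoped Classical in
/-- `LSum' n` is the sum of `L(w)` over all primitive Dyck paths `w` of length `2n`. -/
noncomputable def LSum' (n : ℕ) : MvPolynomial Bool ℤ :=
  ∑ f : Fin (2 * n) → Bool,
    if IsPrimitiveDyck (List.ofFn f) then Lpoly (List.ofFn f) else 0


open scoped Classical

lemma dyck_take_le (h : IsDyck w) (k : ℕ) :
    (w.take k).count false ≤ (w.take k).count true := by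
  rcases le_or_gt k w.length with hk | hk
  · exact h.2 k hk
  · rw [List.take_of_length_le hk.le]; exact h.1.ge

lemma isDyck_of_forall (h1 : w.count true = w.count false)
    (h2 : ∀ k, (w.take k).count false ≤ (w.take k).count true) : IsDyck w :=
  ⟨h1, fun k _ => h2 k⟩

lemma length_eq (w : List Bool) : w.length = w.count true + w.count false :=
  (List.count_true_add_count_false w).symm

lemma IsDyck.length_eq_two_mul (h : IsDyck w) : w.length = 2 * w.count true := by
  have h1 := h.1; have := length_eq w; omega

lemma IsDyck.append (hu : IsDyck u) (hv : IsDyck v) : IsDyck (u ++ v) := by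
  refine isDyck_of_forall (by simp [List.count_append, hu.1, hv.1]) (fun k => ?_)
  rw [List.take_append]
  simp only [List.count_append]
  have h1 := dyck_take_le hu k
  have h2 := dyck_take_le hv (k - u.length)
  omega

lemma IsDyck.drop (hw : IsDyck w) (hu : IsDyck (w.take k)) : IsDyck (w.drop k) := by
  have hc : ∀ a, w.count a = (w.take k).count a + (w.drop k).count a := by
    intro a; rw [← List.count_append, List.take_append_drop]
  refine isDyck_of_forall ?_ (fun j => ?_)
  · have h1 := hc true; have h2 := hc false
    have := hw.1; have := hu.1; omega
  · have hsplit : w.take (k + j) = w.take k ++ (w.drop k).take j := List.take_add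
    have h1 : ∀ a, (w.take (k + j)).count a = (w.take k).count a + ((w.drop k).take j).count a := by
      intro a; rw [hsplit, List.count_append]
    have h2 := dyck_take_le hw (k + j)
    have := hu.1; have e1 := h1 true; have e2 := h1 false; omega

lemma IsDyck.take_of_count (hw : IsDyck w)
    (hk : ((w.take k).count true = (w.take k).count false)) : IsDyck (w.take k) := by
  refine isDyck_of_forall hk (fun j => ?_)
  rw [List.take_take]
  exact dyck_take_le hw _

lemma IsDyck.head_true (hw : IsDyck w) (hne : w ≠ []) : w.getD 0 true = true := by
  cases w with
  | nil => simp at hne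
  | cons a t =>
    cases a with
    | true => rfl
    | false =>
      have := hw.2 1 (by simp)
      simp [List.take_succ_cons, List.count_cons] at this

lemma IsDyck.getLast_false (hw : IsDyck w) (hne : w ≠ []) :
    w.getD (w.length - 1) false = false := by
  have hsplit := List.dropLast_append_getLast hne
  have hc : ∀ a, w.count a = w.dropLast.count a + (if w.getLast hne = a then 1 else 0) := by
    intro a
    conv_lhs => rw [← hsplit]
    rw [List.count_append]
    by_cases h : w.getLast hne = a <;> simp [h, List.count_singleton']
  have hd : w.dropLast = w.take (w.length - 1) := List.dropLast_eq_take
  have hle := hw.2 (w.length - 1) (by omega)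
  rw [← hd] at hle
  have hlen : w.length - 1 < w.length := by
    have := List.length_pos_iff.mpr hne; omega
  have hgd : w.getD (w.length - 1) false = w.getLast hne := by
    rw [List.getD_eq_getElem w false hlen, List.getLast_eq_getElem]
  rcases h : w.getLast hne with _ | _
  · rw [hgd, h]
  · exfalso
    have h1 := hc true; have h2 := hc false
    rw [h] at h1 h2
    simp at h1 h2
    have := hw.1; omega


lemma IsDyck.getLast_false' (hw : IsDyck w) (hne : w ≠ []) : w.getLast hne = false := by
  have hlen : w.length - 1 < w.length := by
    have := List.length_pos_iff.mpr hne; omega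
  have hgd : w.getD (w.length - 1) false = w.getLast hne := by
    rw [List.getD_eq_getElem w false hlen, List.getLast_eq_getElem]
  rw [← hgd, hw.getLast_false hne]

lemma IsDyck.two_le_length (hw : IsDyck w) (hne : w ≠ []) : 2 ≤ w.length := by
  have h1 := hw.length_eq_two_mul
  have h2 := List.length_pos_iff.mpr hne
  omega

lemma prim_of_dyck (hu : IsDyck u) : IsPrimitiveDyck (true :: (u ++ [false])) := by
  have hWlen : (true :: (u ++ [false])).length = u.length + 2 := by simp
  have hW : IsDyck (true :: (u ++ [false])) := by
    refine isDyck_of_forall ?_ (fun k => ?_)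
    · simp [List.count_append, List.count_cons, hu.1]
    · cases k with
      | zero => simp
      | succ j =>
        rw [List.take_succ_cons, List.take_append]
        have h1 := dyck_take_le hu j
        have h2 : ([false].take (j - u.length)).count false ≤ 1 := by
          have hcl : ([false].take (j - u.length)).count false
              ≤ ([false].take (j - u.length)).length := List.count_le_length
          have hlt : ([false].take (j - u.length)).length ≤ 1 := by
            rw [List.length_take]; simp
          omega
        simp only [List.count_cons, List.count_append]
        simp
        omega
  refine ⟨hW, ?_⟩
  rintro ⟨s, t, hs, ht, hds, hdt, heq⟩
  have hl : s.length + t.length = u.length + 2 := by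
    have := congrArg List.length heq; simp at this; omega
  have hspos := List.length_pos_iff.mpr hs
  have htpos := List.length_pos_iff.mpr ht
  obtain ⟨m, hm⟩ : ∃ m, s.length = m + 1 := ⟨s.length - 1, by omega⟩
  have hmle : m ≤ u.length := by omega
  have hk : s = (true :: (u ++ [false])).take (m + 1) := by
    rw [heq, ← hm]
    exact (List.take_left (l₁ := s) (l₂ := t)).symm
  have htk : (u ++ [false]).take m = u.take m := by
    rw [List.take_append]
    have : m - u.length = 0 := by omega
    rw [this]
    simp
  rw [List.take_succ_cons, htk] at hk
  have hcnt := hds.1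
  rw [hk] at hcnt
  simp [List.count_cons] at hcnt
  have := dyck_take_le hu m
  omega

lemma prim_structure (hp : IsPrimitiveDyck w) (hne : w ≠ []) :
    ∃ u, IsDyck u ∧ w = true :: (u ++ [false]) := by
  have hw := hp.1
  have hlen := hw.two_le_length hne
  cases w with
  | nil => simp at hne
  | cons a t =>
    have ha : a = true := hw.head_true hne
    subst ha
    have htne : t ≠ [] := by
      intro h; rw [h] at hlen; simp at hlen
    have hlast : t.getLast htne = false := by
      have := hw.getLast_false' hne
      rwa [List.getLast_cons htne] at this
    refine ⟨t.dropLast, ?_, ?_⟩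
    swap
    · congr 1
      rw [← hlast]
      exact (List.dropLast_append_getLast htne).symm
    have hteq : t = t.dropLast ++ [false] := by
      conv_lhs => rw [← List.dropLast_append_getLast htne]
      rw [hlast]
    set u := t.dropLast with hu
    have hwu : true :: t = true :: (u ++ [false]) := by rw [← hteq]
    have hcnt : u.count true = u.count false := by
      have := hw.1
      rw [hwu] at this
      simp [List.count_cons, List.count_append] at this
      omega
    refine isDyck_of_forall hcnt (fun k => ?_)
    by_contra hcon
    push_neg at hcon
    rcases le_or_gt k u.length with hk | hk
    swap
    · rw [List.take_of_length_le hk.le] at hcon; omega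
    have htake : (true :: t).take (k + 1) = true :: u.take k := by
      rw [hwu, List.take_succ_cons, List.take_append]
      have : k - u.length = 0 := by omega
      rw [this]; simp
    have hble := hw.2 (k + 1) (by rw [hwu]; simp; omega)
    rw [htake] at hble
    simp [List.count_cons] at hble
    have heqc : (u.take k).count false = (u.take k).count true + 1 := by omega
    -- prefix with equal counts gives a Dyck split, contradicting primitivity
    have hsd : IsDyck ((true :: t).take (k + 1)) := by
      apply hw.take_of_count
      rw [htake]
      simp [List.count_cons]
      omega
    have htd : IsDyck ((true :: t).drop (k + 1)) := hw.drop hsd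
    refine hp.2 ⟨_, _, ?_, ?_, hsd, htd, (List.take_append_drop (k+1) (true :: t)).symm⟩
    · rw [htake]; simp
    · have hwl : (true :: t).length = u.length + 2 := by
        rw [hwu]; simp
      have : k + 1 < (true :: t).length := by omega
      intro hcontra
      have hlen0 := congrArg List.length hcontra
      rw [List.length_drop] at hlen0
      simp only [List.length_nil] at hlen0
      omega



lemma getD_append_left (u v : List Bool) (i : ℕ) (h : i < u.length) (d : Bool) :
    (u ++ v).getD i d = u.getD i d := by
  rw [List.getD_eq_getElem?_getD, List.getD_eq_getElem?_getD, List.getElem?_append_left h]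

lemma getD_append_right' (u v : List Bool) (i : ℕ) (h : u.length ≤ i) (d : Bool) :
    (u ++ v).getD i d = v.getD (i - u.length) d := by
  rw [List.getD_eq_getElem?_getD, List.getD_eq_getElem?_getD, List.getElem?_append_right h]

lemma Lpoly_append {u v : List Bool} (hu : IsDyck u) (hv : IsDyck v) :
    Lpoly (u ++ v) = Lpoly u * Lpoly v := by
  rcases eq_or_ne u [] with rfl | hune
  · simp [Lpoly]
  unfold Lpoly
  rw [List.length_append, Finset.prod_range_add]
  congr 1
  · apply Finset.prod_congr rfl
    intro i hi
    rw [Finset.mem_range] at hi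
    have h1 : (u ++ v).getD i true = u.getD i true := getD_append_left u v i hi true
    have h3 : (u ++ v).getD (i - 1) false = u.getD (i - 1) false :=
      getD_append_left u v (i - 1) (by omega) false
    have h4 : (u ++ v).take (i + 1) = u.take (i + 1) := by
      rw [List.take_append]
      have : i + 1 - u.length = 0 := by omega
      rw [this]; simp
    rw [h1, h3, h4]
  · apply Finset.prod_congr rfl
    intro j hj
    rw [Finset.mem_range] at hj
    have hl : (u ++ v).getD (u.length + j) true = v.getD j true := by
      rw [getD_append_right' u v _ (by omega) true]
      congr 1; omega
    by_cases hj0 : j = 0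
    · subst hj0
      have hvh : v.getD 0 true = true :=
        hv.head_true (by intro h; rw [h] at hj; simp at hj)
      rw [hl, hvh]
      simp
    · have hprev : (u ++ v).getD (u.length + j - 1) false = v.getD (j - 1) false := by
        rw [getD_append_right' u v _ (by omega) false]
        congr 1; omega
      have htk : (u ++ v).take (u.length + j + 1) = u ++ v.take (j + 1) := by
        have h5 : u.length + j + 1 = u.length + (j + 1) := by omega
        rw [h5, List.take_length_add_append]
      rw [hl, hprev, htk]
      by_cases hA : v.getD j true = false
      · rw [if_pos hA, if_pos hA]
        have hBB : (1 ≤ u.length + j ∧ v.getD (j - 1) false = true) ↔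
            (1 ≤ j ∧ v.getD (j - 1) false = true) := by
          constructor <;> (rintro ⟨_, h⟩; exact ⟨by omega, h⟩)
        rw [if_congr hBB rfl rfl]
        by_cases hB : 1 ≤ j ∧ v.getD (j - 1) false = true
        · rw [if_pos hB, if_pos hB]
        · rw [if_neg hB, if_neg hB]
          congr 1
          congr 1
          simp only [List.count_append]
          have := hu.1
          push_cast
          omega
      · rw [if_neg hA, if_neg hA]

lemma Lpoly_shift {w : List Bool} (hw : IsDyck w) (hne : w ≠ []) :
    Lpoly (true :: (w ++ [false])) =
      (MvPolynomial.aeval (fun i : Bool =>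
        if i then MvPolynomial.X true else MvPolynomial.X false + 1)) (Lpoly w) *
        MvPolynomial.X false := by
  set σ : Bool → MvPolynomial Bool ℤ :=
    fun i => if i then MvPolynomial.X true else MvPolynomial.X false + 1 with hσ
  obtain ⟨m, hm⟩ : ∃ m, w.length = m + 1 :=
    ⟨w.length - 1, by have := List.length_pos_iff.mpr hne; omega⟩
  have haev : (MvPolynomial.aeval σ) (Lpoly w) =
      ∏ i ∈ Finset.range w.length, (MvPolynomial.aeval σ)
        (if w.getD i true = false then
          (if 1 ≤ i ∧ w.getD (i - 1) false = true then MvPolynomial.X true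
           else MvPolynomial.X false +
             MvPolynomial.C (((w.take (i + 1)).count true : ℤ) -
               ((w.take (i + 1)).count false : ℤ)))
         else 1) := by
    rw [Lpoly, map_prod]
  rw [haev]
  set W := true :: (w ++ [false]) with hW
  have hWlen : W.length = w.length + 1 + 1 := by simp [hW]
  rw [Lpoly, hWlen, Finset.prod_range_succ, Finset.prod_range_succ']
  -- the factor at index 0
  have hf0 : W.getD 0 true = true := by simp [hW]
  -- the factor at the last index
  have hgetlast : W.getD (w.length + 1) true = false := by
    rw [hW, List.getD_cons_succ, getD_append_right' w [false] _ (by omega) true]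
    simp
  have hgetprev : W.getD (w.length + 1 - 1) false = false := by
    have h6 : w.length + 1 - 1 = (w.length - 1) + 1 := by omega
    rw [hW, h6, List.getD_cons_succ, getD_append_left w [false] _ (by omega) false]
    exact hw.getLast_false hne
  have htklast : W.take (w.length + 1 + 1) = W := by
    apply List.take_of_length_le; omega
  have hlastfac :
      (if W.getD (w.length + 1) true = false then
        (if 1 ≤ w.length + 1 ∧ W.getD (w.length + 1 - 1) false = true then MvPolynomial.X true
         else MvPolynomial.X false +
           MvPolynomial.C (((W.take (w.length + 1 + 1)).count true : ℤ) -
             ((W.take (w.length + 1 + 1)).count false : ℤ)))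
       else 1) = MvPolynomial.X false := by
    rw [hgetlast, if_pos rfl, if_neg (by rw [hgetprev]; simp), htklast]
    have hc : ((W.count true : ℤ) - (W.count false : ℤ)) = 0 := by
      rw [hW]
      simp only [List.count_cons, List.count_append]
      have := hw.1
      push_cast
      simp
      omega
    rw [hc]
    simp
  rw [hf0]
  simp only [if_neg (by simp : ¬(true = false))]
  rw [hlastfac, mul_one]
  congr 1
  apply Finset.prod_congr rfl
  intro i hi
  rw [Finset.mem_range] at hi
  have hlet : W.getD (i + 1) true = w.getD i true := by
    rw [hW, List.getD_cons_succ, getD_append_left w [false] _ hi true]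
  by_cases hA : w.getD i true = false
  · have hi1 : 1 ≤ i := by
      rcases Nat.eq_zero_or_pos i with rfl | h
      · rw [hw.head_true hne] at hA; simp at hA
      · omega
    have hprev : W.getD (i + 1 - 1) false = w.getD (i - 1) false := by
      have h6 : i + 1 - 1 = (i - 1) + 1 := by omega
      rw [hW, h6, List.getD_cons_succ, getD_append_left w [false] _ (by omega) false]
    have htk : W.take (i + 1 + 1) = true :: w.take (i + 1) := by
      rw [hW, List.take_succ_cons]
      congr 1
      rw [List.take_append]
      have : i + 1 - w.length = 0 := by omega
      rw [this]; simp
    rw [hlet, hA, if_pos rfl, if_pos rfl, hprev]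
    by_cases hB : w.getD (i - 1) false = true
    · rw [if_pos ⟨by omega, hB⟩, if_pos ⟨hi1, hB⟩]
      simp [hσ]
    · rw [if_neg (by rintro ⟨_, h⟩; exact hB h), if_neg (by rintro ⟨_, h⟩; exact hB h)]
      rw [htk]
      simp only [map_add, MvPolynomial.aeval_X, MvPolynomial.aeval_C, hσ]
      simp only [if_neg (by simp : ¬(false = true))]
      rw [List.count_cons, List.count_cons]
      simp only [MvPolynomial.algebraMap_eq]
      have hCeq : ∀ a b : ℤ, a = b + 1 →
          MvPolynomial.C (R := ℤ) (σ := Bool) a = MvPolynomial.C b + 1 := by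
        intro a b h; rw [h, map_add, map_one]
      rw [hCeq _ ((((w.take (i+1)).count true : ℤ) - ((w.take (i+1)).count false : ℤ)))
        (by push_cast; simp; omega)]
      ring
  · rw [hlet, if_neg hA, if_neg hA, map_one]


noncomputable def primLen (w : List Bool) : ℕ :=
  if h : ∃ k, 0 < k ∧ IsDyck (w.take k) then Nat.find h else 0

lemma primLen_spec {w : List Bool} (hw : IsDyck w) (hne : w ≠ []) :
    0 < primLen w ∧ IsDyck (w.take (primLen w)) ∧ primLen w ≤ w.length ∧
      ∀ k, 0 < k → k < primLen w → ¬ IsDyck (w.take k) := by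
  have E : ∃ k, 0 < k ∧ IsDyck (w.take k) :=
    ⟨w.length, List.length_pos_iff.mpr hne, by rw [List.take_length]; exact hw⟩
  rw [primLen, dif_pos E]
  refine ⟨(Nat.find_spec E).1, (Nat.find_spec E).2, ?_, ?_⟩
  · exact Nat.find_min' E ⟨List.length_pos_iff.mpr hne, by rw [List.take_length]; exact hw⟩
  · intro k hk hlt hd
    exact Nat.find_min E hlt ⟨hk, hd⟩

lemma primLen_prim {w : List Bool} (hw : IsDyck w) (hne : w ≠ []) :
    IsPrimitiveDyck (w.take (primLen w)) := by
  obtain ⟨hpos, hd, hle, hmin⟩ := primLen_spec hw hne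
  refine ⟨hd, ?_⟩
  rintro ⟨s, t, hs, ht, hds, hdt, heq⟩
  have hlL : (w.take (primLen w)).length = primLen w := by
    rw [List.length_take]; omega
  have hlen : s.length + t.length = primLen w := by
    have := congrArg List.length heq
    rw [List.length_append] at this
    omega
  have hspos := List.length_pos_iff.mpr hs
  have htpos := List.length_pos_iff.mpr ht
  have hseq : s = w.take s.length := by
    have h1 : (w.take (primLen w)).take s.length = s := by
      rw [heq, List.take_left]
    rw [List.take_take, min_eq_left (by omega)] at h1
    exact h1.symm
  exact hmin s.length hspos (by omega) (hseq ▸ hds)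

lemma primLen_append {u : List Bool} (hu : IsPrimitiveDyck u) (hune : u ≠ [])
    (v : List Bool) : primLen (u ++ v) = u.length := by
  have hupos := List.length_pos_iff.mpr hune
  have E : ∃ k, 0 < k ∧ IsDyck ((u ++ v).take k) :=
    ⟨u.length, hupos, by rw [List.take_left]; exact hu.1⟩
  rw [primLen, dif_pos E]
  have hle : Nat.find E ≤ u.length :=
    Nat.find_min' E ⟨hupos, by rw [List.take_left]; exact hu.1⟩
  rcases eq_or_lt_of_le hle with heq | hlt
  · exact heq
  exfalso
  obtain ⟨hpos, hd⟩ := Nat.find_spec E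
  set L := Nat.find E with hL
  have htk : (u ++ v).take L = u.take L := by
    rw [List.take_append]
    have : L - u.length = 0 := by omega
    rw [this]; simp
  rw [htk] at hd
  have hdrop : IsDyck (u.drop L) := hu.1.drop hd
  refine hu.2 ⟨u.take L, u.drop L, ?_, ?_, hd, hdrop, (List.take_append_drop L u).symm⟩
  · intro h
    have h2 := congrArg List.length h
    rw [List.length_take, List.length_nil] at h2
    omega
  · intro h
    have h2 := congrArg List.length h
    rw [List.length_drop, List.length_nil] at h2
    omega


-- the set of lists of a given length
noncomputable def lenSet (n : ℕ) : Finset (List Bool) :=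
  (Finset.univ : Finset (Fin n → Bool)).image List.ofFn

lemma mem_lenSet {n : ℕ} {w : List Bool} : w ∈ lenSet n ↔ w.length = n := by
  simp only [lenSet, Finset.mem_image, Finset.mem_univ, true_and]
  constructor
  · rintro ⟨f, rfl⟩; simp
  · rintro rfl; exact ⟨w.get, List.ofFn_get w⟩

lemma sum_ofFn_eq (n : ℕ) (p : List Bool → Prop) :
    (∑ f : Fin n → Bool, if p (List.ofFn f) then Lpoly (List.ofFn f) else 0) =
      ∑ w ∈ (lenSet n).filter p, Lpoly w := by
  rw [← Finset.sum_filter]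
  rw [← Finset.sum_image (g := List.ofFn) (f := Lpoly)
    (fun x _ y _ h => List.ofFn_injective h)]
  congr 1
  ext w
  simp only [Finset.mem_image, Finset.mem_filter, Finset.mem_univ, true_and, mem_lenSet, lenSet]
  constructor
  · rintro ⟨f, hp, rfl⟩; exact ⟨⟨f, rfl⟩, hp⟩
  · rintro ⟨⟨f, rfl⟩, hp⟩; exact ⟨f, hp, rfl⟩

lemma LSum_eq (n : ℕ) : LSum n = ∑ w ∈ (lenSet (2 * n)).filter IsDyck, Lpoly w :=
  sum_ofFn_eq (2 * n) IsDyck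

lemma LSum'_eq (n : ℕ) : LSum' n = ∑ w ∈ (lenSet (2 * n)).filter IsPrimitiveDyck, Lpoly w :=
  sum_ofFn_eq (2 * n) IsPrimitiveDyck

lemma part1 (m : ℕ) (hm : 1 ≤ m) :
    LSum' (m + 1) = MvPolynomial.X false *
      (MvPolynomial.aeval (fun i : Bool =>
        if i then MvPolynomial.X true else MvPolynomial.X false + 1)) (LSum m) := by
  rw [LSum_eq, LSum'_eq, map_sum, Finset.mul_sum]
  refine Finset.sum_nbij' (fun w => (w.drop 1).dropLast) (fun w => true :: (w ++ [false]))
    ?_ ?_ ?_ ?_ ?_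
  · intro w hw
    rw [Finset.mem_filter, mem_lenSet] at hw
    obtain ⟨u, hu, rfl⟩ := prim_structure hw.2 (by
      intro h; rw [h] at hw; simp at hw)
    rw [Finset.mem_filter, mem_lenSet]
    have hlen : u.length = 2 * m := by
      have := hw.1; simp at this; omega
    simp only [List.drop_succ_cons, List.drop_zero, List.dropLast_concat]
    exact ⟨hlen, hu⟩
  · intro w hw
    rw [Finset.mem_filter, mem_lenSet] at hw
    rw [Finset.mem_filter, mem_lenSet]
    constructor
    · simp; omega
    · exact prim_of_dyck hw.2
  · intro w hw
    rw [Finset.mem_filter, mem_lenSet] at hw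
    obtain ⟨u, hu, rfl⟩ := prim_structure hw.2 (by
      intro h; rw [h] at hw; simp at hw)
    simp only [List.drop_succ_cons, List.drop_zero, List.dropLast_concat]
  · intro w hw
    simp only [List.drop_succ_cons, List.drop_zero, List.dropLast_concat]
  · intro w hw
    rw [Finset.mem_filter, mem_lenSet] at hw
    obtain ⟨u, hu, rfl⟩ := prim_structure hw.2 (by
      intro h; rw [h] at hw; simp at hw)
    simp only [List.drop_succ_cons, List.drop_zero, List.dropLast_concat]
    have hune : u ≠ [] := by
      intro h
      have := hw.1
      rw [h] at this
      simp at this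
      omega
    rw [Lpoly_shift hu hune, mul_comm]

lemma part2 (n : ℕ) (hn : 1 ≤ n) :
    LSum n = LSum' n + ∑ p ∈ Finset.Icc 1 (n - 1), LSum' p * LSum (n - p) := by
  have hre : ∀ p ∈ Finset.Icc 1 (n - 1), LSum' p * LSum (n - p) =
      ∑ x ∈ ((lenSet (2 * p)).filter IsPrimitiveDyck) ×ˢ
        ((lenSet (2 * (n - p))).filter IsDyck), Lpoly x.1 * Lpoly x.2 := by
    intro p _
    rw [LSum_eq, LSum'_eq, Finset.sum_mul_sum, Finset.sum_product]
  rw [Finset.sum_congr rfl hre, LSum_eq, LSum'_eq]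
  have hsplit := Finset.sum_filter_add_sum_filter_not ((lenSet (2 * n)).filter IsDyck)
    IsPrimitiveDyck Lpoly
  have h1 : ((lenSet (2 * n)).filter IsDyck).filter IsPrimitiveDyck =
      (lenSet (2 * n)).filter IsPrimitiveDyck := by
    rw [Finset.filter_filter]
    apply Finset.filter_congr
    intro w _
    exact ⟨And.right, fun h => ⟨h.1, h⟩⟩
  rw [h1] at hsplit
  rw [← hsplit]
  congr 1
  rw [Finset.sum_sigma']
  symm
  refine Finset.sum_nbij' (fun x => x.2.1 ++ x.2.2)
    (fun w => ⟨primLen w / 2, (w.take (primLen w), w.drop (primLen w))⟩) ?_ ?_ ?_ ?_ ?_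
  · rintro ⟨p, u, v⟩ hx
    simp only [Finset.mem_sigma, Finset.mem_Icc, Finset.mem_product, Finset.mem_filter,
      mem_lenSet] at hx
    obtain ⟨⟨hp1, hp2⟩, ⟨hul, hup⟩, hvl, hvd⟩ := hx
    have hune : u ≠ [] := by
      intro h; rw [h] at hul; simp at hul; omega
    have hvne : v ≠ [] := by
      intro h; rw [h] at hvl; simp at hvl; omega
    simp only [Finset.mem_filter, mem_lenSet, List.length_append]
    refine ⟨⟨?_, hup.1.append hvd⟩, ?_⟩
    · omega
    · intro hP
      exact hP.2 ⟨u, v, hune, hvne, hup.1, hvd, rfl⟩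
  · intro w hw
    simp only [Finset.mem_filter, mem_lenSet] at hw
    obtain ⟨⟨hlw, hdw⟩, hnp⟩ := hw
    have hne : w ≠ [] := by
      intro h; rw [h] at hlw; simp at hlw; omega
    obtain ⟨hLpos, hLd, hLle, _⟩ := primLen_spec hdw hne
    have htl : (w.take (primLen w)).length = primLen w := by
      rw [List.length_take]; omega
    have hLeven : primLen w = 2 * (w.take (primLen w)).count true := by
      have := hLd.length_eq_two_mul; omega
    have hLlt : primLen w < 2 * n := by
      rcases eq_or_lt_of_le hLle with heq | hlt
      · exfalso
        have h2 : w.take (primLen w) = w := by rw [heq, List.take_length]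
        have hprim := primLen_prim hdw hne
        rw [h2] at hprim
        exact hnp hprim
      · omega
    simp only [Finset.mem_sigma, Finset.mem_Icc, Finset.mem_product, Finset.mem_filter,
      mem_lenSet]
    refine ⟨⟨?_, ?_⟩, ⟨?_, primLen_prim hdw hne⟩, ?_, hdw.drop hLd⟩
    · omega
    · omega
    · omega
    · rw [List.length_drop]; omega
  · rintro ⟨p, u, v⟩ hx
    simp only [Finset.mem_sigma, Finset.mem_Icc, Finset.mem_product, Finset.mem_filter,
      mem_lenSet] at hx
    obtain ⟨⟨hp1, hp2⟩, ⟨hul, hup⟩, hvl, hvd⟩ := hx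
    have hune : u ≠ [] := by
      intro h; rw [h] at hul; simp at hul; omega
    have hpl : primLen (u ++ v) = u.length := primLen_append hup hune v
    show (⟨primLen (u ++ v) / 2, ((u ++ v).take (primLen (u ++ v)), (u ++ v).drop (primLen (u ++ v)))⟩
      : Σ _ : ℕ, List Bool × List Bool) = ⟨p, (u, v)⟩
    rw [hpl, List.take_left, List.drop_left]
    have h2 : u.length / 2 = p := by omega
    rw [h2]
  · intro w hw
    simp only [List.take_append_drop]
  · rintro ⟨p, u, v⟩ hx
    simp only [Finset.mem_sigma, Finset.mem_Icc, Finset.mem_product, Finset.mem_filter,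
      mem_lenSet] at hx
    obtain ⟨⟨hp1, hp2⟩, ⟨hul, hup⟩, hvl, hvd⟩ := hx
    exact (Lpoly_append hup.1 hvd).symm


theorem L_recurrences (n : ℕ) (hn : 1 < n) :
    LSum' n = MvPolynomial.X false *
        (MvPolynomial.aeval (fun i : Bool =>
          if i then MvPolynomial.X true else MvPolynomial.X false + 1)
          (LSum (n - 1))) ∧
      LSum n = LSum' n + ∑ p ∈ Finset.Icc 1 (n - 1), LSum' p * LSum (n - p) := by
  constructor
  · obtain ⟨m, rfl⟩ : ∃ m, n = m + 1 := ⟨n - 1, by omega⟩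
    simp only [Nat.add_sub_cancel]
    exact part1 m (by omega)
  · exact part2 n (by omega)
end

section
/- For every m > 1, the polynomials M_m and M'_m satisfy M'_m(y) = y · M_{m−1}(y+1) and M_m(y) = M'_m(y) + Σ_{p=1}^{m−1} M'_p(y) · M_{m−p}(y). -/
/-- The polynomial `M(w)` in the variable `y = X`: the product over all
occurrences of `b` in `w` of `y + h`, where `h` is the number of `a`'s minus
the number of `b`'s in the prefix ending at that occurrence. -/
noncomputable def Mpoly (w : List Bool) : Polynomial ℤ :=
  ∏ i ∈ Finset.range w.length,
    if w.getD i true = false then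
      Polynomial.X + Polynomial.C (((w.take (i + 1)).count true : ℤ) -
        ((w.take (i + 1)).count false : ℤ))
    else 1

open scoped Classical in
/-- `MSum m` is the sum of `M(w)` over all Dyck paths `w` of length `2m`. -/
noncomputable def MSum (m : ℕ) : Polynomial ℤ :=
  ∑ f : Fin (2 * m) → Bool,
    if IsDyck (List.ofFn f) then Mpoly (List.ofFn f) else 0

open scoped Classical in
/-- `MSum' m` is the sum of `M(w)` over all primitive Dyck paths `w` of length `2m`. -/
noncomputable def MSum' (m : ℕ) : Polynomial ℤ :=
  ∑ f : Fin (2 * m) → Bool,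
    if IsPrimitiveDyck (List.ofFn f) then Mpoly (List.ofFn f) else 0


open Polynomial Finset

def hgt (w : List Bool) : ℤ := (w.count true : ℤ) - (w.count false : ℤ)

lemma count_tf (w : List Bool) : w.count true + w.count false = w.length := by
  induction w with
  | nil => rfl
  | cons a t ih => cases a <;> simp [List.count_cons] <;> omega

lemma hgt_append (u v : List Bool) : hgt (u ++ v) = hgt u + hgt v := by
  simp [hgt, List.count_append]; ring

lemma isDyck_iff {w : List Bool} :
    IsDyck w ↔ hgt w = 0 ∧ ∀ k, 0 ≤ hgt (w.take k) := by
  constructor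
  · rintro ⟨h1, h2⟩
    refine ⟨by simp [hgt, h1], fun k => ?_⟩
    rcases le_or_gt k w.length with h | h
    · have := h2 k h
      simp only [hgt]; omega
    · rw [List.take_of_length_le h.le]
      simp only [hgt]; omega
  · rintro ⟨h1, h2⟩
    refine ⟨?_, fun k _ => ?_⟩
    · simp only [hgt] at h1; omega
    · have := h2 k
      simp only [hgt] at this; omega

lemma IsDyck.length_even {w : List Bool} (h : IsDyck w) :
    w.length = 2 * w.count true := by
  have := count_tf w
  have := h.1
  omega

lemma hgt_take_le (w : List Bool) {j k : ℕ} (h : j ≤ k) :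
    hgt ((w.drop j).take (k - j)) = hgt (w.take k) - hgt (w.take j) := by
  have : w.take k = w.take j ++ (w.drop j).take (k - j) := by
    rw [← List.take_add]; congr 1; omega
  rw [this, hgt_append]; ring

lemma dyck_of_split_left {w : List Bool} (hw : IsDyck w) {k : ℕ}
    (hk : hgt (w.take k) = 0) : IsDyck (w.take k) := by
  rw [isDyck_iff] at hw ⊢
  refine ⟨hk, fun j => ?_⟩
  rw [List.take_take]
  rcases le_or_gt j k with h | h
  · simpa [min_eq_left h] using hw.2 j
  · simpa [min_eq_right h.le] using hw.2 k

lemma dyck_of_split_right {w : List Bool} (hw : IsDyck w) {k : ℕ}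
    (hk : hgt (w.take k) = 0) : IsDyck (w.drop k) := by
  rw [isDyck_iff] at hw ⊢
  constructor
  · have : hgt (w.take k) + hgt (w.drop k) = 0 := by
      rw [← hgt_append, List.take_append_drop]; exact hw.1
    omega
  · intro j
    have h1 : (w.drop k).take j = (w.drop k).take ((k + j) - k) := by congr 1; omega
    rw [h1, hgt_take_le w (by omega : k ≤ k + j), hk]
    have := hw.2 (k + j); omega

lemma dyck_append {u v : List Bool} (hu : IsDyck u) (hv : IsDyck v) :
    IsDyck (u ++ v) := by
  rw [isDyck_iff] at hu hv ⊢
  refine ⟨by rw [hgt_append, hu.1, hv.1]; ring, fun k => ?_⟩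
  rcases le_or_gt k u.length with h | h
  · rw [List.take_append_of_le_length h]; exact hu.2 k
  · rw [List.take_append, List.take_of_length_le h.le, hgt_append, hu.1]
    simpa using hv.2 _

lemma prim_iff_strict {w : List Bool} :
    IsPrimitiveDyck w ↔ IsDyck w ∧ ∀ k, 0 < k → k < w.length → 1 ≤ hgt (w.take k) := by
  constructor
  · rintro ⟨hd, hnot⟩
    refine ⟨hd, fun k hk0 hkl => ?_⟩
    by_contra hlt
    push_neg at hlt
    have h0 : 0 ≤ hgt (w.take k) := (isDyck_iff.mp hd).2 k
    have hk : hgt (w.take k) = 0 := by omega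
    exact hnot ⟨w.take k, w.drop k, by
      rw [← List.length_pos_iff, List.length_take]; omega, by
      rw [← List.length_pos_iff, List.length_drop]; omega,
      dyck_of_split_left hd hk, dyck_of_split_right hd hk, (List.take_append_drop k w).symm⟩
  · rintro ⟨hd, hstrict⟩
    refine ⟨hd, ?_⟩
    rintro ⟨u, v, hu0, hv0, hu, hv, rfl⟩
    have h1 : 0 < u.length := List.length_pos_iff.mpr hu0
    have h2 : u.length < (u ++ v).length := by
      simp [List.length_append]
      exact List.length_pos_iff.mpr hv0
    have := hstrict u.length h1 h2
    rw [List.take_left] at this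
    rw [isDyck_iff] at hu
    omega

lemma Mpoly_def (w : List Bool) :
    Mpoly w = ∏ i ∈ Finset.range w.length,
      if w.getD i true = false then X + C (hgt (w.take (i + 1))) else 1 := rfl

lemma Mpoly_nil : Mpoly ([] : List Bool) = 1 := by simp [Mpoly_def]

lemma Mpoly_append (u v : List Bool) :
    Mpoly (u ++ v) = Mpoly u * ∏ i ∈ Finset.range v.length,
      (if v.getD i true = false then X + C (hgt u + hgt (v.take (i + 1))) else 1) := by
  rw [Mpoly_def, Mpoly_def, List.length_append, Finset.prod_range_add]
  congr 1
  · apply Finset.prod_congr rfl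
    intro i hi
    rw [Finset.mem_range] at hi
    rw [List.getD_append _ _ _ _ hi, List.take_append_of_le_length (by omega)]
  · apply Finset.prod_congr rfl
    intro i hi
    rw [Finset.mem_range] at hi
    rw [List.getD_append_right _ _ _ _ (by omega), Nat.add_sub_cancel_left]
    have : u.length + i + 1 = u.length + (i + 1) := by omega
    rw [this, List.take_add, List.take_left, List.drop_left, hgt_append]

lemma Mpoly_append_zero {u : List Bool} (hu : hgt u = 0) (v : List Bool) :
    Mpoly (u ++ v) = Mpoly u * Mpoly v := by
  rw [Mpoly_append, Mpoly_def, hu]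
  simp only [zero_add]
  rfl

lemma Mpoly_comp (w : List Bool) :
    (Mpoly w).comp (X + 1) = ∏ i ∈ Finset.range w.length,
      if w.getD i true = false then X + 1 + C (hgt (w.take (i + 1))) else 1 := by
  have : (Mpoly w).comp (X + 1) =
      Polynomial.eval₂RingHom Polynomial.C (X + 1 : Polynomial ℤ) (Mpoly w) := rfl
  rw [this, Mpoly_def, map_prod]
  apply Finset.prod_congr rfl
  intro i _
  split
  · show (X + C (hgt (List.take (i + 1) w))).comp (X + 1) = _
    simp [Polynomial.add_comp]
  · show (1 : Polynomial ℤ).comp (X + 1) = 1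
    simp

lemma Mpoly_sandwich {w : List Bool} (hw : hgt w = 0) :
    Mpoly (true :: w ++ [false]) = X * (Mpoly w).comp (X + 1) := by
  have h1 : (true :: w ++ [false]) = [true] ++ (w ++ [false]) := rfl
  rw [h1, Mpoly_append]
  have h2 : Mpoly [true] = 1 := by simp [Mpoly_def]
  rw [h2, one_mul, Mpoly_comp]
  have hu : hgt [true] = 1 := rfl
  rw [hu, List.length_append, List.length_singleton, Finset.prod_range_succ]
  have h3 : (w ++ [false]).getD w.length true = false := by
    rw [List.getD_append_right _ _ _ _ le_rfl]; simp
  rw [h3, if_pos rfl]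
  have h4 : (w ++ [false]).take (w.length + 1) = w ++ [false] := by
    apply List.take_of_length_le; simp
  rw [h4, hgt_append, hw]
  have h5 : hgt [false] = -1 := rfl
  rw [h5]
  have h6 : ∀ i ∈ Finset.range w.length,
      (if (w ++ [false]).getD i true = false then
        X + C (1 + hgt ((w ++ [false]).take (i + 1))) else 1) =
      (if w.getD i true = false then X + 1 + C (hgt (w.take (i + 1))) else 1) := by
    intro i hi
    rw [Finset.mem_range] at hi
    rw [List.getD_append _ _ _ _ hi, List.take_append_of_le_length (by omega)]
    split
    · rw [map_add, Polynomial.C_1]; ring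
    · rfl
  rw [Finset.prod_congr rfl h6]
  have h7 : (1 : ℤ) + (0 + -1) = 0 := by ring
  rw [h7, Polynomial.C_0, add_zero, mul_comm]

open scoped Classical

noncomputable def Lset (n : ℕ) : Finset (List Bool) :=
  Finset.image (fun f : Fin n → Bool => List.ofFn f) Finset.univ

lemma mem_Lset {n : ℕ} {w : List Bool} : w ∈ Lset n ↔ w.length = n := by
  constructor
  · rintro hw
    rw [Lset, Finset.mem_image] at hw
    obtain ⟨f, _, rfl⟩ := hw
    simp
  · rintro rfl
    rw [Lset, Finset.mem_image]
    exact ⟨fun i => w[i], Finset.mem_univ _, List.ofFn_getElem⟩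

noncomputable def Dset (n : ℕ) : Finset (List Bool) := (Lset n).filter IsDyck
noncomputable def Pset (n : ℕ) : Finset (List Bool) := (Lset n).filter IsPrimitiveDyck

lemma mem_Dset {n : ℕ} {w : List Bool} : w ∈ Dset n ↔ w.length = n ∧ IsDyck w := by
  rw [Dset, Finset.mem_filter, mem_Lset]

lemma mem_Pset {n : ℕ} {w : List Bool} : w ∈ Pset n ↔ w.length = n ∧ IsPrimitiveDyck w := by
  rw [Pset, Finset.mem_filter, mem_Lset]

lemma MSum_eq (m : ℕ) : MSum m = ∑ w ∈ Dset (2 * m), Mpoly w := by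
  rw [MSum, Dset, Finset.sum_filter, Lset, Finset.sum_image]
  intro f _ g _ h
  exact List.ofFn_injective h

lemma MSum'_eq (m : ℕ) : MSum' m = ∑ w ∈ Pset (2 * m), Mpoly w := by
  rw [MSum', Pset, Finset.sum_filter, Lset, Finset.sum_image]
  intro f _ g _ h
  exact List.ofFn_injective h

lemma MSum_zero : MSum 0 = 1 := by
  rw [MSum_eq]
  have : Dset 0 = {([] : List Bool)} := by
    ext w
    rw [mem_Dset, Finset.mem_singleton, List.length_eq_zero_iff]
    constructor
    · tauto
    · rintro rfl
      exact ⟨rfl, ⟨rfl, by simp⟩⟩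
  rw [mul_zero, this, Finset.sum_singleton, Mpoly_nil]

lemma hgt_cons (a : Bool) (l : List Bool) :
    hgt (a :: l) = (if a then 1 else -1) + hgt l := by
  cases a <;> simp [hgt, List.count_cons] <;> ring

lemma prim_of_sandwich {w : List Bool} (hw : IsDyck w) :
    IsPrimitiveDyck (true :: w ++ [false]) := by
  have hw' := isDyck_iff.mp hw
  have key : ∀ k, 0 < k → k ≤ w.length + 1 → 1 ≤ hgt ((true :: w ++ [false]).take k) := by
    intro k hk0 hkl
    obtain ⟨j, rfl⟩ : ∃ j, k = j + 1 := ⟨k - 1, by omega⟩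
    rw [List.cons_append, List.take_succ_cons, hgt_cons, if_pos rfl,
      List.take_append_of_le_length (by omega)]
    have := hw'.2 j
    omega
  rw [prim_iff_strict]
  constructor
  · rw [isDyck_iff]
    constructor
    · rw [List.cons_append, hgt_cons, hgt_append, hw'.1]
      rfl
    · intro k
      rcases Nat.eq_zero_or_pos k with rfl | hk0
      · simp [hgt]
      rcases le_or_gt k (w.length + 1) with h | h
      · have := key k hk0 h; omega
      · rw [List.take_of_length_le (by simp; omega), List.cons_append, hgt_cons, if_pos rfl,
          hgt_append, hw'.1]
        rfl
  · intro k hk0 hkl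
    simp at hkl
    exact key k hk0 (by omega)

lemma length_pos_of_prim {w : List Bool} (hw : IsPrimitiveDyck w) (hne : w ≠ []) :
    2 ≤ w.length := by
  have h1 := hw.1.length_even
  have h2 : 0 < w.length := List.length_pos_iff.mpr hne
  omega

lemma sandwich_of_prim {w : List Bool} (hw : IsPrimitiveDyck w) (hne : w ≠ []) :
    IsDyck ((w.drop 1).dropLast) ∧ w = true :: ((w.drop 1).dropLast) ++ [false] := by
  have hlen := length_pos_of_prim hw hne
  obtain ⟨a, t, rfl⟩ := List.exists_cons_of_ne_nil hne
  have hd := isDyck_iff.mp hw.1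
  have hstrict := (prim_iff_strict.mp hw).2
  -- a = true
  have ha : a = true := by
    have := hd.2 1
    rcases a with _ | _
    · rw [List.take_succ_cons, List.take_zero, hgt_cons] at this
      simp [hgt] at this
    · rfl
  subst ha
  have ht : t ≠ [] := by
    intro h; subst h; simp at hlen
  obtain ⟨s, b, rfl⟩ : ∃ s b, t = s ++ [b] := by
    rcases List.eq_nil_or_concat t with h | ⟨s, b, h⟩
    · exact absurd h ht
    · exact ⟨s, b, by simpa [List.concat_eq_append] using h⟩
  have hlens : (true :: (s ++ [b])).length = s.length + 2 := by simp
  -- hgt s ≥ 0 via strict at length - 1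
  have hs0 : 0 ≤ hgt s := by
    have := hstrict (s.length + 1) (by omega) (by omega)
    rw [List.take_succ_cons, List.take_append_of_le_length le_rfl, List.take_length,
      hgt_cons, if_pos rfl] at this
    omega
  -- total height 0
  have htot : hgt (true :: (s ++ [b])) = 0 := hd.1
  rw [hgt_cons, if_pos rfl, hgt_append] at htot
  have hb : b = false := by
    rcases b with _ | _
    · rfl
    · have h1 : hgt [true] = 1 := rfl
      rw [h1] at htot; omega
  subst hb
  have hsb : hgt [false] = -1 := rfl
  have hs : hgt s = 0 := by rw [hsb] at htot; omega
  have hpeel : ((true :: (s ++ [false])).drop 1).dropLast = s := by simp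
  rw [hpeel]
  refine ⟨isDyck_iff.mpr ⟨hs, fun j => ?_⟩, rfl⟩
  rcases le_or_gt s.length j with h | h
  · rw [List.take_of_length_le h, hs]
  · have := hstrict (j + 1) (by omega) (by omega)
    rw [List.take_succ_cons, List.take_append_of_le_length (by omega), hgt_cons,
      if_pos rfl] at this
    omega

lemma comp_sum (s : Finset (List Bool)) (q : Polynomial ℤ) :
    (∑ w ∈ s, Mpoly w).comp q = ∑ w ∈ s, (Mpoly w).comp q := by
  show Polynomial.eval₂RingHom Polynomial.C q _ = _
  rw [map_sum]
  rfl

lemma part1_s17 (m : ℕ) (hm : 1 ≤ m) :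
    MSum' m = Polynomial.X * (MSum (m - 1)).comp (Polynomial.X + 1) := by
  rw [MSum'_eq, MSum_eq, comp_sum, Finset.mul_sum]
  refine Finset.sum_nbij' (fun w => (w.drop 1).dropLast) (fun w => true :: w ++ [false])
    ?_ ?_ ?_ ?_ ?_
  · intro w hw
    rw [mem_Pset] at hw
    have hne : w ≠ [] := by
      intro h; subst h; simp at hw; omega
    obtain ⟨hdyck, hstruct⟩ := sandwich_of_prim hw.2 hne
    rw [mem_Dset]
    refine ⟨?_, hdyck⟩
    have : w.length = ((w.drop 1).dropLast).length + 2 := by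
      conv_lhs => rw [hstruct]
      simp
    omega
  · intro w hw
    rw [mem_Dset] at hw
    rw [mem_Pset]
    constructor
    · simp; omega
    · exact prim_of_sandwich hw.2
  · intro w hw
    rw [mem_Pset] at hw
    have hne : w ≠ [] := by
      intro h; subst h; simp at hw; omega
    exact (sandwich_of_prim hw.2 hne).2.symm
  · intro w _
    simp
  · intro w hw
    rw [mem_Pset] at hw
    have hne : w ≠ [] := by
      intro h; subst h; simp at hw; omega
    obtain ⟨hdyck, hstruct⟩ := sandwich_of_prim hw.2 hne
    conv_lhs => rw [hstruct]
    exact Mpoly_sandwich (isDyck_iff.mp hdyck).1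

noncomputable def cut (w : List Bool) : ℕ :=
  if h : ∃ k, 0 < k ∧ hgt (w.take k) = 0 then Nat.find h else 0

lemma cut_exists {w : List Bool} (hw : IsDyck w) (hne : w ≠ []) :
    ∃ k, 0 < k ∧ hgt (w.take k) = 0 :=
  ⟨w.length, List.length_pos_iff.mpr hne, by rw [List.take_length]; exact (isDyck_iff.mp hw).1⟩

lemma cut_spec {w : List Bool} (hw : IsDyck w) (hne : w ≠ []) :
    0 < cut w ∧ hgt (w.take (cut w)) = 0 := by
  rw [cut, dif_pos (cut_exists hw hne)]
  exact Nat.find_spec (cut_exists hw hne)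

lemma cut_min {w : List Bool} (hw : IsDyck w) (hne : w ≠ []) {k : ℕ}
    (hk : k < cut w) : ¬(0 < k ∧ hgt (w.take k) = 0) := by
  rw [cut, dif_pos (cut_exists hw hne)] at hk
  exact Nat.find_min (cut_exists hw hne) hk

lemma cut_le {w : List Bool} (hw : IsDyck w) (hne : w ≠ []) : cut w ≤ w.length := by
  rw [cut, dif_pos (cut_exists hw hne)]
  exact Nat.find_min' _ ⟨List.length_pos_iff.mpr hne,
    by rw [List.take_length]; exact (isDyck_iff.mp hw).1⟩

lemma cut_prim {w : List Bool} (hw : IsDyck w) (hne : w ≠ []) :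
    IsPrimitiveDyck (w.take (cut w)) := by
  have hs := cut_spec hw hne
  have hle := cut_le hw hne
  rw [prim_iff_strict]
  refine ⟨dyck_of_split_left hw hs.2, fun k hk0 hkl => ?_⟩
  rw [List.length_take] at hkl
  have hklt : k < cut w := by omega
  rw [List.take_take, min_eq_left hklt.le]
  have h1 := cut_min hw hne hklt
  have h2 := (isDyck_iff.mp hw).2 k
  have : ¬ hgt (w.take k) = 0 := fun h => h1 ⟨hk0, h⟩
  omega

lemma cut_append {u : List Bool} (hu : IsPrimitiveDyck u) (hne : u ≠ []) (v : List Bool) :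
    cut (u ++ v) = u.length := by
  have hlen : 0 < u.length := List.length_pos_iff.mpr hne
  have hp : 0 < u.length ∧ hgt ((u ++ v).take u.length) = 0 :=
    ⟨hlen, by rw [List.take_left]; exact (isDyck_iff.mp hu.1).1⟩
  have hex : ∃ k, 0 < k ∧ hgt ((u ++ v).take k) = 0 := ⟨u.length, hp⟩
  rw [cut, dif_pos hex, Nat.find_eq_iff]
  refine ⟨hp, fun k hk => ?_⟩
  rintro ⟨hk0, hk1⟩
  rw [List.take_append_of_le_length (by omega)] at hk1
  have := (prim_iff_strict.mp hu).2 k hk0 hk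
  omega

lemma part2_s17 (m : ℕ) (hm : 1 ≤ m) :
    MSum m = ∑ p ∈ Finset.Icc 1 m, MSum' p * MSum (m - p) := by
  have hrhs : ∀ p, MSum' p * MSum (m - p) =
      ∑ x ∈ Pset (2 * p) ×ˢ Dset (2 * (m - p)), Mpoly x.1 * Mpoly x.2 := by
    intro p
    rw [MSum'_eq, MSum_eq, Finset.sum_mul_sum]
    rw [Finset.sum_product]
  simp_rw [hrhs]
  rw [MSum_eq, ← Finset.sum_sigma (Finset.Icc 1 m)
    (fun p => Pset (2 * p) ×ˢ Dset (2 * (m - p)))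
    (fun x => Mpoly x.2.1 * Mpoly x.2.2)]
  refine Finset.sum_nbij'
    (fun w => (⟨cut w / 2, (w.take (cut w), w.drop (cut w))⟩ : Σ _ : ℕ, List Bool × List Bool))
    (fun y => y.2.1 ++ y.2.2) ?_ ?_ ?_ ?_ ?_
  · intro w hw
    rw [mem_Dset] at hw
    obtain ⟨hlen, hd⟩ := hw
    have hne : w ≠ [] := by intro h; subst h; simp at hlen; omega
    have hs := cut_spec hd hne
    have hle := cut_le hd hne
    have hprim := cut_prim hd hne
    have heven : (w.take (cut w)).length = 2 * (w.take (cut w)).count true :=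
      hprim.1.length_even
    rw [List.length_take, min_eq_left hle] at heven
    rw [Finset.mem_sigma, Finset.mem_Icc, Finset.mem_product, mem_Pset, mem_Dset]
    dsimp only
    refine ⟨⟨by omega, by omega⟩, ⟨?_, hprim⟩, ?_, dyck_of_split_right hd hs.2⟩
    · rw [List.length_take, min_eq_left hle]; omega
    · rw [List.length_drop]; omega
  · rintro ⟨p, u, v⟩ hy
    dsimp only
    rw [Finset.mem_sigma, Finset.mem_Icc, Finset.mem_product, mem_Pset, mem_Dset] at hy
    dsimp only at hy
    obtain ⟨⟨hp1, hp2⟩, ⟨hul, hup⟩, hvl, hvd⟩ := hy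
    rw [mem_Dset]
    constructor
    · simp [List.length_append]; omega
    · exact dyck_append hup.1 hvd
  · intro w _
    exact List.take_append_drop _ _
  · rintro ⟨p, u, v⟩ hy
    rw [Finset.mem_sigma, Finset.mem_Icc, Finset.mem_product, mem_Pset, mem_Dset] at hy
    dsimp only at hy
    obtain ⟨⟨hp1, hp2⟩, ⟨hul, hup⟩, hvl, hvd⟩ := hy
    have hne : u ≠ [] := by intro h; subst h; simp at hul; omega
    have hc : cut (u ++ v) = u.length := cut_append hup hne v
    dsimp only
    rw [hc, List.take_left, List.drop_left]
    have : u.length / 2 = p := by omega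
    rw [this]
  · intro w hw
    rw [mem_Dset] at hw
    obtain ⟨hlen, hd⟩ := hw
    have hne : w ≠ [] := by intro h; subst h; simp at hlen; omega
    have hs := cut_spec hd hne
    conv_lhs => rw [← List.take_append_drop (cut w) w]
    exact Mpoly_append_zero hs.2 _

theorem M_recurrences (m : ℕ) (hm : 1 < m) :
    MSum' m = Polynomial.X * (MSum (m - 1)).comp (Polynomial.X + 1) ∧
      MSum m = MSum' m + ∑ p ∈ Finset.Icc 1 (m - 1), MSum' p * MSum (m - p) := by
  refine ⟨part1_s17 m hm.le, ?_⟩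
  obtain ⟨n, rfl⟩ : ∃ n, m = n + 1 := ⟨m - 1, by omega⟩
  rw [part2_s17 (n + 1) (by omega), Finset.sum_Icc_succ_top (by omega : 1 ≤ n + 1)]
  have h0 : n + 1 - (n + 1) = 0 := by omega
  have h1 : n + 1 - 1 = n := by omega
  rw [h0, h1, MSum_zero, mul_one, add_comm]
end

section
/- Let U(z,y) = Σ_{m≥0} M'_{m+1}(y) · z^m be the formal power series in z with coefficients in the polynomial ring ℤ[y]. Then U satisfies the functional equation U(z,y) = y + z · U(z,y) · U(z,y+1), where U(z,y+1) denotes the power series obtained from U by substituting y+1 for y in each coefficient. -/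
/-- The formal power series `U(z,y) = ∑_{m ≥ 0} M'_{m+1}(y) zᵐ` in `z`
with coefficients in `ℤ[y]`. -/
noncomputable def U : PowerSeries (Polynomial ℤ) :=
  PowerSeries.mk fun m => MSum' (m + 1)

namespace MapFE

open Polynomial Finset List

/-- The excess of `a`'s over `b`'s. -/
def e (w : List Bool) : ℤ := (w.count true : ℤ) - (w.count false : ℤ)

lemma e_nil : e [] = 0 := by simp [e]

lemma e_append (u v : List Bool) : e (u ++ v) = e u + e v := by
  simp [e, List.count_append]; ring

lemma e_cons (b : Bool) (w : List Bool) : e (b :: w) = (if b then 1 else -1) + e w := by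
  cases b <;> simp [e, List.count_cons] <;> omega

lemma e_singleton (b : Bool) : e [b] = if b then 1 else -1 := by
  cases b <;> simp [e]

lemma length_count (w : List Bool) : w.length = w.count true + w.count false := by
  induction w with
  | nil => simp
  | cons b t ih =>
    simp only [List.length_cons, List.count_cons, ih]
    cases b <;> simp <;> omega

lemma e_zero_iff {w : List Bool} : e w = 0 ↔ w.count true = w.count false := by
  unfold e; omega

lemma e_zero_even {w : List Bool} (h : e w = 0) : w.length % 2 = 0 := by
  have h1 := length_count w
  rw [e_zero_iff] at h
  omega

lemma isDyck_iff {w : List Bool} : IsDyck w ↔ e w = 0 ∧ ∀ k, 0 ≤ e (w.take k) := by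
  constructor
  · rintro ⟨h1, h2⟩
    refine ⟨by unfold e; omega, fun k => ?_⟩
    rcases le_or_gt k w.length with h | h
    · have := h2 k h; unfold e; omega
    · rw [List.take_of_length_le h.le]; unfold e; omega
  · rintro ⟨h1, h2⟩
    refine ⟨by unfold e at h1; omega, fun k _ => ?_⟩
    have := h2 k; unfold e at this; omega

lemma dyck_nil : IsDyck [] := ⟨rfl, by simp⟩

lemma take_take_split (w : List Bool) (k j : ℕ) :
    w.take (k + j) = w.take k ++ (w.drop k).take j := by
  conv_lhs => rw [← List.take_append_drop k (w.take (k + j))]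
  rw [List.take_take, List.drop_take]
  congr 2
  · omega
  · omega

lemma isPrim_iff {w : List Bool} :
    IsPrimitiveDyck w ↔ IsDyck w ∧ ∀ k, 0 < k → k < w.length → 0 < e (w.take k) := by
  constructor
  · rintro ⟨hd, hnot⟩
    refine ⟨hd, fun k hk hkl => ?_⟩
    by_contra hle
    push_neg at hle
    obtain ⟨h0, hpre⟩ := isDyck_iff.mp hd
    have heq : e (w.take k) = 0 := le_antisymm hle (hpre k)
    apply hnot
    refine ⟨w.take k, w.drop k, ?_, ?_, ?_, ?_, (List.take_append_drop k w).symm⟩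
    · intro h
      have hh : (w.take k).length = 0 := by rw [h]; rfl
      rw [List.length_take] at hh; omega
    · intro h
      have hh : (w.drop k).length = 0 := by rw [h]; rfl
      rw [List.length_drop] at hh; omega
    · rw [isDyck_iff]
      refine ⟨heq, fun j => ?_⟩
      rw [List.take_take]
      exact hpre _
    · rw [isDyck_iff]
      have hsplit : ∀ j, e (w.take (k + j)) = e (w.take k) + e ((w.drop k).take j) := by
        intro j; rw [take_take_split, e_append]
      constructor
      · have h3 : e w = e (w.take k) + e (w.drop k) := by
          conv_lhs => rw [← List.take_append_drop k w]
          exact e_append _ _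
        omega
      · intro j
        have := hsplit j
        have := hpre (k + j)
        omega
  · rintro ⟨hd, hstrict⟩
    refine ⟨hd, ?_⟩
    rintro ⟨u, v, hu, hv, hdu, hdv, rfl⟩
    have hul : 0 < u.length := List.length_pos_iff.mpr hu
    have hvl : 0 < v.length := List.length_pos_iff.mpr hv
    have hs := hstrict u.length hul (by simp only [List.length_append]; omega)
    rw [List.take_left] at hs
    have h0 : e u = 0 := (isDyck_iff.mp hdu).1
    omega

lemma dyck_append {u v : List Bool} (hu : IsDyck u) (hv : IsDyck v) : IsDyck (u ++ v) := by
  rw [isDyck_iff] at *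
  obtain ⟨hu0, hup⟩ := hu; obtain ⟨hv0, hvp⟩ := hv
  refine ⟨by rw [e_append]; omega, fun k => ?_⟩
  rw [List.take_append, e_append]
  have := hup k; have := hvp (k - u.length); omega

lemma prim_sandwich {v : List Bool} (hv : IsDyck v) :
    IsPrimitiveDyck (true :: (v ++ [false])) := by
  obtain ⟨h0, hp⟩ := isDyck_iff.mp hv
  have hfe : ∀ i : ℕ, e ([false].take i) = if i = 0 then 0 else -1 := by
    intro i
    cases i with
    | zero => simp [e]
    | succ n => rw [List.take_of_length_le (by simp)]; simp [e]
  rw [isPrim_iff, isDyck_iff]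
  refine ⟨⟨?_, fun k => ?_⟩, fun k hk hkl => ?_⟩
  · rw [e_cons, e_append, e_singleton]; simp; omega
  · cases k with
    | zero => simp [e]
    | succ j =>
      rw [List.take_succ_cons, e_cons, List.take_append, e_append, hfe]
      have := hp j
      simp only [if_true]
      split <;> omega
  · cases k with
    | zero => omega
    | succ j =>
      simp only [List.length_cons, List.length_append, List.length_nil] at hkl
      rw [List.take_succ_cons, e_cons, List.take_append_of_le_length (by omega)]
      have := hp j
      simp only [if_true]
      omega

lemma prim_peel {w : List Bool} (hw : IsPrimitiveDyck w) (h2 : 2 ≤ w.length) :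
    ∃ v, IsDyck v ∧ w = true :: (v ++ [false]) := by
  obtain ⟨hd, hstrict⟩ := isPrim_iff.mp hw
  obtain ⟨h0, hp⟩ := isDyck_iff.mp hd
  obtain ⟨b, t, rfl⟩ : ∃ b t, w = b :: t := by
    cases w with
    | nil => simp at h2
    | cons b t => exact ⟨b, t, rfl⟩
  have hb : b = true := by
    have hs := hstrict 1 one_pos (by simp only [List.length_cons] at h2 ⊢; omega)
    have : (b :: t).take 1 = [b] := by simp
    rw [this, e_singleton] at hs
    cases b
    · simp at hs
    · rfl
  subst hb
  have htne : t ≠ [] := by intro h; subst h; simp at h2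
  have hn : 1 ≤ t.length := by
    have := List.length_pos_iff.mpr htne; omega
  refine ⟨t.dropLast, ?_, ?_⟩
  · -- IsDyck t.dropLast
    rw [isDyck_iff]
    have hkey : ∀ j, j < t.length → 0 ≤ e (t.take j) := by
      intro j hj
      rcases Nat.eq_zero_or_pos j with rfl | hj0
      · simp [e]
      · have hs := hstrict (j + 1) (by omega) (by simp; omega)
        rw [List.take_succ_cons, e_cons] at hs
        simp only [if_true] at hs
        omega
    have hew : e (true :: t) = 0 := (isDyck_iff.mp hd).1
    rw [e_cons] at hew
    simp only [if_true] at hew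
    have het : e t = -1 := by omega
    have hlast : e t.dropLast = 0 := by
      have hdt : t.dropLast ++ [t.getLast htne] = t := List.dropLast_append_getLast htne
      have := e_append t.dropLast [t.getLast htne]
      rw [hdt] at this
      have hdl : 0 ≤ e t.dropLast := by
        rw [List.dropLast_eq_take]
        exact hkey _ (by omega)
      rcases Bool.eq_false_or_eq_true (t.getLast htne) with h | h <;>
        rw [h] at this <;> rw [e_singleton] at this <;> simp at this <;> omega
    constructor
    · exact hlast
    · intro j
      rw [List.dropLast_eq_take, List.take_take]
      exact hkey _ (by omega)
  · -- t = t.dropLast ++ [false]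
    have hdt : t.dropLast ++ [t.getLast htne] = t := List.dropLast_append_getLast htne
    have hew : e (true :: t) = 0 := (isDyck_iff.mp hd).1
    rw [e_cons] at hew
    simp only [if_true] at hew
    have het : e t = -1 := by omega
    have hdl : 0 ≤ e t.dropLast := by
      rw [List.dropLast_eq_take]
      rcases Nat.eq_zero_or_pos (t.length - 1) with h | h
      · rw [h]; simp [e]
      · have hs := hstrict (t.length - 1 + 1) (by omega) (by simp; omega)
        rw [List.take_succ_cons, e_cons] at hs
        simp only [if_true] at hs
        omega
    have hglast : t.getLast htne = false := by
      have := e_append t.dropLast [t.getLast htne]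
      rw [hdt] at this
      rcases Bool.eq_false_or_eq_true (t.getLast htne) with h | h
      · rw [h, e_singleton] at this; simp at this; omega
      · exact h
    rw [← hglast, hdt]

/-! ### First return decomposition -/

open scoped Classical in
noncomputable def fret (t : List Bool) : ℕ :=
  Nat.find (p := fun j => (0 < j ∧ e (t.take j) = 0) ∨ t.length ≤ j)
    ⟨t.length, Or.inr le_rfl⟩

open scoped Classical in
lemma fret_spec {t : List Bool} (h : ∃ j, 0 < j ∧ j < t.length ∧ e (t.take j) = 0) :
    0 < fret t ∧ fret t < t.length ∧ e (t.take (fret t)) = 0 ∧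
      ∀ j, 0 < j → j < fret t → e (t.take j) ≠ 0 := by
  obtain ⟨j0, hj1, hj2, hj3⟩ := h
  have hle : fret t ≤ j0 := Nat.find_le (Or.inl ⟨hj1, hj3⟩)
  have hlt : fret t < t.length := lt_of_le_of_lt hle hj2
  have hspec := Nat.find_spec (p := fun j => (0 < j ∧ e (t.take j) = 0) ∨ t.length ≤ j)
    ⟨t.length, Or.inr le_rfl⟩
  rcases hspec with ⟨h1, h2⟩ | h1
  · refine ⟨h1, hlt, h2, fun j hj0 hjf he => ?_⟩
    exact Nat.find_min _ hjf (Or.inl ⟨hj0, he⟩)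
  · exact absurd hlt (not_lt.mpr h1)

open scoped Classical in
lemma fret_eq {q : List Bool} (v : List Bool) (hq : IsPrimitiveDyck q) (hql : 0 < q.length) :
    fret (q ++ v) = q.length := by
  rw [fret, Nat.find_eq_iff]
  constructor
  · exact Or.inl ⟨hql, by rw [List.take_left]; exact (isDyck_iff.mp hq.1).1⟩
  · rintro m hm (⟨hm0, hme⟩ | hlen)
    · have hs := (isPrim_iff.mp hq).2 m hm0 hm
      rw [List.take_append_of_le_length (by omega)] at hme
      omega
    · rw [List.length_append] at hlen; omega

/-! ### The `MC` polynomial with offset -/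

noncomputable def MC (c : ℤ) (w : List Bool) : Polynomial ℤ :=
  ∏ i ∈ Finset.range w.length,
    if w.getD i true = false then Polynomial.X + Polynomial.C (c + e (w.take (i + 1))) else 1

lemma Mpoly_eq (w : List Bool) : Mpoly w = MC 0 w := by
  unfold Mpoly MC e
  simp

lemma MC_append (c : ℤ) (u v : List Bool) : MC c (u ++ v) = MC c u * MC (c + e u) v := by
  unfold MC
  rw [List.length_append, Finset.prod_range_add]
  congr 1
  · apply Finset.prod_congr rfl
    intro i hi
    rw [Finset.mem_range] at hi
    rw [List.getD_append _ _ _ _ hi, List.take_append_of_le_length (by omega)]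
  · apply Finset.prod_congr rfl
    intro i hi
    rw [List.getD_append_right _ _ _ _ (by omega)]
    have h1 : u.length + i - u.length = i := by omega
    have h2 : u.length + i + 1 = u.length + (i + 1) := by omega
    rw [h1, h2, List.take_length_add_append, e_append, add_assoc]

lemma MC_singleton_true (c : ℤ) : MC c [true] = 1 := by
  unfold MC; simp

lemma MC_singleton_false (c : ℤ) : MC c [false] = Polynomial.X + Polynomial.C (c - 1) := by
  unfold MC
  simp [e]
  ring_nf

lemma MC_cons_true (c : ℤ) (w : List Bool) : MC c (true :: w) = MC (c + 1) w := by
  have := MC_append c [true] w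
  simp only [List.singleton_append] at this
  have h1 : c + e [true] = c + 1 := by simp [e_singleton]
  rw [this, h1, MC_singleton_true, one_mul]

lemma MC_aeval (c : ℤ) (w : List Bool) :
    Polynomial.aeval (Polynomial.X + 1 : Polynomial ℤ) (MC c w) = MC (c + 1) w := by
  unfold MC
  rw [map_prod]
  apply Finset.prod_congr rfl
  intro i _
  split
  · simp only [map_add, Polynomial.aeval_X, Polynomial.aeval_C, algebraMap_int_eq,
      eq_intCast, Polynomial.C_eq_intCast]
    push_cast
    simp only [map_intCast, map_add, map_one, Polynomial.aeval_X]
    ring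
  · rw [map_one]

lemma Mpoly_comp (q v : List Bool) (hq : e q = 0) (hv : e v = 0) :
    Mpoly (true :: (q ++ (v ++ [false]))) =
      Mpoly (true :: (v ++ [false])) *
        Polynomial.aeval (Polynomial.X + 1 : Polynomial ℤ) (Mpoly q) := by
  rw [Mpoly_eq, Mpoly_eq, Mpoly_eq, MC_cons_true, MC_cons_true, MC_aeval,
    MC_append, MC_append, MC_append, hq, hv, MC_singleton_false, MC_singleton_false]
  norm_num
  ring

/-! ### Decomposition of primitive Dyck paths -/

noncomputable def dk (w : List Bool) : ℕ := fret w.tail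
noncomputable def dq (w : List Bool) : List Bool := w.tail.take (dk w)
noncomputable def dp (w : List Bool) : List Bool := true :: w.tail.drop (dk w)

lemma decomp {w : List Bool} (hw : IsPrimitiveDyck w) (h4 : 4 ≤ w.length) :
    IsPrimitiveDyck (dq w) ∧ IsPrimitiveDyck (dp w) ∧
      w = true :: (dq w ++ (dp w).tail) ∧
      2 ≤ (dq w).length ∧ 2 ≤ (dp w).length ∧
      (dq w).length % 2 = 0 ∧ (dp w).length % 2 = 0 ∧
      (dq w).length + (dp w).length = w.length := by
  obtain ⟨v, hv, hwv⟩ := prim_peel hw (by omega)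
  have htw : w.tail = v ++ [false] := by simp [hwv]
  set t := w.tail with ht
  have hwt : w = true :: t := by rw [hwv, htw]
  have hlw : w.length = t.length + 1 := by rw [hwt]; rfl
  have hvl : 2 ≤ v.length := by
    have h1 : w.length = v.length + 2 := by rw [hwv]; simp
    omega
  have hvt : v.length < t.length := by rw [htw]; simp
  have hex : ∃ j, 0 < j ∧ j < t.length ∧ e (t.take j) = 0 := by
    refine ⟨v.length, by omega, hvt, ?_⟩
    rw [htw, List.take_left]
    exact (isDyck_iff.mp hv).1
  obtain ⟨hk0, hkt, hke, hkmin⟩ := fret_spec hex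
  set k := fret t with hkdef
  have hdq : dq w = t.take k := rfl
  have hdp : dp w = true :: t.drop k := rfl
  obtain ⟨hd, hstrict⟩ := isPrim_iff.mp hw
  have hwtake : ∀ m, e (w.take (m + 1)) = 1 + e (t.take m) := by
    intro m
    conv_lhs => rw [hwt]
    rw [List.take_succ_cons, e_cons]
    simp
  have htnonneg : ∀ m, -1 ≤ e (t.take m) := by
    intro m
    have h1 := (isDyck_iff.mp hd).2 (m + 1)
    have h2 := hwtake m
    omega
  have htpos : ∀ m, m < t.length → 0 ≤ e (t.take m) := by
    intro m hm
    rcases Nat.eq_zero_or_pos m with rfl | hm0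
    · simp [e]
    · have h1 := hstrict (m + 1) (by omega) (by omega)
      have h2 := hwtake m
      omega
  have hqlen : (dq w).length = k := by
    rw [hdq, List.length_take]; omega
  have hplen : (dp w).length = t.length - k + 1 := by
    rw [hdp]; simp [List.length_drop]
  have hqprim : IsPrimitiveDyck (dq w) := by
    rw [hdq, isPrim_iff, isDyck_iff]
    refine ⟨⟨hke, fun j => ?_⟩, fun j hj0 hjl => ?_⟩
    · rw [List.take_take]
      exact htpos _ (by omega)
    · rw [List.length_take] at hjl
      rw [List.take_take, min_eq_left (by omega : j ≤ k)]
      have h1 := htpos j (by omega)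
      have h2 := hkmin j hj0 (by omega)
      omega
  have hdqe : e (t.drop k) = -1 := by
    have h1 := e_append (t.take k) (t.drop k)
    rw [List.take_append_drop] at h1
    have h2 : e t = -1 := by
      have h3 := (isDyck_iff.mp hd).1
      have h4 := hwtake t.length
      rw [List.take_of_length_le (by omega), List.take_of_length_le (by omega)] at h4
      omega
    omega
  have hdrsplit : ∀ j, e ((t.drop k).take j) = e (t.take (k + j)) - e (t.take k) := by
    intro j
    have h1 := take_take_split t k j
    have h2 := e_append (t.take k) ((t.drop k).take j)
    rw [← h1] at h2
    omega
  have hpprim : IsPrimitiveDyck (dp w) := by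
    rw [hdp, isPrim_iff, isDyck_iff]
    refine ⟨⟨?_, fun j => ?_⟩, fun j hj0 hjl => ?_⟩
    · rw [e_cons]
      simp only [if_true]
      omega
    · rcases Nat.eq_zero_or_pos j with rfl | hj0
      · simp [e]
      · obtain ⟨j', rfl⟩ : ∃ j', j = j' + 1 := ⟨j - 1, by omega⟩
        rw [List.take_succ_cons, e_cons]
        have h1 := hdrsplit j'
        have h2 := htnonneg (k + j')
        simp only [if_true]
        omega
    · obtain ⟨j', rfl⟩ : ∃ j', j = j' + 1 := ⟨j - 1, by omega⟩
      simp only [List.length_cons, List.length_drop] at hjl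
      rw [List.take_succ_cons, e_cons]
      have h1 := hdrsplit j'
      have h2 := htpos (k + j') (by omega)
      simp only [if_true]
      omega
  have hweq : w = true :: (dq w ++ (dp w).tail) := by
    rw [hdq, hdp]
    conv_lhs => rw [hwt]
    congr 1
    rw [List.tail_cons, List.take_append_drop]
  have hqev : (dq w).length % 2 = 0 := e_zero_even (isDyck_iff.mp hqprim.1).1
  have hpev : (dp w).length % 2 = 0 := e_zero_even (isDyck_iff.mp hpprim.1).1
  refine ⟨hqprim, hpprim, hweq, by omega, by omega, hqev, hpev, by omega⟩

lemma comp {p q : List Bool} (hp : IsPrimitiveDyck p) (hq : IsPrimitiveDyck q)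
    (hpl : 2 ≤ p.length) (hql : 2 ≤ q.length) :
    IsPrimitiveDyck (true :: (q ++ p.tail)) ∧
      dq (true :: (q ++ p.tail)) = q ∧ dp (true :: (q ++ p.tail)) = p ∧
      (true :: (q ++ p.tail)).length = q.length + p.length ∧
      Mpoly (true :: (q ++ p.tail)) =
        Mpoly p * Polynomial.aeval (Polynomial.X + 1 : Polynomial ℤ) (Mpoly q) := by
  obtain ⟨v, hv, rfl⟩ := prim_peel hp (by omega)
  have htail : (true :: (v ++ [false])).tail = v ++ [false] := rfl
  rw [htail]
  have hfr : fret (q ++ (v ++ [false])) = q.length := fret_eq _ hq (by omega)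
  refine ⟨?_, ?_, ?_, ?_, ?_⟩
  · have h1 : IsPrimitiveDyck (true :: ((q ++ v) ++ [false])) :=
      prim_sandwich (dyck_append hq.1 hv)
    rw [List.append_assoc] at h1
    exact h1
  · show (true :: (q ++ (v ++ [false]))).tail.take (dk (true :: (q ++ (v ++ [false])))) = q
    rw [dk, List.tail_cons, hfr, List.take_left]
  · show (true :: (true :: (q ++ (v ++ [false]))).tail.drop
        (dk (true :: (q ++ (v ++ [false]))))) = true :: (v ++ [false])
    rw [dk, List.tail_cons, hfr, List.drop_left]
  · simp [List.length_append]
    omega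
  · exact Mpoly_comp q v (isDyck_iff.mp hq.1).1 (isDyck_iff.mp hv).1

/-! ### Sums over primitive Dyck paths -/

open scoped Classical in
noncomputable def D (k : ℕ) : Finset (List Bool) :=
  ((Finset.univ : Finset (Fin k → Bool)).image List.ofFn).filter IsPrimitiveDyck

open scoped Classical in
lemma mem_D {k : ℕ} {w : List Bool} : w ∈ D k ↔ w.length = k ∧ IsPrimitiveDyck w := by
  simp only [D, Finset.mem_filter, Finset.mem_image, Finset.mem_univ, true_and]
  constructor
  · rintro ⟨⟨f, rfl⟩, h⟩
    exact ⟨by simp, h⟩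
  · rintro ⟨hl, h⟩
    subst hl
    exact ⟨⟨fun i => w[(i : ℕ)], List.ofFn_getElem⟩, h⟩

open scoped Classical in
lemma MSum'_eq (m : ℕ) : MSum' m = ∑ w ∈ D (2 * m), Mpoly w := by
  rw [MSum', D, Finset.sum_filter,
    Finset.sum_image (fun x _ y _ h => List.ofFn_injective h)]

lemma D_two : D 2 = {[true, false]} := by
  ext w
  simp only [mem_D, Finset.mem_singleton]
  constructor
  · rintro ⟨hl, hw⟩
    obtain ⟨v, hv, rfl⟩ := prim_peel hw (by omega)
    have hv0 : v.length = 0 := by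
      simp only [List.length_cons, List.length_append, List.length_nil] at hl
      omega
    rw [List.length_eq_zero_iff.mp hv0]
    rfl
  · rintro rfl
    refine ⟨rfl, ?_⟩
    have := prim_sandwich dyck_nil
    simpa using this

lemma Mpoly_tf : Mpoly [true, false] = Polynomial.X := by
  rw [Mpoly_eq, show [true, false] = true :: [false] from rfl, MC_cons_true,
    MC_singleton_false]
  norm_num

lemma MSum'_one : MSum' 1 = Polynomial.X := by
  rw [MSum'_eq, show 2 * 1 = 2 from rfl, D_two, Finset.sum_singleton, Mpoly_tf]

open scoped Classical in
lemma MSum'_rec (m : ℕ) :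
    MSum' (m + 2) = ∑ ij ∈ Finset.HasAntidiagonal.antidiagonal m,
      MSum' (ij.1 + 1) *
        Polynomial.aeval (Polynomial.X + 1 : Polynomial ℤ) (MSum' (ij.2 + 1)) := by
  have hR : ∀ ij : ℕ × ℕ,
      MSum' (ij.1 + 1) * Polynomial.aeval (Polynomial.X + 1 : Polynomial ℤ) (MSum' (ij.2 + 1)) =
        ∑ pq ∈ D (2 * (ij.1 + 1)) ×ˢ D (2 * (ij.2 + 1)),
          Mpoly pq.1 * Polynomial.aeval (Polynomial.X + 1 : Polynomial ℤ) (Mpoly pq.2) := by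
    intro ij
    rw [MSum'_eq, MSum'_eq, map_sum, Finset.sum_mul_sum, ← Finset.sum_product']
  simp_rw [hR]
  rw [MSum'_eq, Finset.sum_sigma']
  apply Finset.sum_bij'
    (i := fun w _ => (⟨((dp w).length / 2 - 1, (dq w).length / 2 - 1), (dp w, dq w)⟩ :
      (_ : ℕ × ℕ) × (List Bool × List Bool)))
    (j := fun a _ => true :: (a.2.2 ++ a.2.1.tail))
  · -- hi
    intro w hw
    rw [mem_D] at hw
    obtain ⟨hl, hw'⟩ := hw
    obtain ⟨hqprim, hpprim, hweq, hq2, hp2, hqev, hpev, hsum⟩ := decomp hw' (by omega)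
    rw [Finset.mem_sigma, Finset.mem_product, Finset.HasAntidiagonal.mem_antidiagonal]
    dsimp only
    refine ⟨by omega, ?_, ?_⟩
    · rw [mem_D]; exact ⟨by omega, hpprim⟩
    · rw [mem_D]; exact ⟨by omega, hqprim⟩
  · -- hj
    rintro ⟨⟨i1, j1⟩, p, q⟩ ha
    rw [Finset.mem_sigma, Finset.mem_product, Finset.HasAntidiagonal.mem_antidiagonal] at ha
    dsimp only at ha
    obtain ⟨hij, hp, hq⟩ := ha
    rw [mem_D] at hp hq
    obtain ⟨hp1, hp2⟩ := hp
    obtain ⟨hq1, hq2⟩ := hq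
    obtain ⟨hc1, hc2, hc3, hc4, hc5⟩ := comp hp2 hq2 (by omega) (by omega)
    rw [mem_D]
    refine ⟨?_, hc1⟩
    rw [hc4]
    omega
  · -- left inverse
    intro w hw
    rw [mem_D] at hw
    obtain ⟨hl, hw'⟩ := hw
    obtain ⟨hqprim, hpprim, hweq, hq2, hp2, hqev, hpev, hsum⟩ := decomp hw' (by omega)
    exact hweq.symm
  · -- right inverse
    rintro ⟨⟨i1, j1⟩, p, q⟩ ha
    rw [Finset.mem_sigma, Finset.mem_product, Finset.HasAntidiagonal.mem_antidiagonal] at ha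
    dsimp only at ha
    obtain ⟨hij, hp, hq⟩ := ha
    rw [mem_D] at hp hq
    obtain ⟨hp1, hp2⟩ := hp
    obtain ⟨hq1, hq2⟩ := hq
    obtain ⟨hc1, hc2, hc3, hc4, hc5⟩ := comp hp2 hq2 (by omega) (by omega)
    dsimp only
    simp only [hc2, hc3]
    have h1 : p.length / 2 - 1 = i1 := by omega
    have h2 : q.length / 2 - 1 = j1 := by omega
    rw [h1, h2]
  · -- summand equality
    intro w hw
    rw [mem_D] at hw
    obtain ⟨hl, hw'⟩ := hw
    obtain ⟨hqprim, hpprim, hweq, hq2, hp2, hqev, hpev, hsum⟩ := decomp hw' (by omega)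
    obtain ⟨hc1, hc2, hc3, hc4, hc5⟩ := comp hpprim hqprim hp2 hq2
    conv_lhs => rw [hweq]
    exact hc5

end MapFE

theorem map_functional_equation :
    U = PowerSeries.C (R := Polynomial ℤ) Polynomial.X +
      PowerSeries.X * U *
        PowerSeries.map
          (Polynomial.aeval (Polynomial.X + 1 : Polynomial ℤ)).toRingHom U := by
  apply PowerSeries.ext
  intro n
  rw [map_add, PowerSeries.coeff_C, U, PowerSeries.coeff_mk, mul_assoc]
  cases n with
  | zero =>
    have h0 : (PowerSeries.coeff (R := Polynomial ℤ) 0)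
        (PowerSeries.X * (PowerSeries.mk (fun m => MSum' (m + 1)) *
          PowerSeries.map (Polynomial.aeval (Polynomial.X + 1 : Polynomial ℤ)).toRingHom
            (PowerSeries.mk fun m => MSum' (m + 1)))) = 0 := by
      rw [PowerSeries.coeff_zero_eq_constantCoeff, map_mul, PowerSeries.constantCoeff_X,
        zero_mul]
    rw [h0, if_pos rfl, add_zero]
    exact MapFE.MSum'_one
  | succ n =>
    rw [PowerSeries.coeff_succ_X_mul, if_neg (Nat.succ_ne_zero n), zero_add,
      PowerSeries.coeff_mul]
    have := MapFE.MSum'_rec n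
    rw [show n + 1 + 1 = n + 2 from rfl, this]
    apply Finset.sum_congr rfl
    intro ij _
    rw [PowerSeries.coeff_mk, PowerSeries.coeff_map, PowerSeries.coeff_mk]
    rfl
end
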